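/- arXiv:math/9811144 — 5 statements merged into one kernel-verified Lean document; each statement's English description precedes it below -/
import Mathlib

section
/- For any 0 < b < a with a/b ∉ ℤ, there exists φ ∈ L²(ℝ) such that (τ_{nb}φ)_{n∈ℤ} is a frame sequence but (τ_{na}φ)_{n∈ℤ} is not a frame sequence. -/
open MeasureTheory Complex
open scoped FourierTransform ENNReal InnerProductSpace Real

/-- Translation by `x` on `L²(ℝ)`: `(τ_x f)(y) = f(y - x)`. -/
noncomputable def tauL2 (x : ℝ) (φ : Lp ℂ 2 (volume : Measure ℝ)) :
    Lp ℂ 2 (volume : Measure ℝ) :=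
  Lp.compMeasurePreserving (fun y => y - x) (measurePreserving_sub_right volume x) φ

/-- `Φ_b(ξ) = Σ_{n∈ℤ} |φ̂((ξ+n)/b)|²`. -/
noncomputable def PhiB (b : ℝ) (φ : Lp ℂ 2 (volume : Measure ℝ)) (ξ : ℝ) : ℝ :=
  ∑' n : ℤ, ‖𝓕 (⇑φ) ((ξ + n) / b)‖ ^ 2

/-- `g` is a frame for its closed linear span, with bounds `A, B`. -/
def IsFrameSeqWith {ι : Type*} (g : ι → Lp ℂ 2 (volume : Measure ℝ)) (A B : ℝ) : Prop :=
  ∀ f ∈ (Submodule.span ℂ (Set.range g)).topologicalClosure,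
    A * ‖f‖ ^ 2 ≤ ∑' n : ι, ‖(inner ℂ f (g n) : ℂ)‖ ^ 2 ∧
      ∑' n : ι, ‖(inner ℂ f (g n) : ℂ)‖ ^ 2 ≤ B * ‖f‖ ^ 2

/-- `g` is a frame sequence (frame for its closed linear span). -/
def IsFrameSeq {ι : Type*} (g : ι → Lp ℂ 2 (volume : Measure ℝ)) : Prop :=
  ∃ A B : ℝ, 0 < A ∧ 0 < B ∧ IsFrameSeqWith g A B

/-- `g` is a Riesz basis for its closed span (exact frame sequence) with bounds `A, B`. -/
def IsRieszSeqWith {ι : Type*} (g : ι → Lp ℂ 2 (volume : Measure ℝ)) (A B : ℝ) : Prop :=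
  ∀ (s : Finset ι) (c : ι → ℂ),
    A * ∑ n ∈ s, ‖c n‖ ^ 2 ≤ ‖∑ n ∈ s, c n • g n‖ ^ 2 ∧
      ‖∑ n ∈ s, c n • g n‖ ^ 2 ≤ B * ∑ n ∈ s, ‖c n‖ ^ 2

/-- `g` is an exact frame sequence (Riesz basis for its closed span). -/
def IsRieszSeq {ι : Type*} (g : ι → Lp ℂ 2 (volume : Measure ℝ)) : Prop :=
  ∃ A B : ℝ, 0 < A ∧ 0 < B ∧ IsRieszSeqWith g A B

/-! ### Auxiliary results -/

section Aux

variable {ι : Type*} {E : Type*} [NormedAddCommGroup E] [InnerProductSpace ℂ E]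

/-- Parseval lower bound for elements of the closure of the span of an orthonormal family. -/
theorem aux_norm_sq_le_tsum_inner {v : ι → E} (hv : Orthonormal ℂ v) {f : E}
    (hf : f ∈ closure ((Submodule.span ℂ (Set.range v) : Submodule ℂ E) : Set E)) :
    ‖f‖ ^ 2 ≤ ∑' i, ‖(inner ℂ f (v i) : ℂ)‖ ^ 2 := by
  classical
  set T := ∑' i, ‖(inner ℂ f (v i) : ℂ)‖ ^ 2 with hTdef
  have hT0 : 0 ≤ T := tsum_nonneg fun i => by positivity
  have hsummable : Summable (fun i => ‖(inner ℂ f (v i) : ℂ)‖ ^ 2) := by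
    have h1 := hv.inner_products_summable (x := f)
    have h2 : (fun i => ‖(inner ℂ (v i) f : ℂ)‖ ^ 2) = fun i => ‖(inner ℂ f (v i) : ℂ)‖ ^ 2 := by
      funext i; rw [norm_inner_symm]
    rwa [h2] at h1
  have key : ∀ δ : ℝ, 0 < δ → ‖f‖ ^ 2 ≤ ‖f‖ * δ + (‖f‖ + δ) * Real.sqrt T := by
    intro δ hδ
    obtain ⟨y, hy_mem, hy_dist⟩ := Metric.mem_closure_iff.mp hf δ hδ
    have hy_mem' : y ∈ Submodule.span ℂ (Set.range v) := hy_mem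
    obtain ⟨l, hl⟩ := Finsupp.mem_span_range_iff_exists_finsupp.mp hy_mem'
    have hy_eq : y = ∑ i ∈ l.support, l i • v i := by rw [← hl]; rfl
    have hyN : ‖y‖ ^ 2 = ∑ i ∈ l.support, ‖l i‖ ^ 2 := by
      have h2 : (inner ℂ y y : ℂ) = ∑ i ∈ l.support, (starRingEnd ℂ) (l i) * l i := by
        rw [hy_eq]; exact hv.inner_sum l l l.support
      rw [← inner_self_eq_norm_sq (𝕜 := ℂ) y, h2, map_sum RCLike.re _ l.support]
      refine Finset.sum_congr rfl fun i _ => ?_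
      rw [RCLike.conj_mul]
      norm_cast
    have hfy : (inner ℂ f y : ℂ) = ∑ i ∈ l.support, l i * (inner ℂ f (v i) : ℂ) := by
      rw [hy_eq, inner_sum]
      exact Finset.sum_congr rfl fun i _ => by rw [inner_smul_right]
    have hCS : ‖(inner ℂ f y : ℂ)‖ ≤ ‖y‖ * Real.sqrt T := by
      calc ‖(inner ℂ f y : ℂ)‖ ≤ ∑ i ∈ l.support, ‖l i * (inner ℂ f (v i) : ℂ)‖ := by
            rw [hfy]; exact norm_sum_le _ _
        _ = ∑ i ∈ l.support, ‖l i‖ * ‖(inner ℂ f (v i) : ℂ)‖ := by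
            exact Finset.sum_congr rfl fun i _ => norm_mul _ _
        _ ≤ Real.sqrt (∑ i ∈ l.support, ‖l i‖ ^ 2) *
              Real.sqrt (∑ i ∈ l.support, ‖(inner ℂ f (v i) : ℂ)‖ ^ 2) := by
            have hcs := Finset.sum_mul_sq_le_sq_mul_sq l.support
              (fun i => ‖l i‖) (fun i => ‖(inner ℂ f (v i) : ℂ)‖)
            have h0 : (0:ℝ) ≤ ∑ i ∈ l.support, ‖l i‖ * ‖(inner ℂ f (v i) : ℂ)‖ :=
              Finset.sum_nonneg fun i _ => mul_nonneg (norm_nonneg _) (norm_nonneg _)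
            have := Real.sqrt_le_sqrt hcs
            rwa [Real.sqrt_sq h0,
              Real.sqrt_mul (Finset.sum_nonneg fun i _ => sq_nonneg _)] at this
        _ ≤ ‖y‖ * Real.sqrt T := by
            have h1 : Real.sqrt (∑ i ∈ l.support, ‖l i‖ ^ 2) = ‖y‖ := by
              rw [← hyN]; exact Real.sqrt_sq (norm_nonneg y)
            have h2 : (∑ i ∈ l.support, ‖(inner ℂ f (v i) : ℂ)‖ ^ 2) ≤ T :=
              Summable.sum_le_tsum l.support (fun i _ => by positivity) hsummable
            rw [h1]
            exact mul_le_mul_of_nonneg_left (Real.sqrt_le_sqrt h2) (norm_nonneg y)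
    have hre : ‖f‖ ^ 2 - ‖f‖ * δ ≤ RCLike.re (inner ℂ f y : ℂ) := by
      have h1 : (inner ℂ f y : ℂ) = (inner ℂ f f : ℂ) - (inner ℂ f (f - y) : ℂ) := by
        rw [inner_sub_right]; ring
      have h2 : |RCLike.re (inner ℂ f (f - y) : ℂ)| ≤ ‖f‖ * δ := by
        refine le_trans (RCLike.abs_re_le_norm _) ?_
        refine le_trans (norm_inner_le_norm f (f - y)) ?_
        have : ‖f - y‖ ≤ δ := by
          rw [← dist_eq_norm]; exact le_of_lt hy_dist
        exact mul_le_mul_of_nonneg_left this (norm_nonneg f)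
      have h3 : RCLike.re (inner ℂ f y : ℂ)
          = ‖f‖ ^ 2 - RCLike.re (inner ℂ f (f - y) : ℂ) := by
        rw [h1, map_sub, inner_self_eq_norm_sq (𝕜 := ℂ) f]
      rw [h3]
      have := abs_le.mp h2
      linarith [this.2]
    have hyb : ‖y‖ ≤ ‖f‖ + δ := by
      have h6 : y = f - (f - y) := by abel
      have h7 : ‖f - (f - y)‖ ≤ ‖f‖ + ‖f - y‖ := norm_sub_le _ _
      have h5 : ‖f - y‖ ≤ δ := by rw [← dist_eq_norm]; exact le_of_lt hy_dist
      rw [← h6] at h7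
      linarith
    have hre2 : RCLike.re (inner ℂ f y : ℂ) ≤ ‖(inner ℂ f y : ℂ)‖ := RCLike.re_le_norm _
    have : ‖f‖ ^ 2 - ‖f‖ * δ ≤ (‖f‖ + δ) * Real.sqrt T := by
      refine le_trans hre (le_trans hre2 (le_trans hCS ?_))
      exact mul_le_mul_of_nonneg_right hyb (Real.sqrt_nonneg T)
    linarith
  have h2 : ‖f‖ ^ 2 ≤ ‖f‖ * Real.sqrt T := by
    by_contra hlt
    push_neg at hlt
    set δ := (‖f‖ ^ 2 - ‖f‖ * Real.sqrt T) / (‖f‖ + Real.sqrt T + 1) with hδdef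
    have hden : 0 < ‖f‖ + Real.sqrt T + 1 := by positivity
    have hδpos : 0 < δ := div_pos (by linarith) hden
    have hkey := key δ hδpos
    have h3 : δ * (‖f‖ + Real.sqrt T + 1) = ‖f‖ ^ 2 - ‖f‖ * Real.sqrt T := by
      rw [hδdef]; field_simp
    nlinarith [hkey, h3]
  nlinarith [sq_nonneg (‖f‖ - Real.sqrt T), Real.sq_sqrt hT0, h2]

/-- A family with diagonal Gram matrix (constant `c > 0`) is a frame sequence with
bounds `c`, `c`. -/
theorem aux_frame_of_gram {κ : Type*} [DecidableEq κ] (g : κ → Lp ℂ 2 (volume : Measure ℝ))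
    (c : ℝ) (hc : 0 < c)
    (hg : ∀ i j, (inner ℂ (g i) (g j) : ℂ) = if i = j then (c : ℂ) else 0) :
    IsFrameSeqWith g c c := by
  classical
  intro f hf
  set s : ℂ := ((Real.sqrt c : ℝ) : ℂ) with hsdef
  have hs0 : Real.sqrt c ≠ 0 := ne_of_gt (Real.sqrt_pos.mpr hc)
  have hsC : s ≠ 0 := by
    simp [hsdef, Complex.ofReal_eq_zero, hs0]
  have hss : s * s = (c : ℂ) := by
    rw [hsdef, ← Complex.ofReal_mul, Real.mul_self_sqrt (le_of_lt hc)]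
  set u : κ → Lp ℂ 2 (volume : Measure ℝ) := fun i => s⁻¹ • g i with hu
  have hgu : ∀ i, g i = s • u i := by
    intro i
    rw [hu]
    simp only [smul_smul, mul_inv_cancel₀ hsC, one_smul]
  have hOrth : Orthonormal ℂ u := by
    rw [orthonormal_iff_ite]
    intro i j
    have : (inner ℂ (u i) (u j) : ℂ) = (starRingEnd ℂ) s⁻¹ * (s⁻¹ * (inner ℂ (g i) (g j) : ℂ)) := by
      rw [hu]; simp only; rw [inner_smul_left, inner_smul_right]
    rw [this, hg i j]
    by_cases hij : i = j
    · simp only [hij, if_true]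
      have hconj : (starRingEnd ℂ) s⁻¹ = s⁻¹ := by
        rw [hsdef, ← Complex.ofReal_inv, Complex.conj_ofReal]
      rw [hconj, ← mul_assoc, ← mul_inv, hss]
      exact inv_mul_cancel₀ (by exact_mod_cast ne_of_gt hc)
    · simp [hij]
  have hspan : Submodule.span ℂ (Set.range g) = Submodule.span ℂ (Set.range u) := by
    apply le_antisymm
    · rw [Submodule.span_le]
      rintro _ ⟨i, rfl⟩
      rw [hgu i]
      exact Submodule.smul_mem _ _ (Submodule.subset_span ⟨i, rfl⟩)
    · rw [Submodule.span_le]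
      rintro _ ⟨i, rfl⟩
      exact Submodule.smul_mem _ _ (Submodule.subset_span ⟨i, rfl⟩)
  have hf' : f ∈ closure ((Submodule.span ℂ (Set.range u) : Submodule ℂ _) : Set _) := by
    rw [← hspan, ← Submodule.topologicalClosure_coe]
    exact hf
  have hterm : ∀ i, ‖(inner ℂ f (g i) : ℂ)‖ ^ 2 = c * ‖(inner ℂ f (u i) : ℂ)‖ ^ 2 := by
    intro i
    rw [hgu i, inner_smul_right, norm_mul, mul_pow]
    congr 1
    rw [hsdef, Complex.norm_real, Real.norm_eq_abs,
      _root_.abs_of_nonneg (Real.sqrt_nonneg c), Real.sq_sqrt (le_of_lt hc)]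
  have htsum : ∑' i, ‖(inner ℂ f (g i) : ℂ)‖ ^ 2 = c * ∑' i, ‖(inner ℂ f (u i) : ℂ)‖ ^ 2 := by
    rw [← tsum_mul_left]
    exact tsum_congr hterm
  have hlow : ‖f‖ ^ 2 ≤ ∑' i, ‖(inner ℂ f (u i) : ℂ)‖ ^ 2 := aux_norm_sq_le_tsum_inner hOrth hf'
  have hupp : ∑' i, ‖(inner ℂ f (u i) : ℂ)‖ ^ 2 ≤ ‖f‖ ^ 2 := by
    have h1 := hOrth.tsum_inner_products_le (x := f)
    have h2 : (fun i => ‖(inner ℂ (u i) f : ℂ)‖ ^ 2) = fun i => ‖(inner ℂ f (u i) : ℂ)‖ ^ 2 := by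
      funext i; rw [norm_inner_symm]
    rwa [h2] at h1
  exact ⟨by rw [htsum]; exact mul_le_mul_of_nonneg_left hlow (le_of_lt hc),
    by rw [htsum]; exact mul_le_mul_of_nonneg_left hupp (le_of_lt hc)⟩

end Aux

section Ind

theorem aux_vol_ne_top (ε x : ℝ) : volume (Set.Ico x (x + ε)) ≠ ∞ := by
  rw [Real.volume_Ico]; exact ENNReal.ofReal_ne_top

/-- The indicator of `[x, x+ε)` as an element of `L²(ℝ)`. -/
noncomputable def EI (ε x : ℝ) : Lp ℂ 2 (volume : Measure ℝ) :=
  indicatorConstLp 2 measurableSet_Ico (aux_vol_ne_top ε x) (1 : ℂ)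

theorem aux_indicatorConstLp_congr {α : Type*} [MeasurableSpace α] {μ : Measure α}
    {s t : Set α} (h : s = t) (hs : MeasurableSet s) (hμs : μ s ≠ ∞) (ht : MeasurableSet t)
    (hμt : μ t ≠ ∞) (c : ℂ) :
    (indicatorConstLp 2 hs hμs c : Lp ℂ 2 μ) = indicatorConstLp 2 ht hμt c := by
  subst h; rfl

theorem tauL2_EI (ε t x : ℝ) : tauL2 t (EI ε x) = EI ε (x + t) := by
  rw [tauL2, EI, Lp.indicatorConstLp_compMeasurePreserving]
  apply aux_indicatorConstLp_congr
  rw [Set.preimage_sub_const_Ico]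
  ring_nf

theorem inner_EI (ε x y : ℝ) :
    (inner ℂ (EI ε x) (EI ε y) : ℂ) =
      ((volume (Set.Ico y (y + ε) ∩ Set.Ico x (x + ε))).toReal : ℂ) := by
  rw [EI, EI, L2.inner_indicatorConstLp_one]
  have hcongr : ∀ᵐ z ∂(volume.restrict (Set.Ico x (x + ε))),
      (indicatorConstLp 2 measurableSet_Ico (aux_vol_ne_top ε y) (1 : ℂ)) z =
        (Set.Ico y (y + ε)).indicator (fun _ => (1:ℂ)) z :=
    ae_restrict_of_ae indicatorConstLp_coeFn
  rw [integral_congr_ae hcongr, setIntegral_indicator measurableSet_Ico, setIntegral_const]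
  simp [Set.inter_comm, smul_eq_mul, Measure.real]

theorem inner_EI_self {ε : ℝ} (hε : 0 ≤ ε) (x : ℝ) :
    (inner ℂ (EI ε x) (EI ε x) : ℂ) = (ε : ℂ) := by
  rw [inner_EI, Set.inter_self, Real.volume_Ico, show x + ε - x = ε by ring,
    ENNReal.toReal_ofReal hε]

theorem inner_EI_zero {ε : ℝ} {x y : ℝ} (hxy : ε ≤ |x - y|) :
    (inner ℂ (EI ε x) (EI ε y) : ℂ) = 0 := by
  rw [inner_EI]
  have hdisj : Disjoint (Set.Ico y (y + ε)) (Set.Ico x (x + ε)) := by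
    rw [Set.Ico_disjoint_Ico]
    rcases abs_cases (x - y) with ⟨heq, _⟩ | ⟨heq, _⟩
    · rw [heq] at hxy
      refine le_trans (min_le_left _ _) (le_trans ?_ (le_max_right _ _))
      linarith
    · rw [heq] at hxy
      refine le_trans (min_le_right _ _) (le_trans ?_ (le_max_left _ _))
      linarith
  rw [Set.disjoint_iff_inter_eq_empty.mp hdisj]
  simp

theorem aux_one_le_abs_int {k : ℤ} (hk : k ≠ 0) : (1 : ℝ) ≤ |(k : ℝ)| := by
  have : (1 : ℤ) ≤ |k| := Int.one_le_abs hk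
  calc (1:ℝ) ≤ ((|k| : ℤ) : ℝ) := by exact_mod_cast this
    _ = |(k : ℝ)| := by push_cast; rfl

end Ind

set_option maxHeartbeats 1000000 in
/-- If `0 < b < a` and `a/b ∉ ℤ`, there is `φ ∈ L²(ℝ)` such that `(τ_{nb}φ)_{n∈ℤ}` is a
frame sequence but `(τ_{na}φ)_{n∈ℤ}` is not. -/
theorem exists_frameSeq_small_step_not_large
    (a b : ℝ) (hb : 0 < b) (hba : b < a) (h : ¬ ∃ m : ℤ, a / b = (m : ℝ)) :
    ∃ φ : Lp ℂ 2 (volume : Measure ℝ),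
      IsFrameSeq (fun n : ℤ => tauL2 ((n : ℤ) * b) φ) ∧
        ¬ IsFrameSeq (fun n : ℤ => tauL2 ((n : ℤ) * a) φ) := by
  classical
  have ha : 0 < a := lt_trans hb hba
  -- the distance from `a` to the lattice `bℤ`
  set n₀ : ℤ := ⌊a / b⌋ with hn₀
  set r : ℝ := a - n₀ * b with hrdef
  have hr0 : 0 < r := by
    have h1 : (n₀ : ℝ) ≤ a / b := Int.floor_le _
    have h2 : (n₀ : ℝ) * b ≤ a := by
      have := (le_div_iff₀ hb).mp h1
      linarith
    rcases lt_or_eq_of_le h2 with h3 | h3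
    · rw [hrdef]; linarith
    · exfalso
      exact h ⟨n₀, by rw [← h3]; field_simp⟩
  have hrb : r < b := by
    have h1 : a / b < n₀ + 1 := Int.lt_floor_add_one _
    have h2 : a < ((n₀ : ℝ) + 1) * b := by
      have := (div_lt_iff₀ hb).mp h1
      linarith
    rw [hrdef]; nlinarith
  set ε : ℝ := min r (b - r) / 2 with hεdef
  have hε : 0 < ε := by
    rw [hεdef]
    have : 0 < min r (b - r) := lt_min hr0 (by linarith)
    linarith
  have h2ε : 2 * ε ≤ min r (b - r) := by rw [hεdef]; linarith
  have hεr : 2 * ε ≤ r := le_trans h2ε (min_le_left _ _)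
  have hεbr : 2 * ε ≤ b - r := le_trans h2ε (min_le_right _ _)
  have hεb : ε < b := by linarith
  have hεa : ε < a := lt_trans hεb hba
  -- key distance estimate
  have key_ab : ∀ k : ℤ, 2 * ε ≤ |a - k * b| := by
    intro k
    have hab : a - k * b = r + ((n₀ - k : ℤ) : ℝ) * b := by
      rw [hrdef]; push_cast; ring
    rw [hab]
    set m : ℤ := n₀ - k
    rcases le_or_gt 0 m with hm | hm
    · refine le_abs.mpr (Or.inl ?_)
      have : 0 ≤ (m : ℝ) * b := mul_nonneg (by exact_mod_cast hm) (le_of_lt hb)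
      linarith
    · refine le_abs.mpr (Or.inr ?_)
      have hm' : m ≤ -1 := by omega
      have hm1 : (m : ℝ) ≤ -1 := by exact_mod_cast hm'
      have : (m : ℝ) * b ≤ -b := by nlinarith
      linarith
  -- lattice distances
  have key_bb : ∀ k : ℤ, k ≠ 0 → ε ≤ |(k : ℝ) * b| := by
    intro k hk
    rw [abs_mul, abs_of_pos hb]
    have h1 : (1:ℝ) ≤ |(k:ℝ)| := aux_one_le_abs_int hk
    nlinarith
  have key_aa : ∀ k : ℤ, k ≠ 0 → ε ≤ |(k : ℝ) * a| := by
    intro k hk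
    rw [abs_mul, abs_of_pos ha]
    have h1 : (1:ℝ) ≤ |(k:ℝ)| := aux_one_le_abs_int hk
    nlinarith
  -- the function φ
  set φ : Lp ℂ 2 (volume : Measure ℝ) := EI ε 0 + EI ε a with hφ
  have htau_add : ∀ t : ℝ, tauL2 t φ = EI ε t + EI ε (a + t) := by
    intro t
    rw [hφ]
    have : tauL2 t (EI ε 0 + EI ε a) = tauL2 t (EI ε 0) + tauL2 t (EI ε a) := by
      simp only [tauL2]
      exact map_add _ _ _
    rw [this, tauL2_EI, tauL2_EI, zero_add]
  refine ⟨φ, ?_, ?_⟩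
  · -- the b-translates form a frame sequence
    refine ⟨2 * ε, 2 * ε, by linarith, by linarith, ?_⟩
    refine aux_frame_of_gram _ _ (by linarith) ?_
    intro i j
    have hi : tauL2 ((i : ℤ) * b) φ = EI ε (i * b) + EI ε (a + i * b) := htau_add _
    have hj : tauL2 ((j : ℤ) * b) φ = EI ε (j * b) + EI ε (a + j * b) := htau_add _
    rw [hi, hj, inner_add_left, inner_add_right, inner_add_right]
    by_cases hij : i = j
    · subst hij
      rw [inner_EI_self (le_of_lt hε), inner_EI_self (le_of_lt hε)]
      have hz1 : (inner ℂ (EI ε ((i:ℝ) * b)) (EI ε (a + i * b)) : ℂ) = 0 := by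
        apply inner_EI_zero
        have : (i:ℝ) * b - (a + i * b) = -(a - ((0:ℤ):ℝ) * b) := by push_cast; ring
        rw [this, abs_neg]
        exact le_trans (by linarith) (key_ab 0)
      have hz2 : (inner ℂ (EI ε (a + (i:ℝ) * b)) (EI ε ((i:ℝ) * b)) : ℂ) = 0 := by
        apply inner_EI_zero
        have : a + (i:ℝ) * b - i * b = a - ((0:ℤ):ℝ) * b := by push_cast; ring
        rw [this]
        exact le_trans (by linarith) (key_ab 0)
      rw [hz1, hz2]
      simp only [if_pos rfl]
      push_cast
      ring
    · have hij' : i - j ≠ 0 := sub_ne_zero.mpr hij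
      have hz1 : (inner ℂ (EI ε ((i:ℝ) * b)) (EI ε ((j:ℝ) * b)) : ℂ) = 0 := by
        apply inner_EI_zero
        have : (i:ℝ) * b - (j:ℝ) * b = ((i - j : ℤ) : ℝ) * b := by push_cast; ring
        rw [this]
        exact key_bb _ hij'
      have hz2 : (inner ℂ (EI ε ((i:ℝ) * b)) (EI ε (a + (j:ℝ) * b)) : ℂ) = 0 := by
        apply inner_EI_zero
        have : (i:ℝ) * b - (a + (j:ℝ) * b) = -(a - ((i - j : ℤ) : ℝ) * b) := by push_cast; ring
        rw [this, abs_neg]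
        exact le_trans (by linarith) (key_ab _)
      have hz3 : (inner ℂ (EI ε (a + (i:ℝ) * b)) (EI ε ((j:ℝ) * b)) : ℂ) = 0 := by
        apply inner_EI_zero
        have : a + (i:ℝ) * b - (j:ℝ) * b = a - ((j - i : ℤ) : ℝ) * b := by push_cast; ring
        rw [this]
        exact le_trans (by linarith) (key_ab _)
      have hz4 : (inner ℂ (EI ε (a + (i:ℝ) * b)) (EI ε (a + (j:ℝ) * b)) : ℂ) = 0 := by
        apply inner_EI_zero
        have : a + (i:ℝ) * b - (a + (j:ℝ) * b) = ((i - j : ℤ) : ℝ) * b := by push_cast; ring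
        rw [this]
        exact key_bb _ hij'
      rw [hz1, hz2, hz3, hz4, if_neg hij]
      ring
  · -- the a-translates do not form a frame sequence
    rintro ⟨A, B, hA, hB, hFr⟩
    set ga : ℤ → Lp ℂ 2 (volume : Measure ℝ) := fun n : ℤ => tauL2 ((n : ℤ) * a) φ with hga_def
    have hga : ∀ n : ℤ, ga n = EI ε ((n:ℝ) * a) + EI ε (((n:ℝ) + 1) * a) := by
      intro n
      rw [hga_def]
      simp only
      rw [htau_add]
      congr 2
      ring
    have hFgram : ∀ m n : ℤ, (inner ℂ (EI ε ((m:ℝ) * a)) (EI ε ((n:ℝ) * a)) : ℂ)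
        = if m = n then (ε : ℂ) else 0 := by
      intro m n
      by_cases hmn : m = n
      · subst hmn; rw [if_pos rfl]; exact inner_EI_self hε.le _
      · rw [if_neg hmn]
        apply inner_EI_zero
        have hcast : (m:ℝ)*a - (n:ℝ)*a = ((m - n : ℤ):ℝ) * a := by push_cast; ring
        rw [hcast]
        exact key_aa _ (sub_ne_zero.mpr hmn)
    set M : ℤ := max 1 (⌈3 * ε / A⌉ + 1) with hM_def
    have hM1 : 1 ≤ M := le_max_left _ _
    have hMA : 3 * ε < A * M := by
      have h1 : (3*ε/A : ℝ) ≤ (⌈3*ε/A⌉ : ℝ) := Int.le_ceil _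
      have h2 : ((⌈3*ε/A⌉ + 1 : ℤ) : ℝ) ≤ (M : ℝ) := by
        exact_mod_cast (le_max_right _ _ : (⌈3 * ε / A⌉ + 1 : ℤ) ≤ M)
      have h3 : 3*ε/A < (M:ℝ) := by push_cast at h2; linarith
      calc 3*ε = A * (3*ε/A) := by field_simp
        _ < A * M := mul_lt_mul_of_pos_left h3 hA
    set st : ℤ → ℤ := fun j =>
      if 0 ≤ j ∧ j ≤ M - 1 then 1 else if M ≤ j ∧ j ≤ 2*M - 1 then -1 else 0 with hst_def
    set tt : ℤ → ℤ := fun j =>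
      if j < 0 then 0 else if j ≤ M - 1 then j + 1
        else if j ≤ 2*M - 1 then 2*M - 1 - j else 0 with htt_def
    have htts : ∀ j, tt j - tt (j-1) = st j := by
      intro j
      simp only [htt_def, hst_def]
      split_ifs <;> omega
    set σ : ℤ → ℂ := fun n => (-1 : ℂ) ^ n with hσ_def
    have hm1 : (-1 : ℂ) ≠ 0 := by norm_num
    have hσ_succ : ∀ n, σ (n + 1) = -σ n := by
      intro n; simp only [hσ_def]; rw [zpow_add₀ hm1, zpow_one]; ring
    have hσ_pred : ∀ n, σ (n - 1) = -σ n := by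
      intro n
      have h5 := hσ_succ (n - 1)
      rw [sub_add_cancel] at h5
      rw [h5]; ring
    have hσσ : ∀ n, σ n * σ n = 1 := by
      intro n; simp only [hσ_def]; rw [← mul_zpow]; norm_num
    have hσ_conj : ∀ n, (starRingEnd ℂ) (σ n) = σ n := by
      intro n; simp only [hσ_def]; rw [map_zpow₀]; norm_num
    have hσ_norm : ∀ n, ‖σ n‖ = 1 := by
      intro n; simp only [hσ_def]; rw [norm_zpow]; norm_num
    set d : ℤ → ℂ := fun n => σ n * ((st n : ℤ) : ℂ) with hd_def
    set cc : ℤ → ℂ := fun n => σ n * ((tt n : ℤ) : ℂ) with hcc_def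
    have hcd : ∀ n, cc n + cc (n - 1) = d n := by
      intro n
      simp only [hcc_def, hd_def]
      rw [hσ_pred n]
      have hcast : ((tt n : ℂ) - (tt (n-1) : ℂ)) = ((st n : ℤ) : ℂ) := by
        rw [← htts n]; push_cast; ring
      calc σ n * (tt n : ℂ) + (-σ n) * (tt (n-1) : ℂ)
          = σ n * ((tt n : ℂ) - (tt (n-1) : ℂ)) := by ring
        _ = σ n * ((st n : ℤ) : ℂ) := by rw [hcast]
    have hd_conj : ∀ n, (starRingEnd ℂ) (d n) = d n := by
      intro n
      simp only [hd_def]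
      rw [map_mul, hσ_conj, ← Complex.ofReal_intCast, Complex.conj_ofReal]
    set T : Finset ℤ := Finset.Icc 0 (2*M - 1) with hT_def
    set U : Finset ℤ := Finset.Icc (-1) (2*M) with hU_def
    have hcc_zero : ∀ n, n ∉ T → cc n = 0 := by
      intro n hn
      rw [hT_def, Finset.mem_Icc] at hn
      have h6 : tt n = 0 := by simp only [htt_def]; split_ifs <;> omega
      simp [hcc_def, h6]
    have hd_zero : ∀ n, n ∉ T → d n = 0 := by
      intro n hn
      rw [hT_def, Finset.mem_Icc] at hn
      have h6 : st n = 0 := by simp only [hst_def]; split_ifs <;> omega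
      simp [hd_def, h6]
    set f : Lp ℂ 2 (volume : Measure ℝ) := ∑ n ∈ T, cc n • ga n with hf_def
    have hf_mem : f ∈ (Submodule.span ℂ (Set.range ga)).topologicalClosure := by
      apply Submodule.le_topologicalClosure
      exact Submodule.sum_mem _ fun n _ => Submodule.smul_mem _ _ (Submodule.subset_span ⟨n, rfl⟩)
    -- expansion of `f` in the orthogonal family `EI ε (m a)`
    have hfE : f = ∑ m ∈ T, d m • EI ε ((m:ℝ) * a) := by
      have hTU : T ⊆ U := by
        rw [hT_def, hU_def]
        intro x hx
        rw [Finset.mem_Icc] at hx ⊢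
        omega
      have e2 : f = (∑ n ∈ T, cc n • EI ε ((n:ℝ)*a)) + ∑ n ∈ T, cc n • EI ε (((n:ℝ)+1)*a) := by
        rw [hf_def, ← Finset.sum_add_distrib]
        refine Finset.sum_congr rfl fun n _ => ?_
        rw [hga n, smul_add]
      have e3 : ∑ n ∈ T, cc n • EI ε (((n:ℝ)+1)*a)
          = ∑ m ∈ Finset.Icc (1:ℤ) (2*M), cc (m - 1) • EI ε ((m:ℝ)*a) := by
        refine Finset.sum_nbij' (fun n => n + 1) (fun m => m - 1) ?_ ?_ ?_ ?_ ?_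
        · intro n hn
          rw [hT_def, Finset.mem_Icc] at hn
          rw [Finset.mem_Icc]
          omega
        · intro m hm
          rw [Finset.mem_Icc] at hm
          rw [hT_def, Finset.mem_Icc]
          omega
        · intro n _
          omega
        · intro m _
          omega
        · intro n _
          have hc1 : (n : ℤ) + 1 - 1 = n := by omega
          rw [hc1]
          congr 2
          push_cast
          ring
      have e4 : ∑ n ∈ T, cc n • EI ε ((n:ℝ)*a) = ∑ m ∈ U, cc m • EI ε ((m:ℝ)*a) := by
        refine Finset.sum_subset hTU fun m _ hm => ?_
        rw [hcc_zero m hm, zero_smul]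
      have e5 : ∑ m ∈ Finset.Icc (1:ℤ) (2*M), cc (m - 1) • EI ε ((m:ℝ)*a)
          = ∑ m ∈ U, cc (m - 1) • EI ε ((m:ℝ)*a) := by
        refine Finset.sum_subset ?_ fun m _ hm => ?_
        · rw [hU_def]
          intro x hx
          rw [Finset.mem_Icc] at hx ⊢
          omega
        · rw [Finset.mem_Icc] at hm
          have : cc (m - 1) = 0 := by
            apply hcc_zero
            rw [hT_def, Finset.mem_Icc]
            omega
          rw [this, zero_smul]
      have e6 : f = ∑ m ∈ U, d m • EI ε ((m:ℝ)*a) := by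
        rw [e2, e3, e4, e5, ← Finset.sum_add_distrib]
        refine Finset.sum_congr rfl fun m _ => ?_
        rw [← add_smul, hcd m]
      rw [e6]
      symm
      refine Finset.sum_subset hTU fun m _ hm => ?_
      rw [hd_zero m hm, zero_smul]
    -- inner products of `f` with the family
    have hinner_fF : ∀ j : ℤ, (inner ℂ f (EI ε ((j:ℝ)*a)) : ℂ) = (ε : ℂ) * d j := by
      intro j
      rw [hfE, sum_inner]
      by_cases hj : j ∈ T
      · rw [Finset.sum_eq_single_of_mem j hj]
        · rw [inner_smul_left, hFgram j j, if_pos rfl, hd_conj]; ring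
        · intro m _ hmj
          rw [inner_smul_left, hFgram m j, if_neg hmj, mul_zero]
      · rw [Finset.sum_eq_zero, hd_zero j hj, mul_zero]
        intro m hm
        rw [inner_smul_left, hFgram m j, if_neg (by rintro rfl; exact hj hm), mul_zero]
    have hinner_fga : ∀ j : ℤ, (inner ℂ f (ga j) : ℂ) = (ε : ℂ) * (d j + d (j+1)) := by
      intro j
      rw [hga j, inner_add_right]
      have h2 : (((j:ℝ)+1)*a) = (((j+1:ℤ):ℝ))*a := by push_cast; ring
      rw [h2, hinner_fF j, hinner_fF (j+1)]
      ring
    have hGval : ∀ j, d j + d (j+1) = σ j * ((st j - st (j+1) : ℤ) : ℂ) := by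
      intro j
      simp only [hd_def]
      rw [hσ_succ j]
      push_cast
      ring
    have hnorm_fga : ∀ j : ℤ, ‖(inner ℂ f (ga j) : ℂ)‖^2
        = ε^2 * (((st j - st (j+1) : ℤ) : ℝ))^2 := by
      intro j
      rw [hinner_fga j, hGval j, norm_mul, norm_mul, hσ_norm]
      have hε' : ‖(ε : ℂ)‖ = ε := by
        rw [Complex.norm_real, Real.norm_eq_abs, _root_.abs_of_nonneg hε.le]
      have hk : ‖(((st j - st (j+1) : ℤ)) : ℂ)‖ = |((st j - st (j+1) : ℤ) : ℝ)| := by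
        rw [← Complex.ofReal_intCast, Complex.norm_real, Real.norm_eq_abs]
      rw [hε', hk, one_mul, mul_pow, _root_.sq_abs]
    have hsupp : ∀ j : ℤ, j ∉ ({-1, M-1, 2*M-1} : Finset ℤ) → ‖(inner ℂ f (ga j) : ℂ)‖^2 = 0 := by
      intro j hj
      simp only [Finset.mem_insert, Finset.mem_singleton] at hj
      push_neg at hj
      rw [hnorm_fga j]
      have h7 : st j - st (j+1) = 0 := by
        simp only [hst_def]
        split_ifs <;> omega
      rw [h7]
      norm_num
    have htsum : ∑' j : ℤ, ‖(inner ℂ f (ga j) : ℂ)‖^2 = 6 * ε^2 := by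
      rw [tsum_eq_sum (s := ({-1, M-1, 2*M-1} : Finset ℤ)) hsupp]
      have hne1 : (-1 : ℤ) ≠ M - 1 := by omega
      have hne2 : (-1 : ℤ) ≠ 2*M - 1 := by omega
      have hne3 : M - 1 ≠ 2*M - 1 := by omega
      rw [Finset.sum_insert (by simp [hne1, hne2]), Finset.sum_insert (by simp [hne3]),
        Finset.sum_singleton, hnorm_fga, hnorm_fga, hnorm_fga]
      have v1 : st (-1) - st (-1 + 1) = -1 := by simp only [hst_def]; split_ifs <;> omega
      have v2 : st (M-1) - st (M-1+1) = 2 := by simp only [hst_def]; split_ifs <;> omega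
      have v3 : st (2*M-1) - st (2*M-1+1) = -1 := by simp only [hst_def]; split_ifs <;> omega
      rw [v1, v2, v3]
      norm_num
      ring
    -- norm of f
    have hff : (inner ℂ f f : ℂ) = ((2*M : ℤ) : ℂ) * ε := by
      have h1 : (inner ℂ f f : ℂ) = ∑ j ∈ T, d j * (inner ℂ f (EI ε ((j:ℝ)*a)) : ℂ) := by
        nth_rewrite 2 [hfE]
        rw [inner_sum]
        exact Finset.sum_congr rfl fun j _ => by rw [inner_smul_right]
      have hst1 : ∀ j ∈ T, d j * d j = 1 := by
        intro j hj
        rw [hT_def, Finset.mem_Icc] at hj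
        have h3 : st j = 1 ∨ st j = -1 := by
          simp only [hst_def]
          split_ifs <;> omega
        simp only [hd_def]
        calc (σ j * (st j:ℂ)) * (σ j * (st j:ℂ))
            = (σ j * σ j) * ((st j:ℂ) * (st j:ℂ)) := by ring
          _ = (st j:ℂ) * (st j:ℂ) := by rw [hσσ]; ring
          _ = 1 := by rcases h3 with h3|h3 <;> rw [h3] <;> norm_num
      have hcard : (T.card : ℂ) = ((2*M : ℤ) : ℂ) := by
        rw [hT_def, Int.card_Icc]
        have : (2*M - 1 + 1 - 0 : ℤ).toNat = (2*M).toNat := by omega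
        rw [this]
        have h8 : ((2*M).toNat : ℤ) = 2*M := Int.toNat_of_nonneg (by omega)
        exact_mod_cast congrArg (fun z : ℤ => (z : ℂ)) h8
      calc (inner ℂ f f : ℂ) = ∑ j ∈ T, d j * (inner ℂ f (EI ε ((j:ℝ)*a)) : ℂ) := h1
        _ = ∑ j ∈ T, (ε:ℂ) * (d j * d j) :=
          Finset.sum_congr rfl fun j _ => by rw [hinner_fF j]; ring
        _ = ∑ j ∈ T, (ε:ℂ) :=
          Finset.sum_congr rfl fun j hj => by rw [hst1 j hj, mul_one]
        _ = (T.card : ℂ) * ε := by rw [Finset.sum_const, nsmul_eq_mul]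
        _ = ((2*M : ℤ) : ℂ) * ε := by rw [hcard]
    have hnormf : ‖f‖^2 = 2*(M:ℝ)*ε := by
      rw [← inner_self_eq_norm_sq (𝕜 := ℂ) f, hff]
      have h9 : ((2*M : ℤ) : ℂ) * (ε : ℂ) = ((2*(M:ℝ)*ε : ℝ) : ℂ) := by push_cast; ring
      rw [h9]
      exact Complex.ofReal_re _
    obtain ⟨hlow, _⟩ := hFr f hf_mem
    rw [hnormf, htsum] at hlow
    -- contradiction
    have hfinal := mul_lt_mul_of_pos_left hMA (by linarith : (0:ℝ) < 2*ε)
    nlinarith [hlow, hfinal, hε]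
end

section
/- For any 0 < b < a, there exists φ ∈ L²(ℝ) such that (τ_{na}φ)_{n∈ℤ} is a frame sequence but (τ_{nb}φ)_{n∈ℤ} is not a frame sequence. -/
open MeasureTheory Complex
open scoped FourierTransform ENNReal InnerProductSpace Real

section AuxFrame
open Set


-- smul commutes with tau
lemma tau_smul (x : ℝ) (r : ℂ) (φ : Lp ℂ 2 (volume : Measure ℝ)) :
    tauL2 x (r • φ) = r • tauL2 x φ := by
  show Lp.compMeasurePreservingₗ ℂ _ (measurePreserving_sub_right volume x) (r • φ) = _
  rw [_root_.map_smul]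
  rfl

-- inner ℂ of indicators
lemma inner_ind {s t : Set ℝ} (hs : MeasurableSet s) (ht : MeasurableSet t)
    (hμs : volume s ≠ ∞) (hμt : volume t ≠ ∞) :
    (inner ℂ (indicatorConstLp 2 hs hμs (1:ℂ)) (indicatorConstLp 2 ht hμt (1:ℂ)) : ℂ)
      = ((volume (s ∩ t)).toReal : ℂ) := by
  rw [L2.inner_indicatorConstLp_one hs hμs]
  have h1 : ∫ x in s, (indicatorConstLp 2 ht hμt (1:ℂ)) x ∂volume
      = ∫ x in s, t.indicator (fun _ => (1:ℂ)) x ∂volume :=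
    setIntegral_congr_ae hs ((indicatorConstLp_coeFn (μ := volume)).mono fun x hx _ => hx)
  rw [h1, setIntegral_indicator ht, setIntegral_const]
  simp [real_smul, mul_comm]
  rfl

-- tau of indicator
lemma tau_ind (x : ℝ) {s : Set ℝ} (hs : MeasurableSet s) (hμs : volume s ≠ ∞) :
    tauL2 x (indicatorConstLp 2 hs hμs (1:ℂ))
      = indicatorConstLp 2 (hs.preimage (measurePreserving_sub_right volume x).measurable)
        (by rwa [(measurePreserving_sub_right volume x).measure_preimage hs.nullMeasurableSet])
        (1:ℂ) :=
  Lp.indicatorConstLp_compMeasurePreserving hs hμs 1 (measurePreserving_sub_right volume x)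
variable {b d : ℝ}


def Sset (b d x : ℝ) : Set ℝ := Ico x (x+d) ∪ Ico (x+b) (x+b+d)

lemma Sset_meas (b d x : ℝ) : MeasurableSet (Sset b d x) :=
  (measurableSet_Ico).union measurableSet_Ico

lemma Sset_subset (b d x : ℝ) (hd : 0 < d) (hdb : d ≤ b) :
    Sset b d x ⊆ Ico x (x+b+d) := by
  intro y hy
  rcases hy with h | h <;> simp only [mem_Ico] at * <;> constructor <;> linarith [h.1, h.2]

lemma Sset_vol_ne_top (x : ℝ) : volume (Sset b d x) ≠ ∞ := by
  refine ne_of_lt (lt_of_le_of_lt (measure_union_le _ _) ?_)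
  simp [Real.volume_Ico]

lemma Sset_preimage (x : ℝ) : (fun y => y - x) ⁻¹' (Sset b d 0) = Sset b d x := by
  ext y
  simp only [Sset, mem_preimage, mem_union, mem_Ico, zero_add]
  constructor
  · rintro (⟨h1, h2⟩ | ⟨h1, h2⟩)
    · exact Or.inl ⟨by linarith, by linarith⟩
    · exact Or.inr ⟨by linarith, by linarith⟩
  · rintro (⟨h1, h2⟩ | ⟨h1, h2⟩)
    · exact Or.inl ⟨by linarith, by linarith⟩
    · exact Or.inr ⟨by linarith, by linarith⟩

lemma vol_self (hd : 0 < d) (hdb : d ≤ b) (x : ℝ) :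
    (volume (Sset b d x ∩ Sset b d x)).toReal = 2 * d := by
  rw [inter_self]
  have hdisj : Disjoint (Ico x (x+d)) (Ico (x+b) (x+b+d)) := by
    apply Set.disjoint_left.2
    intro y hy hy'
    simp only [mem_Ico] at hy hy'
    linarith [hy.2, hy'.1]
  rw [Sset, measure_union hdisj measurableSet_Ico]
  rw [Real.volume_Ico, Real.volume_Ico]
  rw [← ENNReal.ofReal_add (by linarith) (by linarith)]
  rw [ENNReal.toReal_ofReal (by linarith)]
  ring_nf

lemma vol_adj (hd : 0 < d) (hdb : d ≤ b) (x : ℝ) :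
    (volume (Sset b d x ∩ Sset b d (x + b))).toReal = d := by
  have hset : Sset b d x ∩ Sset b d (x + b) = Ico (x+b) (x+b+d) := by
    ext y
    simp only [Sset, mem_inter_iff, mem_union, mem_Ico]
    constructor
    · rintro ⟨h1 | h1, h2 | h2⟩ <;> exact ⟨by linarith [h1.1, h1.2, h2.1, h2.2], by linarith [h1.1, h1.2, h2.1, h2.2]⟩
    · intro h; exact ⟨Or.inr h, Or.inl (by constructor <;> linarith [h.1, h.2])⟩
  rw [hset, Real.volume_Ico, ENNReal.toReal_ofReal (by linarith)]
  ring

lemma vol_far (hd : 0 < d) (hdb : d ≤ b) {x y : ℝ} (h : b + d ≤ |y - x|) :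
    (volume (Sset b d x ∩ Sset b d y)).toReal = 0 := by
  have : Sset b d x ∩ Sset b d y = ∅ := by
    rcases le_or_gt x y with hxy | hxy
    · have hxy' : b + d ≤ y - x := by
        rwa [_root_.abs_of_nonneg (by linarith)] at h
      apply eq_empty_of_forall_notMem
      intro z hz
      have h1 := Sset_subset b d x hd hdb hz.1
      have h2 := Sset_subset b d y hd hdb hz.2
      simp only [mem_Ico] at h1 h2
      linarith [h1.2, h2.1]
    · have hxy' : b + d ≤ x - y := by
        rw [_root_.abs_of_neg (by linarith)] at h; linarith
      apply eq_empty_of_forall_notMem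
      intro z hz
      have h1 := Sset_subset b d x hd hdb hz.1
      have h2 := Sset_subset b d y hd hdb hz.2
      simp only [mem_Ico] at h1 h2
      linarith [h1.1, h2.2]
  rw [this]; simp


noncomputable def phi0 (b d : ℝ) : Lp ℂ 2 (volume : Measure ℝ) :=
  indicatorConstLp 2 (Sset_meas b d 0) (Sset_vol_ne_top 0) 1

noncomputable def phi (b d : ℝ) : Lp ℂ 2 (volume : Measure ℝ) :=
  (((Real.sqrt (2*d))⁻¹ : ℝ) : ℂ) • phi0 b d

noncomputable def gam (j : ℤ) : ℝ := if j = 0 then 1 else if j = 1 ∨ j = -1 then 2⁻¹ else 0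

section
variable {b d : ℝ} (hd : 0 < d) (hdb : d ≤ b)

lemma inner_tau_tau0 (x y : ℝ) :
    (inner ℂ (tauL2 x (phi0 b d)) (tauL2 y (phi0 b d)) : ℂ)
      = ((volume (Sset b d x ∩ Sset b d y)).toReal : ℂ) := by
  rw [phi0, tau_ind, tau_ind, inner_ind]
  rw [Sset_preimage, Sset_preimage]

include hd in
lemma inner_tau_tau (x y : ℝ) :
    (inner ℂ (tauL2 x (phi b d)) (tauL2 y (phi b d)) : ℂ)
      = (((2*d)⁻¹ * (volume (Sset b d x ∩ Sset b d y)).toReal : ℝ) : ℂ) := by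
  rw [phi, tau_smul, tau_smul, inner_smul_left, inner_smul_right, inner_tau_tau0]
  rw [Complex.conj_ofReal, ← Complex.ofReal_mul, ← Complex.ofReal_mul]
  congr 1
  rw [← mul_assoc]
  congr 1
  rw [← mul_inv, Real.mul_self_sqrt (by positivity)]

include hd hdb in
lemma gram_b (hb : 0 < b) (n m : ℤ) :
    (inner ℂ (tauL2 (n * b) (phi b d)) (tauL2 (m * b) (phi b d)) : ℂ) = ((gam (m - n) : ℝ) : ℂ) := by
  rw [inner_tau_tau hd]
  norm_cast
  rcases eq_or_ne (m - n) 0 with h0 | h0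
  · have : (m:ℝ) = n := by
      have h : m = n := by omega
      rw [h]
    rw [this, vol_self hd hdb, gam, if_pos h0]
    field_simp
  rcases eq_or_ne (m - n) 1 with h1 | h1
  · have hmn : (m : ℝ) * b = n * b + b := by
      have : m = n + 1 := by omega
      subst this; push_cast; ring
    rw [hmn, vol_adj hd hdb, gam, if_neg h0, if_pos (Or.inl h1)]
    field_simp
  rcases eq_or_ne (m - n) (-1) with h2 | h2
  · have hmn : (n : ℝ) * b = m * b + b := by
      have : n = m + 1 := by omega
      subst this; push_cast; ring
    rw [Set.inter_comm, hmn, vol_adj hd hdb, gam, if_neg h0, if_pos (Or.inr h2)]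
    field_simp
  · have habs : b + d ≤ |(m:ℝ) * b - n * b| := by
      have h2le : (2:ℝ) ≤ |((m - n : ℤ) : ℝ)| := by
        rw [← Int.cast_abs, Int.abs_eq_natAbs]
        exact_mod_cast (by omega : 2 ≤ (m - n).natAbs)
      have heq : (m:ℝ) * b - n * b = ((m - n : ℤ) : ℝ) * b := by push_cast; ring
      rw [heq, abs_mul, _root_.abs_of_pos hb]
      nlinarith
    rw [vol_far hd hdb habs, gam, if_neg h0, if_neg (by rintro (h|h) <;> simp_all)]
    simp

include hd hdb in
lemma gram_a (hb : 0 < b) {a : ℝ} (hbda : b + d ≤ a) :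
    Orthonormal ℂ (fun n : ℤ => tauL2 (n * a) (phi b d)) := by
  rw [orthonormal_iff_ite]
  intro i j
  rw [inner_tau_tau hd]
  rcases eq_or_ne i j with h | h
  · subst h
    rw [vol_self hd hdb, if_pos rfl]
    norm_cast
    field_simp
  · have habs : b + d ≤ |(j:ℝ) * a - i * a| := by
      have h1le : (1:ℝ) ≤ |((j - i : ℤ) : ℝ)| := by
        rw [← Int.cast_abs, Int.abs_eq_natAbs]
        exact_mod_cast (by omega : 1 ≤ (j - i).natAbs)
      have heq : (j:ℝ) * a - i * a = ((j - i : ℤ) : ℝ) * a := by push_cast; ring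
      rw [heq, abs_mul, _root_.abs_of_pos (by linarith : (0:ℝ) < a)]
      nlinarith
    rw [vol_far hd hdb habs, if_neg h]
    simp
end

end AuxFrame


lemma isFrameSeqWith_of_orthonormal {e : ℤ → Lp ℂ 2 (volume : Measure ℝ)}
    (he : Orthonormal ℂ e) : IsFrameSeqWith e 1 1 := by
  set K := (Submodule.span ℂ (Set.range e)).topologicalClosure with hK
  haveI : CompleteSpace K := (Submodule.isClosed_topologicalClosure _).completeSpace_coe
  intro f hf
  set e' : ℤ → K := fun n =>
    ⟨e n, (Submodule.span ℂ (Set.range e)).le_topologicalClosure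
      (Submodule.subset_span ⟨n, rfl⟩)⟩ with he'
  have honn : Orthonormal ℂ e' := by
    constructor
    · intro i
      have : ‖e' i‖ = ‖e i‖ := rfl
      rw [this]; exact he.1 i
    · intro i j hij
      have : (inner ℂ (e' i) (e' j) : ℂ) = inner ℂ (e i) (e j) := rfl
      rw [this]; exact he.2 hij
  have hsp : ⊤ ≤ (Submodule.span ℂ (Set.range e')).topologicalClosure := by
    intro x _
    have hx : (x : Lp ℂ 2 (volume : Measure ℝ)) ∈
        closure ((Submodule.span ℂ (Set.range e) : Set (Lp ℂ 2 (volume : Measure ℝ)))) := x.2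
    have hmem : x ∈ closure ((Submodule.span ℂ (Set.range e') : Set K)) := by
      rw [closure_subtype]
      have himg : (Subtype.val '' (Submodule.span ℂ (Set.range e') : Set K))
          = (Submodule.span ℂ (Set.range e) : Set (Lp ℂ 2 (volume : Measure ℝ))) := by
        have h1 : Subtype.val '' (Submodule.span ℂ (Set.range e') : Set K)
            = ((Submodule.span ℂ (Set.range e')).map K.subtype : Set (Lp ℂ 2 (volume : Measure ℝ))) := by
          simp [Submodule.map_coe]
        rw [h1, Submodule.map_span]
        congr 2
        rw [← Set.range_comp]
        rfl
      rw [himg]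
      exact hx
    have : x ∈ (Submodule.span ℂ (Set.range e')).topologicalClosure := by
      have := Submodule.topologicalClosure_coe (Submodule.span ℂ (Set.range e'))
      rw [← SetLike.mem_coe, this]
      exact hmem
    exact this
  let B : HilbertBasis ℤ ℂ K := HilbertBasis.mk honn hsp
  set F : K := ⟨f, hf⟩ with hF
  have hsum := B.hasSum_inner_mul_inner F F
  have hre := hsum.mapL Complex.reCLM
  have hterm : (fun n : ℤ => Complex.reCLM ((inner ℂ F (B n) : ℂ) * inner ℂ (B n) F))
      = fun n : ℤ => ‖(inner ℂ f (e n) : ℂ)‖ ^ 2 := by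
    funext n
    have hBn : (B n : K) = e' n := by
      show (HilbertBasis.mk honn hsp) n = e' n
      rw [HilbertBasis.coe_mk]
    have h1 : (inner ℂ F (B n) : ℂ) = inner ℂ f (e n) := by rw [hBn]; rfl
    have h2 : (inner ℂ (B n) F : ℂ) = (starRingEnd ℂ) (inner ℂ F (B n)) := (inner_conj_symm (𝕜 := ℂ) (E := K) (B n) F).symm
    rw [h2, h1, Complex.mul_conj]
    show ((Complex.normSq (inner ℂ f (e n) : ℂ) : ℝ) : ℂ).re = _
    rw [Complex.ofReal_re, Complex.normSq_eq_norm_sq]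
  have hval : Complex.reCLM (inner ℂ F F : ℂ) = ‖f‖ ^ 2 := by
    have h := @inner_self_eq_norm_sq ℂ _ _ _ _ F
    have hnf : ‖F‖ = ‖f‖ := rfl
    show (inner ℂ F F : ℂ).re = ‖f‖ ^ 2
    rw [← hnf, ← h]
    rfl
  rw [hval, hterm] at hre
  constructor
  · rw [hre.tsum_eq]; nlinarith [sq_nonneg ‖f‖]
  · rw [hre.tsum_eq]; nlinarith [sq_nonneg ‖f‖]




def Wf (K n : ℤ) : ℤ := max 0 (min n (2*K - n))

lemma not_frameSeq_of_gram {e : ℤ → Lp ℂ 2 (volume : Measure ℝ)}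
    (hgram : ∀ n m : ℤ, (inner ℂ (e n) (e m) : ℂ) = ((gam (m - n) : ℝ) : ℂ)) :
    ¬ IsFrameSeq e := by
  rintro ⟨A, B, hA, hB, hfr⟩
  have key : ∀ N : ℕ, 1 ≤ N → A ≤ 3 / N := by
    intro N hN
    set K : ℤ := (N : ℤ) with hKdef
    have hK : 1 ≤ K := by rw [hKdef]; exact_mod_cast hN
    have hNR : (0:ℝ) < N := by exact_mod_cast hN
    have hKR : ((K:ℤ) : ℝ) = (N : ℝ) := by push_cast [hKdef]; rfl
    set s : ℤ → ℝ := fun n => (-1:ℝ) ^ n with hsdef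
    set c : ℤ → ℝ := fun n => s n * ((Wf K n : ℤ) : ℝ) / N with hcdef
    set h : ℤ → ℝ := fun m => 2⁻¹ * c (m-1) + c m + 2⁻¹ * c (m+1) with hhdef
    set T : Finset ℤ := Finset.Icc (-1) (2*K+1) with hTdef
    set f : Lp ℂ 2 (volume : Measure ℝ) := ∑ k ∈ T, ((c k : ℝ) : ℂ) • e k with hfdef
    -- sign facts
    have hs1 : ∀ n : ℤ, s (n+1) = - s n := by
      intro n; simp only [hsdef]
      rw [zpow_add_one₀ (by norm_num : (-1:ℝ) ≠ 0)]; ring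
    have hs2 : ∀ n : ℤ, s (n-1) = - s n := by
      intro n; simp only [hsdef]
      rw [zpow_sub_one₀ (by norm_num : (-1:ℝ) ≠ 0)]; ring
    have hssq : ∀ n : ℤ, s n * s n = 1 := by
      intro n; simp only [hsdef]
      rw [← zpow_add₀ (by norm_num : (-1:ℝ) ≠ 0), ← two_mul, zpow_mul]
      norm_num
    -- support of c
    have hcsupp : ∀ n : ℤ, n ≤ 0 ∨ 2*K ≤ n → c n = 0 := by
      intro n hn
      have : Wf K n = 0 := by unfold Wf; omega
      simp [hcdef, this]
    -- formula for h
    have hh : ∀ m : ℤ, h m = s m * ((2 * Wf K m - Wf K (m-1) - Wf K (m+1) : ℤ) : ℝ) / (2*N) := by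
      intro m
      simp only [hhdef, hcdef, hs1, hs2]
      push_cast
      field_simp
      ring
    -- h supported in [0, 2K]
    have hhsupp : ∀ m : ℤ, m < 0 ∨ 2*K < m → h m = 0 := by
      intro m hm
      simp only [hhdef]
      rw [hcsupp (m-1) (by omega), hcsupp m (by omega), hcsupp (m+1) (by omega)]
      ring
    -- inner ℂ products with f
    have hfm : ∀ m : ℤ, (inner ℂ f (e m) : ℂ) = ((h m : ℝ) : ℂ) := by
      intro m
      have step1 : (inner ℂ f (e m) : ℂ) = ((∑ k ∈ T, c k * gam (m - k) : ℝ) : ℂ) := by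
        rw [hfdef, sum_inner, Complex.ofReal_sum]
        refine Finset.sum_congr rfl fun k _ => ?_
        rw [inner_smul_left, hgram, Complex.conj_ofReal, ← Complex.ofReal_mul]
      rw [step1]
      congr 1
      by_cases hm : 0 ≤ m ∧ m ≤ 2*K
      · have hsub : ({m-1, m, m+1} : Finset ℤ) ⊆ T := by
          intro x hx
          simp only [Finset.mem_insert, Finset.mem_singleton] at hx
          simp only [hTdef, Finset.mem_Icc]
          omega
        rw [← Finset.sum_subset hsub (fun x hxT hxn => ?_)]
        · rw [Finset.sum_insert (by simp only [Finset.mem_insert, Finset.mem_singleton]; push_neg; omega),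
            Finset.sum_insert (by simp only [Finset.mem_singleton]; omega),
            Finset.sum_singleton]
          have e1 : m - (m-1) = 1 := by ring
          have e2 : m - m = 0 := by ring
          have e3 : m - (m+1) = -1 := by ring
          rw [e1, e2, e3, show gam 1 = 2⁻¹ by norm_num [gam],
            show gam 0 = 1 by norm_num [gam], show gam (-1) = 2⁻¹ by norm_num [gam]]
          simp only [hhdef]
          ring
        · simp only [Finset.mem_insert, Finset.mem_singleton] at hxn
          push_neg at hxn
          have : gam (m - x) = 0 := by
            rw [gam, if_neg (by omega), if_neg (by push_neg; constructor <;> omega)]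
          rw [this, mul_zero]
      · rw [hhsupp m (by omega)]
        apply Finset.sum_eq_zero
        intro k hk
        simp only [hTdef, Finset.mem_Icc] at hk
        by_cases hck : k ≤ 0 ∨ 2*K ≤ k
        · rw [hcsupp k hck, zero_mul]
        · push_neg at hck
          have : gam (m - k) = 0 := by
            rw [gam, if_neg (by omega), if_neg (by push_neg; constructor <;> omega)]
          rw [this, mul_zero]
    -- tsum computation
    have htsum : (∑' m : ℤ, ‖(inner ℂ f (e m) : ℂ)‖ ^ 2)
        = ∑ m ∈ Finset.Icc (0:ℤ) (2*K), (h m)^2 := by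
      have hfun : (fun m : ℤ => ‖(inner ℂ f (e m) : ℂ)‖ ^ 2) = fun m => (h m)^2 := by
        funext m
        rw [hfm m, Complex.norm_real, Real.norm_eq_abs, _root_.sq_abs]
      rw [hfun]
      refine tsum_eq_sum fun m hm => ?_
      simp only [Finset.mem_Icc] at hm
      rw [hhsupp m (by omega)]
      ring
    -- bound on the sum
    have hbound : ∑ m ∈ Finset.Icc (0:ℤ) (2*K), (h m)^2 ≤ 3 / N^2 := by
      have hone : ∀ m ∈ Finset.Icc (0:ℤ) (2*K),
          (h m)^2 ≤ (if m = 0 ∨ m = K ∨ m = 2*K then (1/(N:ℝ))^2 else 0) := by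
        intro m _
        by_cases hc : m = 0 ∨ m = K ∨ m = 2*K
        · rw [if_pos hc]
          have hD : -2 ≤ 2 * Wf K m - Wf K (m-1) - Wf K (m+1) ∧
              2 * Wf K m - Wf K (m-1) - Wf K (m+1) ≤ 2 := by unfold Wf; omega
          rw [hh m]
          set D : ℝ := ((2 * Wf K m - Wf K (m-1) - Wf K (m+1) : ℤ) : ℝ) with hDdef
          have hD1 : -2 ≤ D := by rw [hDdef]; exact_mod_cast hD.1
          have hD2 : D ≤ 2 := by rw [hDdef]; exact_mod_cast hD.2
          have h1 : (s m * D / (2*N))^2 = (s m * s m) * D^2 / (4 * N^2) := by ring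
          rw [h1, hssq m, one_mul, div_pow, one_pow]
          rw [div_le_div_iff₀ (by positivity) (by positivity)]
          have hD4 : D^2 ≤ 4 := by nlinarith
          nlinarith [mul_le_mul_of_nonneg_right hD4 (sq_nonneg ((N:ℝ)))]
        · rw [if_neg hc]
          push_neg at hc
          have hD : 2 * Wf K m - Wf K (m-1) - Wf K (m+1) = 0 := by unfold Wf; omega
          rw [hh m, hD]
          norm_num
      calc ∑ m ∈ Finset.Icc (0:ℤ) (2*K), (h m)^2
          ≤ ∑ m ∈ Finset.Icc (0:ℤ) (2*K),
            (if m = 0 ∨ m = K ∨ m = 2*K then (1/(N:ℝ))^2 else 0) := Finset.sum_le_sum hone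
        _ = ∑ m ∈ (Finset.Icc (0:ℤ) (2*K)).filter (fun m => m = 0 ∨ m = K ∨ m = 2*K),
            (1/(N:ℝ))^2 := (Finset.sum_filter _ _).symm
        _ ≤ 3 * (1/(N:ℝ))^2 := by
            have hcard : ((Finset.Icc (0:ℤ) (2*K)).filter
                (fun m => m = 0 ∨ m = K ∨ m = 2*K)).card ≤ 3 := by
              have hsub : (Finset.Icc (0:ℤ) (2*K)).filter (fun m => m = 0 ∨ m = K ∨ m = 2*K)
                  ⊆ ({0, K, 2*K} : Finset ℤ) := by
                intro x hx
                simp only [Finset.mem_filter] at hx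
                simp only [Finset.mem_insert, Finset.mem_singleton]
                tauto
              calc _ ≤ ({0, K, 2*K} : Finset ℤ).card := Finset.card_le_card hsub
                _ ≤ 3 := by
                    apply le_trans (Finset.card_insert_le _ _)
                    apply Nat.succ_le_succ
                    apply le_trans (Finset.card_insert_le _ _)
                    simp
            rw [Finset.sum_const, nsmul_eq_mul]
            apply mul_le_mul_of_nonneg_right _ (by positivity)
            exact_mod_cast hcard
        _ = 3 / N^2 := by field_simp
    -- norm of f
    have hnorm : ‖f‖^2 = 1 / N := by
      have hinner : (inner ℂ f f : ℂ) = ((1 / N : ℝ) : ℂ) := by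
        have step1 : (inner ℂ f f : ℂ) = ∑ m ∈ T, ((c m * h m : ℝ) : ℂ) := by
          conv_lhs => rw [hfdef]
          rw [inner_sum]
          refine Finset.sum_congr rfl fun m _ => ?_
          rw [inner_smul_right, ← hfdef, hfm m, ← Complex.ofReal_mul]
        rw [step1, ← Complex.ofReal_sum]
        congr 1
        have hKT : K ∈ T := by simp only [hTdef, Finset.mem_Icc]; omega
        rw [Finset.sum_eq_single_of_mem K hKT]
        · -- value at K
          have hWK : Wf K K = K ∧ 2 * Wf K K - Wf K (K-1) - Wf K (K+1) = 2 := by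
            unfold Wf; omega
          rw [hh K]
          simp only [hcdef]
          rw [hWK.2, hWK.1]
          have h1 : s K * ((K:ℤ):ℝ) / (N:ℝ) * (s K * ((2:ℤ):ℝ) / (2 * (N:ℝ)))
              = (s K * s K) * (((K:ℤ):ℝ) / ((N:ℝ)^2)) := by
            push_cast; ring
          rw [h1, hssq K, one_mul, hKR]
          field_simp
        · intro m _ hmK
          have hL2 : Wf K m * (2 * Wf K m - Wf K (m-1) - Wf K (m+1)) = 0 := by
            rcases eq_or_ne m 0 with rfl | h0
            · have : Wf K 0 = 0 := by unfold Wf; omega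
              rw [this]; ring
            rcases eq_or_ne m (2*K) with rfl | h2
            · have : Wf K (2*K) = 0 := by unfold Wf; omega
              rw [this]; ring
            · have : 2 * Wf K m - Wf K (m-1) - Wf K (m+1) = 0 := by unfold Wf; omega
              rw [this]; ring
          rw [hh m]
          simp only [hcdef]
          have expand : s m * ((Wf K m : ℤ):ℝ) / N *
              (s m * ((2 * Wf K m - Wf K (m-1) - Wf K (m+1) : ℤ) : ℝ) / (2*N))
              = (s m * s m) * (((Wf K m * (2 * Wf K m - Wf K (m-1) - Wf K (m+1)) : ℤ)):ℝ)
                / (2 * N^2) := by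
            push_cast; ring
          rw [expand, hL2, hssq m]
          simp
      have hre : (inner ℂ f f : ℂ).re = ‖f‖^2 := @inner_self_eq_norm_sq ℂ _ _ _ _ f
      rw [hinner] at hre
      rw [← hre, Complex.ofReal_re]
    -- membership
    have hmem : f ∈ (Submodule.span ℂ (Set.range e)).topologicalClosure := by
      apply (Submodule.span ℂ (Set.range e)).le_topologicalClosure
      rw [hfdef]
      exact Submodule.sum_mem _ fun k _ =>
        Submodule.smul_mem _ _ (Submodule.subset_span ⟨k, rfl⟩)
    have hineq := (hfr f hmem).1
    rw [htsum, hnorm] at hineq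
    have hineq2 : A * (1/(N:ℝ)) ≤ 3 / N^2 := le_trans hineq hbound
    rw [le_div_iff₀ hNR]
    have := mul_le_mul_of_nonneg_right hineq2 (by positivity : (0:ℝ) ≤ N^2)
    have hl : A * (1/(N:ℝ)) * N^2 = A * N := by field_simp
    have hr : 3 / (N:ℝ)^2 * N^2 = 3 := by field_simp
    rw [hl, hr] at this
    exact this
  obtain ⟨N, hN⟩ := exists_nat_gt (3 / A)
  have h3A : 0 < 3 / A := by positivity
  have hN1 : 1 ≤ N := by
    by_contra hc
    push_neg at hc
    interval_cases N
    · simp at hN; linarith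
  have hNR : (0:ℝ) < N := by exact_mod_cast hN1
  have hlt : 3 / (N:ℝ) < A := by
    rw [div_lt_iff₀ hNR]
    rw [div_lt_iff₀ hA] at hN
    linarith
  linarith [key N hN1]

/-- For any `0 < b < a` there is `φ ∈ L²(ℝ)` such that `(τ_{na}φ)_{n∈ℤ}` is a frame
sequence but `(τ_{nb}φ)_{n∈ℤ}` is not. -/
theorem exists_frameSeq_large_step_not_small
    (a b : ℝ) (hb : 0 < b) (hba : b < a) :
    ∃ φ : Lp ℂ 2 (volume : Measure ℝ),
      IsFrameSeq (fun n : ℤ => tauL2 ((n : ℤ) * a) φ) ∧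
        ¬ IsFrameSeq (fun n : ℤ => tauL2 ((n : ℤ) * b) φ) := by
  have hd : 0 < min b (a - b) := lt_min hb (by linarith)
  have hdb : min b (a - b) ≤ b := min_le_left _ _
  have hbda : b + min b (a - b) ≤ a := by
    have := min_le_right b (a - b); linarith
  refine ⟨phi b (min b (a - b)), ?_, ?_⟩
  · exact ⟨1, 1, one_pos, one_pos, isFrameSeqWith_of_orthonormal (gram_a hd hdb hb hbda)⟩
  · exact not_frameSeq_of_gram (fun n m => gram_b hd hdb hb n m)
end

section
/- Let F : (0,∞) → (0,∞) be monotone decreasing with F ∈ L², and define G(x) = F(x)∫₀ˣ F(t)dt + ∫ₓ^∞ F(t)²dt. Then for ψ(x) = F(|x|) and any t > 0, (4/3)·G(3t) ≤ ∫_{-∞}^∞ ψ(x+t)ψ(x-t)dx ≤ 4·G(t). -/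
open MeasureTheory Complex
open scoped ENNReal Real

/-- `G(x) = F(x)∫₀ˣ F(t)dt + ∫ₓ^∞ F(t)²dt`. -/
noncomputable def Gfun (F : ℝ → ℝ) (x : ℝ) : ℝ :=
  F x * (∫ t in Set.Ioo (0:ℝ) x, F t) + ∫ t in Set.Ioi x, F t ^ 2

/-- `D_Λ(x) = sup_{t∈ℝ} |Λ ∩ [t, t+x]|` for a sequence `Λ = (λ n)` (extended count). -/
noncomputable def DLam (lam : ℕ → ℝ) (x : ℝ) : ℝ≥0∞ :=
  ⨆ t : ℝ, ((Set.range lam ∩ Set.Icc t (t + x)).encard : ℝ≥0∞)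

section CorrAux

open Set

lemma corr_emb_add (c : ℝ) : MeasurableEmbedding (fun x : ℝ => x + c) :=
  (Homeomorph.addRight c).measurableEmbedding

lemma corr_emb_sub (c : ℝ) : MeasurableEmbedding (fun x : ℝ => c - x) :=
  (Homeomorph.subLeft c).measurableEmbedding

lemma corr_mp_add (c : ℝ) : MeasurePreserving (fun x : ℝ => x + c) volume volume :=
  measurePreserving_add_right volume c

lemma corr_mp_sub (c : ℝ) : MeasurePreserving (fun x : ℝ => c - x) volume volume :=
  Measure.measurePreserving_sub_left volume c

lemma corr_aemeas_shift {F : ℝ → ℝ} (hm : AEMeasurable F (volume.restrict (Ioi 0)))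
    {e : ℝ → ℝ} (hmp : MeasurePreserving e volume volume) (hme : Measurable e)
    {s u : Set ℝ} (hu : MeasurableSet u) (hus : u ⊆ Ioi 0) (hpre : e ⁻¹' u = s) :
    AEMeasurable (fun x => F (e x)) (volume.restrict s) := by
  have h1 : Measure.map e (volume.restrict s) = volume.restrict u := by
    rw [← hpre, ← Measure.restrict_map hme hu, hmp.map_eq]
  have hq : Measure.QuasiMeasurePreserving e (volume.restrict s) (volume.restrict (Ioi 0)) := by
    refine ⟨hme, ?_⟩
    rw [h1]
    exact (Measure.restrict_mono hus le_rfl).absolutelyContinuous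
  exact hm.comp_quasiMeasurePreserving hq

lemma corr_aemeas_of {F : ℝ → ℝ} (hFpos : ∀ x > (0:ℝ), 0 < F x)
    (hFL2 : IntegrableOn (fun t => F t ^ 2) (Set.Ioi 0)) :
    AEMeasurable F (volume.restrict (Set.Ioi 0)) := by
  have h1 : AEMeasurable (fun t => F t ^ 2) (volume.restrict (Set.Ioi 0)) := hFL2.aemeasurable
  have h2 : AEMeasurable (fun t => Real.sqrt (F t ^ 2)) (volume.restrict (Set.Ioi 0)) :=
    Real.continuous_sqrt.measurable.comp_aemeasurable h1
  refine h2.congr ?_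
  filter_upwards [ae_restrict_mem measurableSet_Ioi] with x hx
  exact Real.sqrt_sq (hFpos x hx).le

lemma corr_intOn_Ioo {F : ℝ → ℝ}
    (hm : AEMeasurable F (volume.restrict (Ioi 0)))
    (hFL2 : IntegrableOn (fun t => F t ^ 2) (Ioi 0)) (a : ℝ) :
    IntegrableOn F (Ioo 0 a) := by
  have hL2 : MemLp F 2 (volume.restrict (Ioi 0)) :=
    (memLp_two_iff_integrable_sq hm.aestronglyMeasurable).2 hFL2
  have hL2' : MemLp F 2 (volume.restrict (Ioo 0 a)) :=
    hL2.mono_measure (Measure.restrict_mono Ioo_subset_Ioi_self le_rfl)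
  haveI : IsFiniteMeasure (volume.restrict (Ioo 0 a)) := by
    constructor
    rw [Measure.restrict_apply_univ]
    exact measure_Ioo_lt_top
  exact hL2'.integrable one_le_two

end CorrAux

/-- For `F` positive decreasing and square-integrable on `(0,∞)`, `ψ(x) = F(|x|)` and
`t > 0`: `(4/3)G(3t) ≤ ∫ ψ(x+t)ψ(x-t)dx ≤ 4G(t)`. -/
theorem correlation_bounds
    (F : ℝ → ℝ) (hFpos : ∀ x > (0:ℝ), 0 < F x)
    (hFdec : AntitoneOn F (Set.Ioi 0))
    (hFL2 : IntegrableOn (fun t => F t ^ 2) (Set.Ioi 0))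
    (t : ℝ) (ht : 0 < t) :
    (4 / 3) * Gfun F (3 * t) ≤ ∫ x : ℝ, F |x + t| * F |x - t| ∧
      ∫ x : ℝ, F |x + t| * F |x - t| ≤ 4 * Gfun F t := by
  have hm : AEMeasurable F (volume.restrict (Set.Ioi 0)) := corr_aemeas_of hFpos hFL2
  have h2t : (0:ℝ) < 2*t := by linarith
  have h3t : (0:ℝ) < 3*t := by linarith
  have hmF : ∀ s : Set ℝ, s ⊆ Set.Ioi 0 → AEMeasurable F (volume.restrict s) :=
    fun s hs => hm.mono_measure (Measure.restrict_mono hs le_rfl)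
  have hmAdd : ∀ c a : ℝ, 0 ≤ a + c →
      AEMeasurable (fun x => F (x + c)) (volume.restrict (Set.Ioi a)) := by
    intro c a ha
    refine corr_aemeas_shift hm (corr_mp_add c) (measurable_add_const c)
      (u := Set.Ioi (a + c)) measurableSet_Ioi (Set.Ioi_subset_Ioi ha) ?_
    rw [Set.preimage_add_const_Ioi]
    simp
  have hmSub : ∀ c : ℝ, AEMeasurable (fun x => F (c - x)) (volume.restrict (Set.Iio c)) := by
    intro c
    refine corr_aemeas_shift hm (corr_mp_sub c) (measurable_id.const_sub c)
      (u := Set.Ioi 0) measurableSet_Ioi subset_rfl ?_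
    rw [Set.preimage_const_sub_Ioi]
    simp
  have hIntIoo : ∀ a : ℝ, IntegrableOn F (Set.Ioo 0 a) := corr_intOn_Ioo hm hFL2
  have hIntIoc : ∀ a : ℝ, IntegrableOn F (Set.Ioc 0 a) :=
    fun a => (hIntIoo a).congr_set_ae Ioo_ae_eq_Ioc.symm
  have hIntIoc' : ∀ a b : ℝ, 0 ≤ a → IntegrableOn F (Set.Ioc a b) :=
    fun a b ha => (hIntIoc b).mono_set (Set.Ioc_subset_Ioc_left ha)
  -- measurability of the product integrands
  have mAdd2t : AEMeasurable (fun s => F (s + 2*t)) (volume.restrict (Set.Ioi 0)) :=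
    hmAdd (2*t) 0 (by linarith)
  have mB : AEStronglyMeasurable (fun s => F (s + 2*t) * F s) (volume.restrict (Set.Ioi 0)) :=
    (mAdd2t.mul hm).aestronglyMeasurable
  have mBsub : ∀ s0 : Set ℝ, s0 ⊆ Set.Ioi 0 →
      AEStronglyMeasurable (fun s => F (s + 2*t) * F s) (volume.restrict s0) :=
    fun s0 hs0 => mB.mono_measure (Measure.restrict_mono hs0 le_rfl)
  have mA : AEStronglyMeasurable (fun s => F (2*t - s) * F s) (volume.restrict (Set.Ioo 0 t)) := by
    have m1 : AEMeasurable (fun s => F (2*t - s)) (volume.restrict (Set.Ioo 0 t)) :=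
      (hmSub (2*t)).mono_measure (Measure.restrict_mono
        (Set.Ioo_subset_Iio_self.trans (Set.Iio_subset_Iio (by linarith))) (le_refl volume))
    have m2 : AEMeasurable F (volume.restrict (Set.Ioo 0 t)) := hmF _ Set.Ioo_subset_Ioi_self
    exact (m1.mul m2).aestronglyMeasurable
  -- integrability of the product integrands
  have intA : IntegrableOn (fun s => F (2*t - s) * F s) (Set.Ioo 0 t) := by
    refine Integrable.mono ((hIntIoo t).const_mul (F t)) mA ?_
    filter_upwards [ae_restrict_mem measurableSet_Ioo] with s hs
    have h1 : 0 < F s := hFpos s hs.1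
    have h2 : 0 < F (2*t - s) := hFpos _ (by simp only [Set.mem_Ioo] at hs; linarith [hs.2])
    have h3 : F (2*t - s) ≤ F t :=
      hFdec (Set.mem_Ioi.mpr ht) (Set.mem_Ioi.mpr (by linarith [hs.2])) (by linarith [hs.2])
    rw [Real.norm_eq_abs, Real.norm_eq_abs, _root_.abs_of_pos (mul_pos h2 h1),
      _root_.abs_of_pos (mul_pos (hFpos t ht) h1)]
    exact mul_le_mul_of_nonneg_right h3 h1.le
  have intB1 : IntegrableOn (fun s => F (s + 2*t) * F s) (Set.Ioo 0 t) := by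
    refine Integrable.mono ((hIntIoo t).const_mul (F t)) (mBsub _ Set.Ioo_subset_Ioi_self) ?_
    filter_upwards [ae_restrict_mem measurableSet_Ioo] with s hs
    have h1 : 0 < F s := hFpos s hs.1
    have h2 : 0 < F (s + 2*t) := hFpos _ (by linarith [hs.1])
    have h3 : F (s + 2*t) ≤ F t :=
      hFdec (Set.mem_Ioi.mpr ht) (Set.mem_Ioi.mpr (by linarith [hs.1])) (by linarith [hs.1])
    rw [Real.norm_eq_abs, Real.norm_eq_abs, _root_.abs_of_pos (mul_pos h2 h1),
      _root_.abs_of_pos (mul_pos (hFpos t ht) h1)]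
    exact mul_le_mul_of_nonneg_right h3 h1.le
  have intB1c : IntegrableOn (fun s => F (s + 2*t) * F s) (Set.Ioc 0 t) :=
    intB1.congr_set_ae Ioo_ae_eq_Ioc.symm
  have intB2 : IntegrableOn (fun s => F (s + 2*t) * F s) (Set.Ioi t) := by
    refine Integrable.mono (hFL2.mono_set (Set.Ioi_subset_Ioi ht.le))
      (mBsub _ (Set.Ioi_subset_Ioi ht.le)) ?_
    filter_upwards [ae_restrict_mem measurableSet_Ioi] with s hs
    have hs0 : (0:ℝ) < s := lt_trans ht hs
    have h1 : 0 < F s := hFpos s hs0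
    have h2 : 0 < F (s + 2*t) := hFpos _ (by linarith)
    have h3 : F (s + 2*t) ≤ F s :=
      hFdec (Set.mem_Ioi.mpr hs0) (Set.mem_Ioi.mpr (by linarith)) (by linarith)
    rw [Real.norm_eq_abs, Real.norm_eq_abs, _root_.abs_of_pos (mul_pos h2 h1),
      _root_.abs_of_pos (by positivity)]
    calc F (s + 2*t) * F s ≤ F s * F s := mul_le_mul_of_nonneg_right h3 h1.le
    _ = F s ^ 2 := (sq (F s)).symm
  have intB : IntegrableOn (fun s => F (s + 2*t) * F s) (Set.Ioi 0) := by
    have h := intB1c.union intB2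
    rwa [Set.Ioc_union_Ioi_eq_Ioi ht.le] at h
  have intsq : IntegrableOn (fun s => F (s + 2*t) ^ 2) (Set.Ioi t) := by
    have h := ((corr_mp_add (2*t)).integrableOn_comp_preimage (corr_emb_add (2*t))
      (f := fun u => F u ^ 2) (s := Set.Ioi (3*t))).2 (hFL2.mono_set (Set.Ioi_subset_Ioi h3t.le))
    rw [Set.preimage_add_const_Ioi, show 3*t - 2*t = t by ring] at h
    exact h
  -- change of variables
  have hA : (∫ x in Set.Ioo 0 t, F (x + t) * F (t - x)) = ∫ s in Set.Ioo 0 t, F (2*t - s) * F s := by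
    have h := (corr_mp_sub t).setIntegral_preimage_emb (corr_emb_sub t)
      (fun s => F (2*t - s) * F s) (Set.Ioo 0 t)
    rw [Set.preimage_const_sub_Ioo, sub_self, sub_zero] at h
    rw [← h]
    refine setIntegral_congr_fun measurableSet_Ioo fun x hx => ?_
    rw [show 2*t - (t - x) = x + t by ring]
  have hB : (∫ x in Set.Ioi t, F (x + t) * F (x - t)) = ∫ s in Set.Ioi 0, F (s + 2*t) * F s := by
    have h := (corr_mp_add t).setIntegral_preimage_emb (corr_emb_add t)
      (fun x => F (x + t) * F (x - t)) (Set.Ioi t)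
    rw [Set.preimage_add_const_Ioi, sub_self] at h
    rw [← h]
    refine setIntegral_congr_fun measurableSet_Ioi fun s hs => ?_
    rw [show s + t + t = s + 2*t by ring, show s + t - t = s by ring]
  have hsq : (∫ s in Set.Ioi t, F (s + 2*t) ^ 2) = ∫ u in Set.Ioi (3*t), F u ^ 2 := by
    have h := (corr_mp_add (2*t)).setIntegral_preimage_emb (corr_emb_add (2*t))
      (fun u => F u ^ 2) (Set.Ioi (3*t))
    rw [Set.preimage_add_const_Ioi, show 3*t - 2*t = t by ring] at h
    exact h
  -- integrability of the two pieces of the main split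
  have hi1 : IntegrableOn (fun x => F (x + t) * F |x - t|) (Set.Ioc 0 t) := by
    have intsubF : IntegrableOn (fun x => F (t - x)) (Set.Ioo 0 t) := by
      have h := ((corr_mp_sub t).integrableOn_comp_preimage (corr_emb_sub t)
        (f := F) (s := Set.Ioo 0 t)).2 (hIntIoo t)
      rw [Set.preimage_const_sub_Ioo, sub_self, sub_zero] at h
      exact h
    have meas : AEStronglyMeasurable (fun x => F (x + t) * F (t - x))
        (volume.restrict (Set.Ioo 0 t)) := by
      have m1 : AEMeasurable (fun x => F (x + t)) (volume.restrict (Set.Ioo 0 t)) :=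
        (hmAdd t 0 (by linarith)).mono_measure
          (Measure.restrict_mono Set.Ioo_subset_Ioi_self le_rfl)
      have m2 : AEMeasurable (fun x => F (t - x)) (volume.restrict (Set.Ioo 0 t)) :=
        (hmSub t).mono_measure (Measure.restrict_mono Set.Ioo_subset_Iio_self (le_refl volume))
      exact (m1.mul m2).aestronglyMeasurable
    have base : IntegrableOn (fun x => F (x + t) * F (t - x)) (Set.Ioo 0 t) := by
      refine Integrable.mono (intsubF.const_mul (F t)) meas ?_
      filter_upwards [ae_restrict_mem measurableSet_Ioo] with x hx
      have h1 : 0 < F (t - x) := hFpos _ (by simp only [Set.mem_Ioo] at hx; linarith [hx.2])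
      have h2 : 0 < F (x + t) := hFpos _ (by linarith [hx.1])
      have h3 : F (x + t) ≤ F t :=
        hFdec (Set.mem_Ioi.mpr ht) (Set.mem_Ioi.mpr (by linarith [hx.1])) (by linarith [hx.1])
      rw [Real.norm_eq_abs, Real.norm_eq_abs, _root_.abs_of_pos (mul_pos h2 h1),
        _root_.abs_of_pos (mul_pos (hFpos t ht) h1)]
      exact mul_le_mul_of_nonneg_right h3 h1.le
    have baseIoc : IntegrableOn (fun x => F (x + t) * F (t - x)) (Set.Ioc 0 t) :=
      base.congr_set_ae Ioo_ae_eq_Ioc.symm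
    refine baseIoc.congr_fun ?_ measurableSet_Ioc
    intro x hx
    have e : |x - t| = t - x := by
      rw [_root_.abs_of_nonpos (by linarith [hx.2] : x - t ≤ 0), neg_sub]
    dsimp only
    rw [e]
  have hi2 : IntegrableOn (fun x => F (x + t) * F |x - t|) (Set.Ioi t) := by
    have base : IntegrableOn (fun x => F (x + t) * F (x - t)) (Set.Ioi t) := by
      refine ((corr_mp_add t).integrableOn_comp_preimage (corr_emb_add t)
        (f := fun x => F (x + t) * F (x - t)) (s := Set.Ioi t)).1 ?_
      rw [Set.preimage_add_const_Ioi, sub_self]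
      have e : ((fun x => F (x + t) * F (x - t)) ∘ fun x => x + t)
          = fun s => F (s + 2*t) * F s := by
        funext s
        simp only [Function.comp]
        rw [show s + t + t = s + 2*t by ring, show s + t - t = s by ring]
      rw [e]
      exact intB
    refine base.congr_fun ?_ measurableSet_Ioi
    intro x hx
    dsimp only
    rw [_root_.abs_of_pos (by linarith [Set.mem_Ioi.mp hx] : (0:ℝ) < x - t)]
  -- main identity
  set J := ∫ x : ℝ, F |x + t| * F |x - t| with hJdef
  have hJ2 : J = 2 * ∫ x in Set.Ioi 0, F (x + t) * F |x - t| := by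
    have h0 : (fun x : ℝ => F |x + t| * F |x - t|)
        = fun x => (fun u => F (u + t) * F |u - t|) |x| := by
      funext x
      dsimp only
      rcases le_or_gt 0 x with hx | hx
      · rw [_root_.abs_of_nonneg hx, _root_.abs_of_nonneg (by linarith : (0:ℝ) ≤ x + t)]
      · rw [_root_.abs_of_neg hx]
        have e1 : |x - t| = t - x := by rw [_root_.abs_of_nonpos (by linarith), neg_sub]
        have e2 : |-x - t| = |x + t| := by rw [show -x - t = -(x + t) by ring, _root_.abs_neg]
        rw [e1, e2, show -x + t = t - x by ring]
        ring
    rw [hJdef, h0]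
    exact integral_comp_abs (f := fun u => F (u + t) * F |u - t|)
  have hsplit : (∫ x in Set.Ioi 0, F (x + t) * F |x - t|)
      = (∫ x in Set.Ioc 0 t, F (x + t) * F |x - t|)
        + ∫ x in Set.Ioi t, F (x + t) * F |x - t| := by
    rw [← setIntegral_union (Set.Ioc_disjoint_Ioi le_rfl) measurableSet_Ioi hi1 hi2,
      Set.Ioc_union_Ioi_eq_Ioi ht.le]
  have hpiece1 : (∫ x in Set.Ioc 0 t, F (x + t) * F |x - t|)
      = ∫ s in Set.Ioo 0 t, F (2*t - s) * F s := by
    rw [integral_Ioc_eq_integral_Ioo, ← hA]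
    refine setIntegral_congr_fun measurableSet_Ioo fun x hx => ?_
    rw [show |x - t| = t - x from by rw [_root_.abs_of_nonpos (by linarith [hx.2] : x - t ≤ 0), neg_sub]]
  have hpiece2 : (∫ x in Set.Ioi t, F (x + t) * F |x - t|)
      = ∫ s in Set.Ioi 0, F (s + 2*t) * F s := by
    rw [← hB]
    refine setIntegral_congr_fun measurableSet_Ioi fun x hx => ?_
    rw [_root_.abs_of_pos (by linarith [Set.mem_Ioi.mp hx] : (0:ℝ) < x - t)]
  have hBsplit : (∫ s in Set.Ioi 0, F (s + 2*t) * F s)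
      = (∫ s in Set.Ioo 0 t, F (s + 2*t) * F s) + ∫ s in Set.Ioi t, F (s + 2*t) * F s := by
    rw [← Set.Ioc_union_Ioi_eq_Ioi ht.le,
      setIntegral_union (Set.Ioc_disjoint_Ioi le_rfl) measurableSet_Ioi intB1c intB2,
      integral_Ioc_eq_integral_Ioo]
  have hJ : J = 2 * ((∫ s in Set.Ioo 0 t, F (2*t - s) * F s)
      + ((∫ s in Set.Ioo 0 t, F (s + 2*t) * F s) + ∫ s in Set.Ioi t, F (s + 2*t) * F s)) := by
    rw [hJ2, hsplit, hpiece1, hpiece2, hBsplit]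
  -- basic positivity
  have hIF_nonneg : ∀ a : ℝ, 0 ≤ ∫ s in Set.Ioo 0 a, F s :=
    fun a => setIntegral_nonneg measurableSet_Ioo fun x hx => (hFpos x hx.1).le
  have hQt_nonneg : (0:ℝ) ≤ ∫ s in Set.Ioi t, F s ^ 2 :=
    setIntegral_nonneg measurableSet_Ioi fun x _ => sq_nonneg _
  have hQ3_nonneg : (0:ℝ) ≤ ∫ s in Set.Ioi (3*t), F s ^ 2 :=
    setIntegral_nonneg measurableSet_Ioi fun x _ => sq_nonneg _
  -- comparisons
  have hAle : (∫ s in Set.Ioo 0 t, F (2*t - s) * F s) ≤ F t * ∫ s in Set.Ioo 0 t, F s := by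
    rw [← integral_const_mul]
    refine setIntegral_mono_on intA ((hIntIoo t).const_mul (F t)) measurableSet_Ioo fun s hs => ?_
    exact mul_le_mul_of_nonneg_right
      (hFdec (Set.mem_Ioi.mpr ht) (Set.mem_Ioi.mpr (by linarith [hs.2])) (by linarith [hs.2]))
      (hFpos s hs.1).le
  have hB1le : (∫ s in Set.Ioo 0 t, F (s + 2*t) * F s) ≤ F t * ∫ s in Set.Ioo 0 t, F s := by
    rw [← integral_const_mul]
    refine setIntegral_mono_on intB1 ((hIntIoo t).const_mul (F t)) measurableSet_Ioo fun s hs => ?_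
    exact mul_le_mul_of_nonneg_right
      (hFdec (Set.mem_Ioi.mpr ht) (Set.mem_Ioi.mpr (by linarith [hs.1])) (by linarith [hs.1]))
      (hFpos s hs.1).le
  have hB2le : (∫ s in Set.Ioi t, F (s + 2*t) * F s) ≤ ∫ s in Set.Ioi t, F s ^ 2 := by
    refine setIntegral_mono_on intB2 (hFL2.mono_set (Set.Ioi_subset_Ioi ht.le))
      measurableSet_Ioi fun s hs => ?_
    have hs0 : (0:ℝ) < s := lt_trans ht hs
    calc F (s + 2*t) * F s
        ≤ F s * F s := mul_le_mul_of_nonneg_right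
          (hFdec (Set.mem_Ioi.mpr hs0) (Set.mem_Ioi.mpr (by linarith)) (by linarith))
          (hFpos s hs0).le
      _ = F s ^ 2 := (sq (F s)).symm
  have hAge : F (3*t) * (∫ s in Set.Ioo 0 t, F s) ≤ ∫ s in Set.Ioo 0 t, F (2*t - s) * F s := by
    rw [← integral_const_mul]
    refine setIntegral_mono_on ((hIntIoo t).const_mul (F (3*t))) intA measurableSet_Ioo
      fun s hs => ?_
    exact mul_le_mul_of_nonneg_right
      (hFdec (Set.mem_Ioi.mpr (by linarith [hs.2] : (0:ℝ) < 2*t - s)) (Set.mem_Ioi.mpr h3t)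
        (by linarith [hs.1]))
      (hFpos s hs.1).le
  have hB1ge : F (3*t) * (∫ s in Set.Ioo 0 t, F s) ≤ ∫ s in Set.Ioo 0 t, F (s + 2*t) * F s := by
    rw [← integral_const_mul]
    refine setIntegral_mono_on ((hIntIoo t).const_mul (F (3*t))) intB1 measurableSet_Ioo
      fun s hs => ?_
    exact mul_le_mul_of_nonneg_right
      (hFdec (Set.mem_Ioi.mpr (by linarith [hs.1] : (0:ℝ) < s + 2*t)) (Set.mem_Ioi.mpr h3t)
        (by linarith [hs.2]))
      (hFpos s hs.1).le
  have hB2ge : (∫ s in Set.Ioi t, F (s + 2*t) ^ 2) ≤ ∫ s in Set.Ioi t, F (s + 2*t) * F s := by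
    refine setIntegral_mono_on intsq intB2 measurableSet_Ioi fun s hs => ?_
    have hs0 : (0:ℝ) < s := lt_trans ht hs
    have h1 : F (s + 2*t) ≤ F s :=
      hFdec (Set.mem_Ioi.mpr hs0) (Set.mem_Ioi.mpr (by linarith)) (by linarith)
    have h2 : 0 < F (s + 2*t) := hFpos _ (by linarith)
    calc F (s + 2*t) ^ 2 = F (s + 2*t) * F (s + 2*t) := sq _
      _ ≤ F (s + 2*t) * F s := mul_le_mul_of_nonneg_left h1 h2.le
  -- ∫₀^{3t} F ≤ 3 ∫₀^t F
  have hIF3 : (∫ s in Set.Ioo 0 (3*t), F s) ≤ 3 * ∫ s in Set.Ioo 0 t, F s := by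
    have k1 : (∫ s in Set.Ioc t (2*t), F s) ≤ ∫ s in Set.Ioc 0 t, F s := by
      have h := (corr_mp_add t).setIntegral_preimage_emb (corr_emb_add t) F (Set.Ioc t (2*t))
      rw [Set.preimage_add_const_Ioc, sub_self, show 2*t - t = t by ring] at h
      rw [← h]
      have intshift : IntegrableOn (fun s => F (s + t)) (Set.Ioc 0 t) := by
        have h2 := ((corr_mp_add t).integrableOn_comp_preimage (corr_emb_add t)
          (f := F) (s := Set.Ioc t (2*t))).2 (hIntIoc' t (2*t) ht.le)
        rw [Set.preimage_add_const_Ioc, sub_self, show 2*t - t = t by ring] at h2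
        exact h2
      refine setIntegral_mono_on intshift (hIntIoc t) measurableSet_Ioc fun s hs => ?_
      exact hFdec (Set.mem_Ioi.mpr hs.1) (Set.mem_Ioi.mpr (by linarith [hs.1])) (by linarith)
    have k2 : (∫ s in Set.Ioc (2*t) (3*t), F s) ≤ ∫ s in Set.Ioc 0 t, F s := by
      have h := (corr_mp_add (2*t)).setIntegral_preimage_emb (corr_emb_add (2*t)) F
        (Set.Ioc (2*t) (3*t))
      rw [Set.preimage_add_const_Ioc, sub_self, show 3*t - 2*t = t by ring] at h
      rw [← h]
      have intshift : IntegrableOn (fun s => F (s + 2*t)) (Set.Ioc 0 t) := by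
        have h2 := ((corr_mp_add (2*t)).integrableOn_comp_preimage (corr_emb_add (2*t))
          (f := F) (s := Set.Ioc (2*t) (3*t))).2 (hIntIoc' (2*t) (3*t) h2t.le)
        rw [Set.preimage_add_const_Ioc, sub_self, show 3*t - 2*t = t by ring] at h2
        exact h2
      refine setIntegral_mono_on intshift (hIntIoc t) measurableSet_Ioc fun s hs => ?_
      exact hFdec (Set.mem_Ioi.mpr hs.1) (Set.mem_Ioi.mpr (by linarith [hs.1])) (by linarith)
    have hsplit3 : (∫ s in Set.Ioc 0 (3*t), F s)
        = (∫ s in Set.Ioc 0 t, F s)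
          + ((∫ s in Set.Ioc t (2*t), F s) + ∫ s in Set.Ioc (2*t) (3*t), F s) := by
      rw [← Set.Ioc_union_Ioc_eq_Ioc ht.le (by linarith : t ≤ 3*t),
        setIntegral_union (Set.Ioc_disjoint_Ioc_of_le le_rfl) measurableSet_Ioc (hIntIoc t)
          (hIntIoc' t (3*t) ht.le),
        ← Set.Ioc_union_Ioc_eq_Ioc (by linarith : t ≤ 2*t) (by linarith : 2*t ≤ 3*t),
        setIntegral_union (Set.Ioc_disjoint_Ioc_of_le le_rfl) measurableSet_Ioc (hIntIoc' t (2*t) ht.le)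
          (hIntIoc' (2*t) (3*t) h2t.le)]
    calc (∫ s in Set.Ioo 0 (3*t), F s) = ∫ s in Set.Ioc 0 (3*t), F s :=
          (integral_Ioc_eq_integral_Ioo).symm
      _ = _ := hsplit3
      _ ≤ (∫ s in Set.Ioc 0 t, F s)
          + ((∫ s in Set.Ioc 0 t, F s) + ∫ s in Set.Ioc 0 t, F s) := by
          exact add_le_add le_rfl (add_le_add k1 k2)
      _ = 3 * ∫ s in Set.Ioc 0 t, F s := by ring
      _ = 3 * ∫ s in Set.Ioo 0 t, F s := by rw [integral_Ioc_eq_integral_Ioo]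
  -- conclusion
  have hF3t : 0 < F (3*t) := hFpos _ h3t
  have hQ3le : (∫ u in Set.Ioi (3*t), F u ^ 2) ≤ ∫ s in Set.Ioi t, F (s + 2*t) * F s := by
    rw [← hsq]; exact hB2ge
  constructor
  · rw [hJ]
    show (4/3) * Gfun F (3*t) ≤ _
    unfold Gfun
    have c1 : F (3*t) * (∫ s in Set.Ioo 0 (3*t), F s)
        ≤ 3 * (F (3*t) * ∫ s in Set.Ioo 0 t, F s) := by
      calc F (3*t) * (∫ s in Set.Ioo 0 (3*t), F s)
          ≤ F (3*t) * (3 * ∫ s in Set.Ioo 0 t, F s) := mul_le_mul_of_nonneg_left hIF3 hF3t.le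
        _ = 3 * (F (3*t) * ∫ s in Set.Ioo 0 t, F s) := by ring
    linarith [hAge, hB1ge, hQ3le, hQ3_nonneg,
      mul_nonneg hF3t.le (hIF_nonneg t)]
  · rw [hJ]
    show _ ≤ 4 * Gfun F t
    unfold Gfun
    linarith [hAle, hB1le, hB2le, hQt_nonneg]
end

section
/- Let F : (0,∞) → (0,∞) be monotone decreasing with F ∈ L², G(x) = F(x)∫₀ˣ F(t)dt + ∫ₓ^∞ F(t)²dt, and let Λ = (λ_n) be a countable subset of ℝ. If φ ∈ L²(ℝ) satisfies |φ(x)| ≤ F(|x|) for |x| ≥ X (some X), and ∫₁^∞ G(x) D_Λ(x) dx/x < ∞, then (τ_{λ_n}φ) has an upper frame bound, i.e., there is B with Σ_n |⟨f, τ_{λ_n}φ⟩|² ≤ B‖f‖² for all f ∈ L²(ℝ). -/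
open MeasureTheory Complex Set
open scoped ENNReal Real

lemma setlint_mono_pt {S : Set ℝ} (hS : MeasurableSet S) {f g : ℝ → ℝ≥0∞}
    (h : ∀ x ∈ S, f x ≤ g x) : ∫⁻ x in S, f x ≤ ∫⁻ x in S, g x := by
  rw [← lintegral_indicator hS, ← lintegral_indicator hS]
  refine lintegral_mono fun x => ?_
  by_cases hx : x ∈ S <;> simp [Set.indicator, hx]
  exact h x hx

lemma lint_shift (c : ℝ) (f : ℝ → ℝ≥0∞) : ∫⁻ x : ℝ, f (x - c) = ∫⁻ x : ℝ, f x := by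
  have h := (MeasurableEquiv.subRight (c : ℝ)).measurableEmbedding.lintegral_map (μ := volume) f
  have hmap : Measure.map (⇑(MeasurableEquiv.subRight (c:ℝ))) volume = volume :=
    (measurePreserving_sub_right volume c).map_eq
  rw [hmap] at h
  exact h.symm

lemma lint_neg (f : ℝ → ℝ≥0∞) : ∫⁻ x : ℝ, f (-x) = ∫⁻ x : ℝ, f x := by
  have h := (MeasurableEquiv.neg ℝ).measurableEmbedding.lintegral_map (μ := volume) f
  have hmap : Measure.map (⇑(MeasurableEquiv.neg ℝ)) volume = volume :=
    Measure.map_neg_eq_self (volume : Measure ℝ)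
  rw [hmap] at h
  exact h.symm

noncomputable def KeFun (F : ℝ → ℝ) (x : ℝ) : ℝ≥0∞ :=
  ENNReal.ofReal (F x) * (∫⁻ t in Set.Ioo (0:ℝ) x, ENNReal.ofReal (F t)) +
  ∫⁻ t in Set.Ioi x, ENNReal.ofReal (F t) ^ 2

noncomputable def CorrFun (φ : ℝ → ℂ) (s : ℝ) : ℝ≥0∞ :=
  ∫⁻ x : ℝ, (‖φ x‖₊ : ℝ≥0∞) * (‖φ (x - s)‖₊ : ℝ≥0∞)

lemma enn_le_sq_add_one (a : ℝ≥0∞) : a ≤ a^2 + 1 := by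
  rcases le_total a 1 with h | h
  · exact h.trans (le_add_self)
  · exact le_add_right (by simpa [sq] using mul_le_mul_left h a)


lemma enn_mul_le_sq_add_sq (a b : ℝ≥0∞) : a * b ≤ a^2 + b^2 := by
  rcases le_total a b with h | h
  · exact le_add_left (by simpa [sq] using mul_le_mul_left h b)
  · exact le_add_right (by simpa [sq] using mul_le_mul_right h a)


lemma DLam_mono (lam : ℕ → ℝ) : Monotone (DLam lam) := by
  intro x y hxy
  exact iSup_mono fun t => by
    exact_mod_cast Set.encard_le_encard (Set.inter_subset_inter_right _
      (Set.Icc_subset_Icc le_rfl (by linarith)))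


lemma DLam_subadd (lam : ℕ → ℝ) (x y : ℝ) : DLam lam (x + y) ≤ DLam lam x + DLam lam y := by
  refine iSup_le fun t => ?_
  have hsub : Set.range lam ∩ Set.Icc t (t + (x + y)) ⊆
      (Set.range lam ∩ Set.Icc t (t + x)) ∪ (Set.range lam ∩ Set.Icc (t + x) ((t + x) + y)) := by
    rintro a ⟨ha, h1, h2⟩
    rcases le_total a (t + x) with h | h
    · exact Or.inl ⟨ha, h1, h⟩
    · exact Or.inr ⟨ha, h, by linarith⟩
  calc ((Set.range lam ∩ Set.Icc t (t + (x + y))).encard : ℝ≥0∞)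
      ≤ (((Set.range lam ∩ Set.Icc t (t + x)) ∪
          (Set.range lam ∩ Set.Icc (t + x) ((t + x) + y))).encard : ℝ≥0∞) := by
        exact_mod_cast Set.encard_le_encard hsub
    _ ≤ ((Set.range lam ∩ Set.Icc t (t + x)).encard : ℝ≥0∞) +
        ((Set.range lam ∩ Set.Icc (t + x) ((t + x) + y)).encard : ℝ≥0∞) := by
        exact_mod_cast Set.encard_union_le _ _
    _ ≤ DLam lam x + DLam lam y := by
        gcongr
        · exact le_iSup (fun t => ((Set.range lam ∩ Set.Icc t (t + x)).encard : ℝ≥0∞)) t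
        · exact le_iSup (fun u => ((Set.range lam ∩ Set.Icc u (u + y)).encard : ℝ≥0∞)) (t + x)


lemma DLam_smul8 (lam : ℕ → ℝ) (x : ℝ) : DLam lam (8 * x) ≤ 8 * DLam lam x := by
  have h2 : ∀ z : ℝ, DLam lam (2 * z) ≤ 2 * DLam lam z := fun z => by
    have := DLam_subadd lam z z
    rw [two_mul, two_mul]; exact this
  calc DLam lam (8 * x) = DLam lam (2 * (2 * (2 * x))) := by ring_nf
    _ ≤ 2 * DLam lam (2 * (2 * x)) := h2 _
    _ ≤ 2 * (2 * DLam lam (2 * x)) := by gcongr; exact h2 _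
    _ ≤ 2 * (2 * (2 * DLam lam x)) := by gcongr; exact h2 _
    _ = 8 * DLam lam x := by ring


lemma card_le_DLam (lam : ℕ → ℝ) (hinj : Function.Injective lam) (s : Finset ℕ)
    (a x : ℝ) (h : ∀ n ∈ s, lam n ∈ Set.Icc a (a + x)) :
    (s.card : ℝ≥0∞) ≤ DLam lam x := by
  have himg : ((s.image lam : Finset ℝ) : Set ℝ) ⊆ Set.range lam ∩ Set.Icc a (a + x) := by
    intro y hy
    simp only [Finset.coe_image, Set.mem_image, Finset.mem_coe] at hy
    obtain ⟨n, hn, rfl⟩ := hy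
    exact ⟨Set.mem_range_self n, h n hn⟩
  have hcard : (s.image lam).card = s.card := Finset.card_image_of_injective s hinj
  calc (s.card : ℝ≥0∞) = (((s.image lam : Finset ℝ) : Set ℝ).encard : ℝ≥0∞) := by
        rw [Set.encard_coe_eq_coe_finsetCard, hcard]; rfl
    _ ≤ ((Set.range lam ∩ Set.Icc a (a + x)).encard : ℝ≥0∞) := by
        exact_mod_cast Set.encard_le_encard himg
    _ ≤ DLam lam x := le_iSup (fun t => ((Set.range lam ∩ Set.Icc t (t + x)).encard : ℝ≥0∞)) a

lemma bessel_finset {E : Type*} [NormedAddCommGroup E] [InnerProductSpace ℂ E]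
    (g : ℕ → E) (B : ℝ) (hB : 0 ≤ B) (t : Finset ℕ)
    (hrow : ∀ m ∈ t, ∑ n ∈ t, ‖(inner ℂ (g m) (g n) : ℂ)‖ ≤ B) (f : E) :
    ∑ n ∈ t, ‖(inner ℂ f (g n) : ℂ)‖ ^ 2 ≤ B * ‖f‖ ^ 2 := by
  classical
  set a : ℕ → ℂ := fun n => (inner ℂ f (g n) : ℂ) with ha
  set w : ℕ → ℂ := fun n => starRingEnd ℂ (a n) with hw
  set u : E := ∑ n ∈ t, w n • g n with hu
  set S : ℝ := ∑ n ∈ t, ‖a n‖ ^ 2 with hS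
  have hS0 : 0 ≤ S := Finset.sum_nonneg fun n _ => sq_nonneg _
  show S ≤ B * ‖f‖ ^ 2
  have hfu : (inner ℂ f u : ℂ) = (S : ℂ) := by
    rw [hu, inner_sum]
    have : ∀ n ∈ t, (inner ℂ f (w n • g n) : ℂ) = (‖a n‖ ^ 2 : ℝ) := by
      intro n _
      rw [inner_smul_right]
      simp only [hw, ha]
      rw [mul_comm, Complex.mul_conj]
      norm_cast
      exact Complex.normSq_eq_norm_sq _
    rw [Finset.sum_congr rfl this]
    push_cast [hS]
    norm_num
  have hSfu : S ≤ ‖f‖ * ‖u‖ := by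
    have : S = ‖(inner ℂ f u : ℂ)‖ := by
      rw [hfu, Complex.norm_real, Real.norm_eq_abs, _root_.abs_of_nonneg hS0]
    rw [this]; exact norm_inner_le_norm f u
  have hu2 : ‖u‖ ^ 2 ≤ B * S := by
    have huu : (‖u‖ : ℝ) ^ 2 = RCLike.re (inner ℂ u u : ℂ) := (inner_self_eq_norm_sq u).symm
    have hexp : (inner ℂ u u : ℂ) =
        ∑ m ∈ t, ∑ n ∈ t, starRingEnd ℂ (w m) * (w n * (inner ℂ (g m) (g n) : ℂ)) := by
      rw [hu, sum_inner]
      refine Finset.sum_congr rfl fun m _ => ?_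
      rw [inner_smul_left, inner_sum]
      rw [Finset.mul_sum]
      refine Finset.sum_congr rfl fun n _ => ?_
      rw [inner_smul_right]
    have habs : RCLike.re (inner ℂ u u : ℂ) ≤
        ∑ m ∈ t, ∑ n ∈ t, ‖w m‖ * ‖w n‖ * ‖(inner ℂ (g m) (g n) : ℂ)‖ := by
      rw [hexp]
      calc RCLike.re (∑ m ∈ t, ∑ n ∈ t, starRingEnd ℂ (w m) * (w n * (inner ℂ (g m) (g n) : ℂ)))
          ≤ ‖∑ m ∈ t, ∑ n ∈ t, starRingEnd ℂ (w m) * (w n * (inner ℂ (g m) (g n) : ℂ))‖ :=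
            RCLike.re_le_norm _
        _ ≤ ∑ m ∈ t, ∑ n ∈ t, ‖w m‖ * ‖w n‖ * ‖(inner ℂ (g m) (g n) : ℂ)‖ := by
            refine (norm_sum_le _ _).trans (Finset.sum_le_sum fun m _ => ?_)
            refine (norm_sum_le _ _).trans (Finset.sum_le_sum fun n _ => ?_)
            rw [norm_mul, norm_mul, RCLike.norm_conj, mul_assoc]
    have hAM : ∑ m ∈ t, ∑ n ∈ t, ‖w m‖ * ‖w n‖ * ‖(inner ℂ (g m) (g n) : ℂ)‖ ≤ B * S := by
      have step : ∀ m ∈ t, ∀ n ∈ t, ‖w m‖ * ‖w n‖ * ‖(inner ℂ (g m) (g n) : ℂ)‖ ≤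
          (‖w m‖^2 / 2) * ‖(inner ℂ (g m) (g n) : ℂ)‖ +
          (‖w n‖^2 / 2) * ‖(inner ℂ (g m) (g n) : ℂ)‖ := by
        intro m _ n _
        have h1 : ‖w m‖ * ‖w n‖ ≤ ‖w m‖^2/2 + ‖w n‖^2/2 := by nlinarith [sq_nonneg (‖w m‖ - ‖w n‖)]
        have h2 : (0:ℝ) ≤ ‖(inner ℂ (g m) (g n) : ℂ)‖ := norm_nonneg _
        nlinarith
      calc ∑ m ∈ t, ∑ n ∈ t, ‖w m‖ * ‖w n‖ * ‖(inner ℂ (g m) (g n) : ℂ)‖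
          ≤ ∑ m ∈ t, ∑ n ∈ t, ((‖w m‖^2 / 2) * ‖(inner ℂ (g m) (g n) : ℂ)‖ +
              (‖w n‖^2 / 2) * ‖(inner ℂ (g m) (g n) : ℂ)‖) := by
            refine Finset.sum_le_sum fun m hm => Finset.sum_le_sum fun n hn => step m hm n hn
        _ = (∑ m ∈ t, ∑ n ∈ t, (‖w m‖^2 / 2) * ‖(inner ℂ (g m) (g n) : ℂ)‖) +
            (∑ m ∈ t, ∑ n ∈ t, (‖w n‖^2 / 2) * ‖(inner ℂ (g m) (g n) : ℂ)‖) := by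
            rw [← Finset.sum_add_distrib]
            refine Finset.sum_congr rfl fun m _ => Finset.sum_add_distrib
        _ ≤ B * S := by
            have hrow' : ∀ m ∈ t, ∑ n ∈ t, (‖w m‖^2 / 2) * ‖(inner ℂ (g m) (g n) : ℂ)‖ ≤
                (‖w m‖^2/2) * B := by
              intro m hm
              rw [← Finset.mul_sum]
              exact mul_le_mul_of_nonneg_left (hrow m hm) (by positivity)
            have hcol : ∀ n ∈ t, ∑ m ∈ t, (‖w n‖^2 / 2) * ‖(inner ℂ (g m) (g n) : ℂ)‖ ≤
                (‖w n‖^2/2) * B := by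
              intro n hn
              rw [← Finset.mul_sum]
              refine mul_le_mul_of_nonneg_left ?_ (by positivity)
              calc ∑ m ∈ t, ‖(inner ℂ (g m) (g n) : ℂ)‖
                  = ∑ m ∈ t, ‖(inner ℂ (g n) (g m) : ℂ)‖ := by
                    refine Finset.sum_congr rfl fun m _ => ?_
                    rw [← inner_conj_symm, RCLike.norm_conj]
                _ ≤ B := hrow n hn
            have h1 : ∑ m ∈ t, ∑ n ∈ t, (‖w m‖^2 / 2) * ‖(inner ℂ (g m) (g n) : ℂ)‖ ≤
                ∑ m ∈ t, (‖w m‖^2/2) * B := Finset.sum_le_sum hrow'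
            have h2 : ∑ m ∈ t, ∑ n ∈ t, (‖w n‖^2 / 2) * ‖(inner ℂ (g m) (g n) : ℂ)‖ ≤
                ∑ n ∈ t, (‖w n‖^2/2) * B := by
              rw [Finset.sum_comm]
              exact Finset.sum_le_sum hcol
            have hws : ∀ n, ‖w n‖ = ‖a n‖ := fun n => RCLike.norm_conj _
            have hsum : ∑ n ∈ t, (‖w n‖^2/2) * B = (S/2) * B := by
              have e : ∀ n ∈ t, (‖w n‖^2/2) * B = ‖a n‖^2 * (B/2) := by
                intro n _; rw [hws]; ring
              rw [Finset.sum_congr rfl e, ← Finset.sum_mul, ← hS]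
              ring
            nlinarith [h1, h2]
    rw [huu]
    exact habs.trans hAM
  -- conclude
  rcases eq_or_lt_of_le hS0 with h0 | h0
  · rw [← h0]; positivity
  · have key : S * S ≤ (B * ‖f‖^2) * S := by
      nlinarith [hSfu, hu2, norm_nonneg f, norm_nonneg u]
    exact le_of_mul_le_mul_right (by nlinarith [key]) h0


section corr
variable (F : ℝ → ℝ) (hFpos : ∀ x > (0:ℝ), 0 < F x) (hFdec : AntitoneOn F (Set.Ioi 0))
  (φ : ℝ → ℂ) (X : ℝ) (hdom : ∀ x : ℝ, X ≤ |x| → ‖φ x‖ ≤ F |x|)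

-- the truncated majorant
local notation "X'" => max X 1

include hFdec in
lemma fc_anti : Antitone (fun t : ℝ => ENNReal.ofReal (F (max t 1))) := by
  intro t u htu
  exact ENNReal.ofReal_le_ofReal (hFdec (lt_of_lt_of_le zero_lt_one (le_max_right t 1))
    (lt_of_lt_of_le zero_lt_one (le_max_right u 1)) (max_le_max htu le_rfl))

include hFdec in
lemma fc_le (t : ℝ) (ht : 0 < t) :
    ENNReal.ofReal (F (max t 1)) ≤ ENNReal.ofReal (F t) := by
  rcases le_total 1 t with h | h
  · rw [max_eq_left h]
  · exact ENNReal.ofReal_le_ofReal (hFdec ht (lt_of_lt_of_le zero_lt_one (le_max_right t 1)) (le_max_left t 1))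

include hFpos hFdec hdom in
theorem corr_le_Ke (hφm : AEStronglyMeasurable φ volume) (s : ℝ) (hs : 2 * max X 1 + 2 ≤ s) :
    CorrFun φ s ≤ (4 + 2 * (∫⁻ x in Icc (-(max X 1)) (max X 1), (‖φ x‖₊ : ℝ≥0∞)) *
      (ENNReal.ofReal (F 1))⁻¹) * KeFun F (s / 2) := by
  have hX1 : (1:ℝ) ≤ X' := le_max_right X 1
  have hs4 : (4:ℝ) ≤ s := by linarith
  have hs0 : (0:ℝ) < s := by linarith
  have hsX : X' + 1 ≤ s / 2 := by linarith
  have hs2 : (2:ℝ) ≤ s / 2 := by linarith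
  set fc : ℝ → ℝ≥0∞ := fun t => ENNReal.ofReal (F (max t 1)) with hfc
  have hfca : Antitone fc := fc_anti F hFdec
  have hfcle : ∀ t : ℝ, 0 < t → fc t ≤ ENNReal.ofReal (F t) := fun t ht => fc_le F hFdec t ht
  set Φ : ℝ → ℝ≥0∞ := fun x => (‖φ x‖₊ : ℝ≥0∞) with hΦ
  have hΦm : AEMeasurable Φ volume := hφm.enorm
  have hΦsm : ∀ c : ℝ, AEMeasurable (fun x => Φ (x - c)) volume := fun c =>
    hΦm.comp_quasiMeasurePreserving (measurePreserving_sub_right volume c).quasiMeasurePreserving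
  set ψ : ℝ → ℝ≥0∞ := (Icc (-(X' : ℝ)) X').indicator Φ with hψ
  have hψm : AEMeasurable ψ volume := hΦm.indicator measurableSet_Icc
  have hψsm : AEMeasurable (fun x => ψ (x - s)) volume :=
    hψm.comp_quasiMeasurePreserving (measurePreserving_sub_right volume s).quasiMeasurePreserving
  -- pointwise domination
  have hpt : ∀ x : ℝ, Φ x ≤ fc |x| + ψ x := by
    intro x
    rcases le_or_gt |x| X' with h | h
    · have : ψ x = Φ x := by
        rw [hψ, Set.indicator_of_mem]
        exact ⟨neg_le_of_abs_le h, le_of_abs_le h⟩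
      rw [this]; exact le_add_self
    · have hx1 : (1:ℝ) ≤ |x| := le_trans hX1 h.le
      have hdx : ‖φ x‖ ≤ F |x| := hdom x (le_trans (le_max_left X 1) h.le)
      have : fc |x| = ENNReal.ofReal (F |x|) := by rw [hfc]; simp [max_eq_left hx1]
      rw [this]
      refine le_add_right ?_
      show (‖φ x‖₊ : ℝ≥0∞) ≤ ENNReal.ofReal (F |x|)
      rw [show (‖φ x‖₊ : ℝ≥0∞) = ENNReal.ofReal ‖φ x‖ from (ofReal_norm _).symm]
      exact ENNReal.ofReal_le_ofReal hdx
  set A : ℝ≥0∞ := ENNReal.ofReal (F (s/2)) with hA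
  set Q : ℝ≥0∞ := ∫⁻ t in Ioo (0:ℝ) (s/2), ENNReal.ofReal (F t) with hQ
  set R : ℝ≥0∞ := ∫⁻ t in Ioi (s/2), ENNReal.ofReal (F t) ^ 2 with hR
  set c₁ : ℝ≥0∞ := ∫⁻ x in Icc (-(X' : ℝ)) X', Φ x with hc₁
  set e₀ : ℝ≥0∞ := ENNReal.ofReal (F 1) with he₀
  have he₀0 : e₀ ≠ 0 := by
    rw [he₀]; simp only [ne_eq, ENNReal.ofReal_eq_zero, not_le]; exact hFpos 1 one_pos
  have he₀top : e₀ ≠ ⊤ := ENNReal.ofReal_ne_top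
  have hfcs2 : fc (s/2) = A := by
    show ENNReal.ofReal (F (max (s/2) 1)) = A
    rw [max_eq_left (by linarith : (1:ℝ) ≤ s/2), hA]
  have hQ' : ∫⁻ t in Ioo (0:ℝ) (s/2), fc t ≤ Q :=
    setlint_mono_pt measurableSet_Ioo fun t ht => hfcle t ht.1
  have hR' : ∫⁻ t in Ioi (s/2), fc t ^ 2 ≤ R :=
    setlint_mono_pt measurableSet_Ioi fun t ht => by
      have := hfcle t (lt_trans (by linarith) ht)
      gcongr
  -- ψ terms
  have hψint : ∫⁻ x : ℝ, ψ x = c₁ := lintegral_indicator measurableSet_Icc Φ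
  have hP1 : ∫⁻ x : ℝ, fc |x| * ψ (x - s) ≤ A * c₁ := by
    have hierr : ∀ x : ℝ, fc |x| * ψ (x - s) ≤ A * ψ (x - s) := by
      intro x
      rcases eq_or_ne (ψ (x - s)) 0 with h0 | h0
      · rw [h0]; simp
      · have hmem : x - s ∈ Icc (-(X' : ℝ)) X' := by
          by_contra hm
          rw [hψ, Set.indicator_of_notMem hm] at h0; exact h0 rfl
        have hxge : s/2 ≤ |x| := by
          have h1 : x - s ≥ -(X' : ℝ) := hmem.1
          have : x ≥ s - X' := by linarith
          have : x ≥ s/2 := by linarith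
          rw [abs_of_pos (by linarith)]; exact this
        exact mul_le_mul_left (le_trans (hfca hxge) (le_of_eq hfcs2)) _
    calc ∫⁻ x : ℝ, fc |x| * ψ (x - s) ≤ ∫⁻ x : ℝ, A * ψ (x - s) := lintegral_mono hierr
      _ = A * ∫⁻ x : ℝ, ψ (x - s) := lintegral_const_mul' A _ ENNReal.ofReal_ne_top
      _ = A * c₁ := by rw [lint_shift s ψ, hψint]
  have hP2 : ∫⁻ x : ℝ, ψ x * fc |x - s| ≤ A * c₁ := by
    have hierr : ∀ x : ℝ, ψ x * fc |x - s| ≤ ψ x * A := by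
      intro x
      rcases eq_or_ne (ψ x) 0 with h0 | h0
      · rw [h0]; simp
      · have hmem : x ∈ Icc (-(X' : ℝ)) X' := by
          by_contra hm
          rw [hψ, Set.indicator_of_notMem hm] at h0; exact h0 rfl
        have hxge : s/2 ≤ |x - s| := by
          have h1 : x ≤ X' := hmem.2
          rw [abs_of_neg (by linarith : x - s < 0)]
          linarith
        exact mul_le_mul_right (le_trans (hfca hxge) (le_of_eq hfcs2)) _
    calc ∫⁻ x : ℝ, ψ x * fc |x - s| ≤ ∫⁻ x : ℝ, ψ x * A := lintegral_mono hierr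
      _ = A * ∫⁻ x : ℝ, ψ x := by
          simp_rw [mul_comm]; exact lintegral_const_mul' A _ ENNReal.ofReal_ne_top
      _ = A * c₁ := by rw [hψint]
  have hP0 : ∫⁻ x : ℝ, ψ x * ψ (x - s) = 0 := by
    have : ∀ x : ℝ, ψ x * ψ (x - s) = 0 := by
      intro x
      rcases eq_or_ne (ψ x) 0 with h0 | h0
      · rw [h0, zero_mul]
      · have hmem : x ∈ Icc (-(X' : ℝ)) X' := by
          by_contra hm; rw [hψ, Set.indicator_of_notMem hm] at h0; exact h0 rfl
        have : ψ (x - s) = 0 := by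
          rw [hψ, Set.indicator_of_notMem]
          intro hm2
          have := hmem.2; have := hm2.1
          have : x - s ≥ -(X' : ℝ) := hm2.1
          linarith [hmem.2]
        rw [this, mul_zero]
    simp_rw [this]; exact lintegral_zero
  -- main term T
  have hT : ∫⁻ x : ℝ, fc |x| * fc |x - s| ≤ 4 * (A * Q) + 3 * R := by
    set h : ℝ → ℝ≥0∞ := fun x => fc |x| * fc |x - s| with hh
    have hdisj : ∀ a b : ℝ, Disjoint (Ico a b) (Ici b) :=
      fun a b => Set.disjoint_left.mpr fun x hx hx' => absurd hx' (not_le.mpr hx.2)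
    have hIcoIoo : ∀ (g : ℝ → ℝ≥0∞) (a b : ℝ), ∫⁻ x in Ico a b, g x = ∫⁻ x in Ioo a b, g x :=
      fun g a b => by rw [← Measure.restrict_congr_set Ioo_ae_eq_Ico]
    have hIocIoo : ∀ (g : ℝ → ℝ≥0∞) (a b : ℝ), ∫⁻ x in Ioc a b, g x = ∫⁻ x in Ioo a b, g x :=
      fun g a b => by rw [← Measure.restrict_congr_set Ioo_ae_eq_Ioc]
    have hIciIoi : ∀ (g : ℝ → ℝ≥0∞) (a : ℝ), ∫⁻ x in Ici a, g x = ∫⁻ x in Ioi a, g x :=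
      fun g a => by rw [← Measure.restrict_congr_set Ioi_ae_eq_Ici]
    -- split the line
    have hsplit : ∫⁻ x : ℝ, h x = (∫⁻ x in Iio (-s), h x) + ((∫⁻ x in Ico (-s) 0, h x) +
        ((∫⁻ x in Ico 0 (s/2), h x) + ((∫⁻ x in Ico (s/2) s, h x) +
        ((∫⁻ x in Ico s (3*s/2), h x) + (∫⁻ x in Ici (3*s/2), h x))))) := by
      have e1 : (∫⁻ x in Iio (-s), h x) + (∫⁻ x in Ici (-s), h x) = ∫⁻ x : ℝ, h x := by
        have h' := lintegral_add_compl (μ := volume) h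
          (measurableSet_Iio : MeasurableSet (Iio (-s)))
        rwa [compl_Iio] at h'
      have e2 : (∫⁻ x in Ici (-s), h x) = (∫⁻ x in Ico (-s) 0, h x) + (∫⁻ x in Ici 0, h x) := by
        rw [← Set.Ico_union_Ici_eq_Ici (by linarith : -s ≤ (0:ℝ)),
          lintegral_union measurableSet_Ici (hdisj _ _)]
      have e3 : (∫⁻ x in Ici (0:ℝ), h x) = (∫⁻ x in Ico 0 (s/2), h x) + (∫⁻ x in Ici (s/2), h x) := by
        rw [← Set.Ico_union_Ici_eq_Ici (by linarith : (0:ℝ) ≤ s/2),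
          lintegral_union measurableSet_Ici (hdisj _ _)]
      have e4 : (∫⁻ x in Ici (s/2), h x) = (∫⁻ x in Ico (s/2) s, h x) + (∫⁻ x in Ici s, h x) := by
        rw [← Set.Ico_union_Ici_eq_Ici (by linarith : s/2 ≤ s),
          lintegral_union measurableSet_Ici (hdisj _ _)]
      have e5 : (∫⁻ x in Ici s, h x) = (∫⁻ x in Ico s (3*s/2), h x) + (∫⁻ x in Ici (3*s/2), h x) := by
        rw [← Set.Ico_union_Ici_eq_Ici (by linarith : s ≤ 3*s/2),
          lintegral_union measurableSet_Ici (hdisj _ _)]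
      rw [← e1, e2, e3, e4, e5]
    -- piece 1
    have hp1 : ∫⁻ x in Iio (-s), h x ≤ R := by
      have hb : ∫⁻ x in Iio (-s), h x ≤ ∫⁻ x in Iio (-s), fc (-x) ^ 2 := by
        refine setlint_mono_pt measurableSet_Iio fun x hx => ?_
        have hx' : x < -s := hx
        have h1 : |x| = -x := abs_of_neg (by linarith)
        have h2 : |x - s| = s - x := by rw [abs_of_neg (by linarith : x - s < 0)]; ring
        show fc |x| * fc |x - s| ≤ fc (-x) ^ 2
        rw [h1, h2, sq]
        exact mul_le_mul_right (hfca (by linarith : -x ≤ s - x)) _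
      refine hb.trans ?_
      have heq : ∫⁻ x in Iio (-s), fc (-x) ^ 2 = ∫⁻ y in Ioi s, fc y ^ 2 := by
        rw [← lintegral_indicator measurableSet_Iio, ← lintegral_indicator measurableSet_Ioi,
          ← lint_neg (fun y => (Ioi s).indicator (fun z => fc z ^ 2) y)]
        refine lintegral_congr fun x => ?_
        by_cases hx : x ∈ Iio (-s)
        · have hx' : x < -s := hx
          rw [Set.indicator_of_mem hx,
            Set.indicator_of_mem (show -x ∈ Ioi s from by simp only [mem_Ioi]; linarith)]
        · have hx' : ¬ x < -s := hx
          rw [Set.indicator_of_notMem hx, Set.indicator_of_notMem]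
          simp only [mem_Ioi, not_lt] at *
          linarith
      rw [heq]
      exact (lintegral_mono_set (Ioi_subset_Ioi (by linarith))).trans hR'
    -- piece 2
    have hp2 : ∫⁻ x in Ico (-s) 0, h x ≤ A * Q + R := by
      have hb : ∫⁻ x in Ico (-s) 0, h x ≤ ∫⁻ x in Ico (-s) 0, fc s * fc (-x) := by
        refine setlint_mono_pt measurableSet_Ico fun x hx => ?_
        have hxa : -s ≤ x := hx.1
        have hxb : x < 0 := hx.2
        have h1 : |x| = -x := abs_of_neg hxb
        have h2 : |x - s| = s - x := by rw [abs_of_neg (by linarith : x - s < 0)]; ring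
        show fc |x| * fc |x - s| ≤ fc s * fc (-x)
        rw [h1, h2, mul_comm (fc (-x)) (fc (s - x))]
        exact mul_le_mul_left (hfca (by linarith : s ≤ s - x)) _
      refine hb.trans ?_
      have heq' : ∫⁻ x in Ico (-s) 0, fc (-x) = ∫⁻ y in Ioc 0 s, fc y := by
        rw [← lintegral_indicator measurableSet_Ico, ← lintegral_indicator measurableSet_Ioc,
          ← lint_neg (fun y => (Ioc 0 s).indicator fc y)]
        refine lintegral_congr fun x => ?_
        by_cases hx : x ∈ Ico (-s) (0:ℝ)
        · have hxa : -s ≤ x := hx.1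
          have hxb : x < 0 := hx.2
          rw [Set.indicator_of_mem hx,
            Set.indicator_of_mem (show -x ∈ Ioc 0 s from mem_Ioc.mpr ⟨by linarith, by linarith⟩)]
        · rw [Set.indicator_of_notMem hx, Set.indicator_of_notMem]
          intro hmem
          rw [mem_Ioc] at hmem
          exact hx (mem_Ico.mpr ⟨by linarith [hmem.2], by linarith [hmem.1]⟩)
      have hconst : ∫⁻ x in Ico (-s) 0, fc s * fc (-x) = fc s * ∫⁻ x in Ico (-s) 0, fc (-x) :=
        lintegral_const_mul' _ _ ENNReal.ofReal_ne_top
      rw [hconst, heq']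
      have hset : Ioc (0:ℝ) s = Ioo 0 (s/2) ∪ Icc (s/2) s := by
        ext y
        simp only [mem_Ioc, mem_union, mem_Ioo, mem_Icc]
        constructor
        · rintro ⟨h1, h2⟩
          rcases lt_or_ge y (s/2) with hc | hc
          · exact Or.inl ⟨h1, hc⟩
          · exact Or.inr ⟨hc, h2⟩
        · rintro (⟨h1, h2⟩ | ⟨h1, h2⟩)
          · exact ⟨h1, by linarith⟩
          · exact ⟨by linarith, h2⟩
      rw [hset, lintegral_union measurableSet_Icc
        (Set.disjoint_left.mpr fun y hy hy' => absurd hy'.1 (not_le.mpr hy.2)), mul_add]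
      refine add_le_add ?_ ?_
      · exact mul_le_mul (le_trans (hfca (by linarith : s/2 ≤ s)) (le_of_eq hfcs2)) hQ'
          zero_le zero_le
      · calc fc s * ∫⁻ y in Icc (s/2) s, fc y = ∫⁻ y in Icc (s/2) s, fc s * fc y :=
            (lintegral_const_mul' _ _ ENNReal.ofReal_ne_top).symm
          _ ≤ ∫⁻ y in Icc (s/2) s, fc y ^ 2 := by
            refine setlint_mono_pt measurableSet_Icc fun y hy => ?_
            rw [sq]; exact mul_le_mul_left (hfca hy.2) _
          _ ≤ ∫⁻ y in Ici (s/2), fc y ^ 2 := lintegral_mono_set Icc_subset_Ici_self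
          _ ≤ R := by rw [hIciIoi]; exact hR'
    -- piece 3
    have hp3 : ∫⁻ x in Ico 0 (s/2), h x ≤ A * Q := by
      have hb : ∫⁻ x in Ico 0 (s/2), h x ≤ ∫⁻ x in Ico 0 (s/2), A * fc x := by
        refine setlint_mono_pt measurableSet_Ico fun x hx => ?_
        have hxa : (0:ℝ) ≤ x := hx.1
        have hxb : x < s/2 := hx.2
        have h1 : |x| = x := abs_of_nonneg hxa
        have h2 : |x - s| = s - x := by rw [abs_of_neg (by linarith : x - s < 0)]; ring
        show fc |x| * fc |x - s| ≤ A * fc x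
        rw [h1, h2, mul_comm (fc x) (fc (s - x))]
        exact mul_le_mul_left (le_trans (hfca (by linarith : s/2 ≤ s - x)) (le_of_eq hfcs2)) _
      refine hb.trans ?_
      rw [lintegral_const_mul' _ _ ENNReal.ofReal_ne_top, hIcoIoo]
      exact mul_le_mul_right hQ' A
    -- piece 4
    have hp4 : ∫⁻ x in Ico (s/2) s, h x ≤ A * Q := by
      have hb : ∫⁻ x in Ico (s/2) s, h x ≤ ∫⁻ x in Ico (s/2) s, A * fc (s - x) := by
        refine setlint_mono_pt measurableSet_Ico fun x hx => ?_
        have hxa : s/2 ≤ x := hx.1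
        have hxb : x < s := hx.2
        have h1 : |x| = x := abs_of_nonneg (by linarith)
        have h2 : |x - s| = s - x := by rw [abs_of_neg (by linarith : x - s < 0)]; ring
        show fc |x| * fc |x - s| ≤ A * fc (s - x)
        rw [h1, h2]
        exact mul_le_mul_left (le_trans (hfca hxa) (le_of_eq hfcs2)) _
      refine hb.trans ?_
      have heq : ∫⁻ x in Ico (s/2) s, fc (s - x) = ∫⁻ y in Ioc 0 (s/2), fc y := by
        rw [← lintegral_indicator measurableSet_Ico, ← lintegral_indicator measurableSet_Ioc]
        have key : ∀ x : ℝ, (Ico (s/2) s).indicator (fun z => fc (s - z)) x =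
            (fun u => (Ioc (0:ℝ) (s/2)).indicator fc (-u)) (x - s) := by
          intro x
          simp only [neg_sub]
          by_cases hx : x ∈ Ico (s/2) s
          · have hxa : s/2 ≤ x := hx.1
            have hxb : x < s := hx.2
            rw [Set.indicator_of_mem hx,
              Set.indicator_of_mem (show s - x ∈ Ioc (0:ℝ) (s/2) from
                mem_Ioc.mpr ⟨by linarith, by linarith⟩)]
          · rw [Set.indicator_of_notMem hx, Set.indicator_of_notMem]
            intro hmem
            rw [mem_Ioc] at hmem
            exact hx (mem_Ico.mpr ⟨by linarith [hmem.2], by linarith [hmem.1]⟩)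
        rw [lintegral_congr key, lint_shift s (fun u => (Ioc (0:ℝ) (s/2)).indicator fc (-u)),
          lint_neg (fun u => (Ioc (0:ℝ) (s/2)).indicator fc u)]
      rw [lintegral_const_mul' _ _ ENNReal.ofReal_ne_top, heq, hIocIoo]
      exact mul_le_mul_right hQ' A
    -- piece 5
    have hp5 : ∫⁻ x in Ico s (3*s/2), h x ≤ A * Q := by
      have hb : ∫⁻ x in Ico s (3*s/2), h x ≤ ∫⁻ x in Ico s (3*s/2), A * fc (x - s) := by
        refine setlint_mono_pt measurableSet_Ico fun x hx => ?_
        have hxa : s ≤ x := hx.1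
        have hxb : x < 3*s/2 := hx.2
        have h1 : |x| = x := abs_of_nonneg (by linarith)
        have h2 : |x - s| = x - s := abs_of_nonneg (by linarith)
        show fc |x| * fc |x - s| ≤ A * fc (x - s)
        rw [h1, h2]
        exact mul_le_mul_left (le_trans (hfca (by linarith : s/2 ≤ x)) (le_of_eq hfcs2)) _
      refine hb.trans ?_
      have heq : ∫⁻ x in Ico s (3*s/2), fc (x - s) = ∫⁻ y in Ico 0 (s/2), fc y := by
        rw [← lintegral_indicator measurableSet_Ico, ← lintegral_indicator measurableSet_Ico]
        have key : ∀ x : ℝ, (Ico s (3*s/2)).indicator (fun z => fc (z - s)) x =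
            (fun u => (Ico (0:ℝ) (s/2)).indicator fc u) (x - s) := by
          intro x
          simp only
          by_cases hx : x ∈ Ico s (3*s/2)
          · have hxa : s ≤ x := hx.1
            have hxb : x < 3*s/2 := hx.2
            rw [Set.indicator_of_mem hx,
              Set.indicator_of_mem (show x - s ∈ Ico (0:ℝ) (s/2) from
                mem_Ico.mpr ⟨by linarith, by linarith⟩)]
          · rw [Set.indicator_of_notMem hx, Set.indicator_of_notMem]
            intro hmem
            rw [mem_Ico] at hmem
            exact hx (mem_Ico.mpr ⟨by linarith [hmem.1], by linarith [hmem.2]⟩)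
        rw [lintegral_congr key, lint_shift s (fun u => (Ico (0:ℝ) (s/2)).indicator fc u)]
      rw [lintegral_const_mul' _ _ ENNReal.ofReal_ne_top, heq, hIcoIoo]
      exact mul_le_mul_right hQ' A
    -- piece 6
    have hp6 : ∫⁻ x in Ici (3*s/2), h x ≤ R := by
      have hb : ∫⁻ x in Ici (3*s/2), h x ≤ ∫⁻ x in Ici (3*s/2), fc (x - s) ^ 2 := by
        refine setlint_mono_pt measurableSet_Ici fun x hx => ?_
        have hx' : 3*s/2 ≤ x := hx
        have h1 : |x| = x := abs_of_nonneg (by linarith)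
        have h2 : |x - s| = x - s := abs_of_nonneg (by linarith)
        show fc |x| * fc |x - s| ≤ fc (x - s) ^ 2
        rw [h1, h2, sq]
        exact mul_le_mul_left (hfca (by linarith : x - s ≤ x)) _
      refine hb.trans ?_
      have heq : ∫⁻ x in Ici (3*s/2), fc (x - s) ^ 2 = ∫⁻ y in Ici (s/2), fc y ^ 2 := by
        rw [← lintegral_indicator measurableSet_Ici, ← lintegral_indicator measurableSet_Ici]
        have key : ∀ x : ℝ, (Ici (3*s/2)).indicator (fun z => fc (z - s) ^ 2) x =
            (fun u => (Ici (s/2)).indicator (fun z => fc z ^ 2) u) (x - s) := by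
          intro x
          simp only
          by_cases hx : x ∈ Ici (3*s/2)
          · have hx' : 3*s/2 ≤ x := hx
            rw [Set.indicator_of_mem hx,
              Set.indicator_of_mem (show x - s ∈ Ici (s/2) from by
                simp only [mem_Ici]; linarith)]
          · rw [Set.indicator_of_notMem hx, Set.indicator_of_notMem]
            intro hmem
            simp only [mem_Ici] at hmem
            exact hx (by simp only [mem_Ici]; linarith)
        rw [lintegral_congr key, lint_shift s (fun u => (Ici (s/2)).indicator (fun z => fc z ^ 2) u)]
      rw [heq, hIciIoi]
      exact hR'
    rw [hsplit]
    calc (∫⁻ x in Iio (-s), h x) + ((∫⁻ x in Ico (-s) 0, h x) +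
        ((∫⁻ x in Ico 0 (s/2), h x) + ((∫⁻ x in Ico (s/2) s, h x) +
        ((∫⁻ x in Ico s (3*s/2), h x) + (∫⁻ x in Ici (3*s/2), h x)))))
        ≤ R + ((A * Q + R) + ((A * Q) + ((A * Q) + ((A * Q) + R)))) :=
          add_le_add hp1 (add_le_add hp2 (add_le_add hp3 (add_le_add hp4 (add_le_add hp5 hp6))))
      _ = 4 * (A * Q) + 3 * R := by ring
  -- expansion
  have hexp : CorrFun φ s ≤ (∫⁻ x : ℝ, fc |x| * fc |x - s|) +
      ((∫⁻ x : ℝ, fc |x| * ψ (x - s)) + ((∫⁻ x : ℝ, ψ x * fc |x - s|) +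
        ∫⁻ x : ℝ, ψ x * ψ (x - s))) := by
    have step1 : CorrFun φ s ≤ ∫⁻ x : ℝ, (fc |x| + ψ x) * (fc |x - s| + ψ (x - s)) := by
      refine lintegral_mono fun x => ?_
      exact mul_le_mul' (hpt x) (hpt (x - s))
    have habs : Measurable fun x : ℝ => fc |x| * fc |x - s| := by
      have h1 : Measurable fun x : ℝ => fc |x| := (hfca.measurable).comp measurable_abs
      have h2 : Measurable fun x : ℝ => fc |x - s| :=
        (hfca.measurable).comp (measurable_abs.comp (measurable_id.sub measurable_const))
      exact h1.mul h2
    have hfcm : Measurable fun x : ℝ => fc |x| := (hfca.measurable).comp measurable_abs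
    have hfcsm : Measurable fun x : ℝ => fc |x - s| :=
      (hfca.measurable).comp (measurable_abs.comp (measurable_id.sub measurable_const))
    have expand : ∀ x : ℝ, (fc |x| + ψ x) * (fc |x - s| + ψ (x - s)) =
        fc |x| * fc |x - s| + (fc |x| * ψ (x - s) + (ψ x * fc |x - s| + ψ x * ψ (x - s))) := by
      intro x; ring
    rw [show (∫⁻ x : ℝ, (fc |x| + ψ x) * (fc |x - s| + ψ (x - s))) =
        ∫⁻ x : ℝ, (fc |x| * fc |x - s| + (fc |x| * ψ (x - s) + (ψ x * fc |x - s| + ψ x * ψ (x - s)))) from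
        lintegral_congr expand] at step1
    rwa [lintegral_add_left' (habs.aemeasurable) _,
      lintegral_add_left' (f := fun x : ℝ => fc |x| * ψ (x - s)) (hfcm.aemeasurable.mul hψsm) _,
      lintegral_add_left' (f := fun x : ℝ => ψ x * fc |x - s|) (hψm.mul hfcsm.aemeasurable) _] at step1
  -- put together
  have hKe : KeFun F (s/2) = A * Q + R := rfl
  have hAe : A * e₀ ≤ A * Q := by
    have : e₀ ≤ Q := by
      calc e₀ = ∫⁻ t in Ioo (0:ℝ) 1, ENNReal.ofReal (F 1) := by
            rw [setLIntegral_const]; simp [Real.volume_Ioo, he₀]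
        _ ≤ ∫⁻ t in Ioo (0:ℝ) 1, ENNReal.ofReal (F t) :=
            setlint_mono_pt measurableSet_Ioo fun t ht =>
              ENNReal.ofReal_le_ofReal (hFdec ht.1 (Set.mem_Ioi.mpr one_pos) ht.2.le)
        _ ≤ Q := lintegral_mono_set (Ioo_subset_Ioo le_rfl (by linarith))
    exact mul_le_mul_right this A
  have hAbd : A ≤ (A * Q + R) * e₀⁻¹ := by
    have h1 : A * e₀ * e₀⁻¹ ≤ (A * Q + R) * e₀⁻¹ :=
      mul_le_mul_left (le_trans hAe le_self_add) _
    rwa [mul_assoc, ENNReal.mul_inv_cancel he₀0 he₀top, mul_one] at h1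
  calc CorrFun φ s ≤ (4 * (A * Q) + 3 * R) + (A * c₁ + (A * c₁ + 0)) := by
        exact hexp.trans (add_le_add hT (add_le_add hP1 (add_le_add hP2 (le_of_eq hP0))))
    _ ≤ 4 * (A * Q + R) + 2 * c₁ * ((A * Q + R) * e₀⁻¹) := by
        rw [add_zero]
        gcongr
        · calc 4 * (A * Q) + 3 * R ≤ 4 * (A * Q) + 4 * R := by gcongr <;> norm_num
            _ = 4 * (A * Q + R) := by ring
        · calc A * c₁ + A * c₁ = 2 * c₁ * A := by ring
            _ ≤ 2 * c₁ * ((A * Q + R) * e₀⁻¹) := mul_le_mul_right hAbd _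
    _ = (4 + 2 * c₁ * e₀⁻¹) * (A * Q + R) := by ring
    _ = (4 + 2 * c₁ * e₀⁻¹) * KeFun F (s/2) := by rw [hKe]

end corr

section kefun
variable (F : ℝ → ℝ) (hFpos : ∀ x > (0:ℝ), 0 < F x) (hFdec : AntitoneOn F (Set.Ioi 0))
  (hFL2 : IntegrableOn (fun t => F t ^ 2) (Set.Ioi 0))

include hFdec in
lemma Ke_anti {a b : ℝ} (ha : 0 < a) (hab : a ≤ b) : KeFun F b ≤ KeFun F a := by
  have hb : 0 < b := lt_of_lt_of_le ha hab
  set fe : ℝ → ℝ≥0∞ := fun t => ENNReal.ofReal (F t) with hfe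
  have hset : Ioo (0:ℝ) b = Ioo 0 a ∪ Ico a b := by
    ext t
    simp only [mem_Ioo, mem_union, mem_Ico]
    constructor
    · rintro ⟨h1, h2⟩
      rcases lt_or_ge t a with hc | hc
      · exact Or.inl ⟨h1, hc⟩
      · exact Or.inr ⟨hc, h2⟩
    · rintro (⟨h1, h2⟩ | ⟨h1, h2⟩)
      · exact ⟨h1, by linarith⟩
      · exact ⟨by linarith, h2⟩
  have h1 : ∫⁻ t in Ioo (0:ℝ) b, fe t = (∫⁻ t in Ioo (0:ℝ) a, fe t) + ∫⁻ t in Ico a b, fe t := by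
    rw [hset, lintegral_union measurableSet_Ico
      (Set.disjoint_left.mpr fun y hy hy' => absurd hy'.1 (not_le.mpr hy.2))]
  have hFba : ENNReal.ofReal (F b) ≤ ENNReal.ofReal (F a) :=
    ENNReal.ofReal_le_ofReal (hFdec (mem_Ioi.mpr ha) (mem_Ioi.mpr hb) hab)
  have h2 : ENNReal.ofReal (F b) * ∫⁻ t in Ico a b, fe t ≤ ∫⁻ t in Ico a b, fe t ^ 2 := by
    rw [← lintegral_const_mul' _ _ ENNReal.ofReal_ne_top]
    refine setlint_mono_pt measurableSet_Ico fun t ht => ?_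
    rw [sq]
    exact mul_le_mul_left (ENNReal.ofReal_le_ofReal
      (hFdec (mem_Ioi.mpr (lt_of_lt_of_le ha ht.1)) (mem_Ioi.mpr hb) ht.2.le)) _
  have h3 : (∫⁻ t in Ico a b, fe t ^ 2) + ∫⁻ t in Ioi b, fe t ^ 2 ≤ ∫⁻ t in Ioi a, fe t ^ 2 := by
    calc (∫⁻ t in Ico a b, fe t ^ 2) + ∫⁻ t in Ioi b, fe t ^ 2
        ≤ (∫⁻ t in Ico a b, fe t ^ 2) + ∫⁻ t in Ici b, fe t ^ 2 := by
          gcongr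
          exact Ioi_subset_Ici_self
      _ = ∫⁻ t in Ici a, fe t ^ 2 := by
          rw [← lintegral_union measurableSet_Ici
            (Set.disjoint_left.mpr fun y hy hy' => absurd hy' (not_le.mpr hy.2)),
            Set.Ico_union_Ici_eq_Ici hab]
      _ = ∫⁻ t in Ioi a, fe t ^ 2 := by rw [← Measure.restrict_congr_set Ioi_ae_eq_Ici]
  calc KeFun F b = ENNReal.ofReal (F b) * ((∫⁻ t in Ioo (0:ℝ) a, fe t) + ∫⁻ t in Ico a b, fe t)
        + ∫⁻ t in Ioi b, fe t ^ 2 := by rw [KeFun, h1]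
    _ = ENNReal.ofReal (F b) * (∫⁻ t in Ioo (0:ℝ) a, fe t)
        + (ENNReal.ofReal (F b) * (∫⁻ t in Ico a b, fe t) + ∫⁻ t in Ioi b, fe t ^ 2) := by ring
    _ ≤ ENNReal.ofReal (F a) * (∫⁻ t in Ioo (0:ℝ) a, fe t)
        + ((∫⁻ t in Ico a b, fe t ^ 2) + ∫⁻ t in Ioi b, fe t ^ 2) := by
        exact add_le_add (mul_le_mul_left hFba _) (add_le_add_left h2 _)
    _ ≤ ENNReal.ofReal (F a) * (∫⁻ t in Ioo (0:ℝ) a, fe t) + ∫⁻ t in Ioi a, fe t ^ 2 :=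
        add_le_add_right h3 _
    _ = KeFun F a := rfl

include hFpos hFL2 in
lemma Ke_le_G {x : ℝ} (hx : 0 < x) : KeFun F x ≤ ENNReal.ofReal (Gfun F x) := by
  have hFaem : AEMeasurable F (volume.restrict (Ioi (0:ℝ))) := by
    have hsq : AEMeasurable (fun t => F t ^ 2) (volume.restrict (Ioi (0:ℝ))) :=
      hFL2.1.aemeasurable
    have : AEMeasurable (fun t => Real.sqrt (F t ^ 2)) (volume.restrict (Ioi (0:ℝ))) :=
      Real.continuous_sqrt.measurable.comp_aemeasurable hsq
    refine this.congr ?_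
    rw [Filter.EventuallyEq, ae_restrict_iff' measurableSet_Ioi]
    exact Filter.Eventually.of_forall fun t ht => Real.sqrt_sq (hFpos t ht).le
  have hsub : Ioo (0:ℝ) x ⊆ Ioi 0 := fun t ht => ht.1
  have hInt1 : IntegrableOn F (Ioo (0:ℝ) x) volume := by
    refine Integrable.mono' ((hFL2.mono_set hsub).add (integrable_const 1)) 
      ((hFaem.mono_measure (Measure.restrict_mono hsub le_rfl)).aestronglyMeasurable) ?_
    rw [ae_restrict_iff' measurableSet_Ioo]
    refine Filter.Eventually.of_forall fun t ht => ?_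
    have h0 : 0 < F t := hFpos t ht.1
    rw [Real.norm_eq_abs, abs_of_pos h0]
    simp only [Pi.add_apply]
    nlinarith [sq_nonneg (F t - 1)]
  have hInt2 : IntegrableOn (fun t => F t ^ 2) (Ioi x) volume :=
    hFL2.mono_set (Ioi_subset_Ioi hx.le)
  have hae1 : (0:ℝ → ℝ) ≤ᶠ[ae (volume.restrict (Ioo (0:ℝ) x))] F :=
    (ae_restrict_iff' measurableSet_Ioo).mpr
      (Filter.Eventually.of_forall fun t ht => (hFpos t ht.1).le)
  have e1 : ∫⁻ t in Ioo (0:ℝ) x, ENNReal.ofReal (F t) = ENNReal.ofReal (∫ t in Ioo (0:ℝ) x, F t) :=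
    (ofReal_integral_eq_lintegral_ofReal hInt1 hae1).symm
  have e2 : ∫⁻ t in Ioi x, ENNReal.ofReal (F t) ^ 2 = ENNReal.ofReal (∫ t in Ioi x, F t ^ 2) := by
    have congr1 : ∫⁻ t in Ioi x, ENNReal.ofReal (F t) ^ 2 =
        ∫⁻ t in Ioi x, ENNReal.ofReal (F t ^ 2) := by
      rw [← lintegral_indicator measurableSet_Ioi, ← lintegral_indicator measurableSet_Ioi]
      refine lintegral_congr fun t => ?_
      by_cases ht : t ∈ Ioi x
      · rw [Set.indicator_of_mem ht, Set.indicator_of_mem ht,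
          ENNReal.ofReal_pow (hFpos t (lt_trans hx ht)).le]
      · rw [Set.indicator_of_notMem ht, Set.indicator_of_notMem ht]
    rw [congr1, ofReal_integral_eq_lintegral_ofReal hInt2
      (Filter.Eventually.of_forall fun t => sq_nonneg _)]
  have hnn1 : 0 ≤ ∫ t in Ioo (0:ℝ) x, F t :=
    setIntegral_nonneg measurableSet_Ioo fun t ht => (hFpos t ht.1).le
  have hnn2 : 0 ≤ F x := (hFpos x hx).le
  rw [KeFun, e1, e2, Gfun, ← ENNReal.ofReal_mul hnn2,
    ← ENNReal.ofReal_add (mul_nonneg hnn2 hnn1) (integral_nonneg fun t => sq_nonneg _)]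
end kefun

lemma F_aemeasurable (F : ℝ → ℝ) (hFpos : ∀ x > (0:ℝ), 0 < F x)
    (hFL2 : IntegrableOn (fun t => F t ^ 2) (Set.Ioi 0)) :
    AEMeasurable F (volume.restrict (Ioi (0:ℝ))) := by
  have hsq : AEMeasurable (fun t => F t ^ 2) (volume.restrict (Ioi (0:ℝ))) := hFL2.1.aemeasurable
  have h : AEMeasurable (fun t => Real.sqrt (F t ^ 2)) (volume.restrict (Ioi (0:ℝ))) :=
    Real.continuous_sqrt.measurable.comp_aemeasurable hsq
  refine h.congr ?_
  rw [Filter.EventuallyEq, ae_restrict_iff' measurableSet_Ioi]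
  exact Filter.Eventually.of_forall fun t ht => Real.sqrt_sq (hFpos t ht).le

lemma Gfun_pos (F : ℝ → ℝ) (hFpos : ∀ x > (0:ℝ), 0 < F x)
    (hFL2 : IntegrableOn (fun t => F t ^ 2) (Set.Ioi 0)) {x : ℝ} (hx : 0 < x) :
    0 < Gfun F x := by
  have h1 : 0 ≤ F x * ∫ t in Ioo (0:ℝ) x, F t :=
    mul_nonneg (hFpos x hx).le (setIntegral_nonneg measurableSet_Ioo fun t ht => (hFpos t ht.1).le)
  have h2 : 0 < ∫ t in Ioi x, F t ^ 2 := by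
    rw [setIntegral_pos_iff_support_of_nonneg_ae
      (Filter.Eventually.of_forall fun t => sq_nonneg _)
      (hFL2.mono_set (Ioi_subset_Ioi hx.le))]
    have hsub : Ioi x ⊆ Function.support (fun t => F t ^ 2) ∩ Ioi x := by
      intro t ht
      refine ⟨?_, ht⟩
      simp only [Function.mem_support]
      exact ne_of_gt (pow_pos (hFpos t (lt_trans hx ht)) 2)
    calc (0:ℝ≥0∞) < ⊤ := ENNReal.zero_lt_top
      _ = volume (Ioi x) := (Real.volume_Ioi).symm
      _ ≤ volume (Function.support (fun t => F t ^ 2) ∩ Ioi x) := measure_mono hsub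
  rw [Gfun]
  linarith

lemma DLam_ne_top (F : ℝ → ℝ) (hFpos : ∀ x > (0:ℝ), 0 < F x)
    (hFL2 : IntegrableOn (fun t => F t ^ 2) (Set.Ioi 0)) (lam : ℕ → ℝ)
    (hint : ∫⁻ x in Set.Ioi (1:ℝ),
        ENNReal.ofReal (Gfun F x) * DLam lam x / ENNReal.ofReal x < ⊤) (y : ℝ) :
    DLam lam y ≠ ⊤ := by
  intro htop
  set z : ℝ := max y 2 with hz
  have hz2 : (2:ℝ) ≤ z := le_max_right y 2
  have hztop : DLam lam z = ⊤ :=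
    top_le_iff.mp (htop ▸ DLam_mono lam (le_max_left y 2))
  have hxtop : ∀ x : ℝ, z ≤ x → DLam lam x = ⊤ :=
    fun x hx => top_le_iff.mp (hztop ▸ DLam_mono lam hx)
  have hbig : ∫⁻ x in Ioi z, ENNReal.ofReal (Gfun F x) * DLam lam x / ENNReal.ofReal x = ⊤ := by
    have hpt : ∀ x ∈ Ioi z, (⊤:ℝ≥0∞) ≤ ENNReal.ofReal (Gfun F x) * DLam lam x / ENNReal.ofReal x := by
      intro x hx
      have hx0 : (0:ℝ) < x := by have := mem_Ioi.mp hx; linarith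
      have hG : 0 < Gfun F x := Gfun_pos F hFpos hFL2 hx0
      rw [hxtop x (mem_Ioi.mp hx).le]
      rw [ENNReal.mul_top (by simp only [ne_eq, ENNReal.ofReal_eq_zero, not_le]; exact hG)]
      rw [ENNReal.top_div_of_ne_top ENNReal.ofReal_ne_top]
    have : ∫⁻ x in Ioi z, ENNReal.ofReal (Gfun F x) * DLam lam x / ENNReal.ofReal x ≥
        ∫⁻ _ in Ioi z, (⊤:ℝ≥0∞) := setlint_mono_pt measurableSet_Ioi hpt
    rw [setLIntegral_const] at this
    rw [Real.volume_Ioi] at this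
    simpa using top_le_iff.mp (le_trans (le_of_eq (ENNReal.top_mul ENNReal.top_ne_zero).symm) this)
  have : (⊤:ℝ≥0∞) ≤ ∫⁻ x in Ioi (1:ℝ), ENNReal.ofReal (Gfun F x) * DLam lam x / ENNReal.ofReal x :=
    hbig ▸ lintegral_mono_set (Ioi_subset_Ioi (by linarith))
  exact absurd (top_le_iff.mp this) (by intro h; rw [h] at hint; exact lt_irrefl _ hint)

lemma corr_symm (φ : ℝ → ℂ) (s : ℝ) : CorrFun φ (-s) = CorrFun φ s := by
  have key : ∀ x : ℝ, (‖φ x‖₊ : ℝ≥0∞) * (‖φ (x - -s)‖₊ : ℝ≥0∞) =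
      (fun y => (‖φ (y - s)‖₊ : ℝ≥0∞) * (‖φ y‖₊ : ℝ≥0∞)) (x - -s) := by
    intro x
    simp only [sub_neg_eq_add, add_sub_cancel_right]
  calc CorrFun φ (-s) = ∫⁻ x : ℝ, (fun y => (‖φ (y - s)‖₊ : ℝ≥0∞) * (‖φ y‖₊ : ℝ≥0∞)) (x - -s) :=
        lintegral_congr key
    _ = ∫⁻ y : ℝ, (‖φ (y - s)‖₊ : ℝ≥0∞) * (‖φ y‖₊ : ℝ≥0∞) :=
        lint_shift (-s) (fun y => (‖φ (y - s)‖₊ : ℝ≥0∞) * (‖φ y‖₊ : ℝ≥0∞))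
    _ = CorrFun φ s := by
        rw [CorrFun]
        exact lintegral_congr fun y => mul_comm _ _

lemma corr_le_two (φ : ℝ → ℂ) (hφm : AEStronglyMeasurable φ volume) (s : ℝ) :
    CorrFun φ s ≤ 2 * ∫⁻ x : ℝ, (‖φ x‖₊ : ℝ≥0∞) ^ 2 := by
  calc CorrFun φ s ≤ ∫⁻ x : ℝ, ((‖φ x‖₊ : ℝ≥0∞) ^ 2 + (‖φ (x - s)‖₊ : ℝ≥0∞) ^ 2) :=
        lintegral_mono fun x => enn_mul_le_sq_add_sq _ _
    _ = (∫⁻ x : ℝ, (‖φ x‖₊ : ℝ≥0∞) ^ 2) + ∫⁻ x : ℝ, (‖φ (x - s)‖₊ : ℝ≥0∞) ^ 2 :=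
        lintegral_add_left' (hφm.enorm.pow_const 2) _
    _ = 2 * ∫⁻ x : ℝ, (‖φ x‖₊ : ℝ≥0∞) ^ 2 := by
        rw [lint_shift s (fun y => (‖φ y‖₊ : ℝ≥0∞) ^ 2), two_mul]

lemma gram_le_corr (φ : ℝ → ℂ) (a b : ℝ) :
    ENNReal.ofReal ‖∫ x : ℝ, (starRingEnd ℂ) (φ (x - a)) * φ (x - b)‖ ≤ CorrFun φ (b - a) := by
  calc ENNReal.ofReal ‖∫ x : ℝ, (starRingEnd ℂ) (φ (x - a)) * φ (x - b)‖
      = (‖∫ x : ℝ, (starRingEnd ℂ) (φ (x - a)) * φ (x - b)‖₊ : ℝ≥0∞) := ofReal_norm _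
    _ ≤ ∫⁻ x : ℝ, (‖(starRingEnd ℂ) (φ (x - a)) * φ (x - b)‖₊ : ℝ≥0∞) :=
        enorm_integral_le_lintegral_enorm _
    _ = ∫⁻ x : ℝ, (fun y => (‖φ y‖₊ : ℝ≥0∞) * (‖φ (y - (b - a))‖₊ : ℝ≥0∞)) (x - a) := by
        refine lintegral_congr fun x => ?_
        simp only [nnnorm_mul, ENNReal.coe_mul, RCLike.nnnorm_conj]
        congr 2
        ring
    _ = ∫⁻ y : ℝ, (‖φ y‖₊ : ℝ≥0∞) * (‖φ (y - (b - a))‖₊ : ℝ≥0∞) :=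
        lint_shift a (fun y => (‖φ y‖₊ : ℝ≥0∞) * (‖φ (y - (b - a))‖₊ : ℝ≥0∞))
    _ = CorrFun φ (b - a) := rfl

lemma far_sum (F : ℝ → ℝ) (hFpos : ∀ x > (0:ℝ), 0 < F x) (hFdec : AntitoneOn F (Set.Ioi 0))
    (hFL2 : IntegrableOn (fun t => F t ^ 2) (Set.Ioi 0))
    (lam : ℕ → ℝ) (hinj : Function.Injective lam) (m : ℕ) (t : Finset ℕ)
    (hfar : ∀ n ∈ t, 4 < |lam n - lam m|) :
    ∑ n ∈ t, KeFun F (|lam n - lam m| / 2) ≤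
      16 * ∫⁻ x in Set.Ioi (1:ℝ), ENNReal.ofReal (Gfun F x) * DLam lam x / ENNReal.ofReal x := by
  classical
  set d : ℕ → ℝ := fun n => |lam n - lam m| with hd
  set W : ℝ → ℝ≥0∞ := (Ioi (1:ℝ)).indicator
    (fun x => 2 * (ENNReal.ofReal x)⁻¹ * KeFun F x) with hW
  have hWmeas : AEMeasurable W volume := by
    rw [hW, aemeasurable_indicator_iff measurableSet_Ioi]
    have h1 : AEMeasurable (fun x => ENNReal.ofReal (F x)) (volume.restrict (Ioi (1:ℝ))) :=
      (ENNReal.measurable_ofReal.comp_aemeasurable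
        ((F_aemeasurable F hFpos hFL2).mono_measure
          (Measure.restrict_mono (Ioi_subset_Ioi zero_le_one) le_rfl)))
    have h2 : Measurable (fun x : ℝ => ∫⁻ s in Ioo (0:ℝ) x, ENNReal.ofReal (F s)) :=
      Monotone.measurable fun u v huv =>
        lintegral_mono_set (Ioo_subset_Ioo le_rfl huv)
    have h3 : Measurable (fun x : ℝ => ∫⁻ s in Ioi x, ENNReal.ofReal (F s) ^ 2) :=
      Antitone.measurable fun u v huv => lintegral_mono_set (Ioi_subset_Ioi huv)
    have h4 : Measurable (fun x : ℝ => 2 * (ENNReal.ofReal x)⁻¹) :=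
      (ENNReal.measurable_ofReal.comp measurable_id).inv.const_mul 2
    exact (h4.aemeasurable.mul ((h1.mul h2.aemeasurable).add h3.aemeasurable))
  have hstep1 : ∀ n ∈ t, KeFun F (d n / 2) ≤
      ∫⁻ x : ℝ, (Ioo (d n / 4) (d n / 2)).indicator (fun _ => (1:ℝ≥0∞)) x * W x := by
    intro n hn
    have hdn : 4 < d n := hfar n hn
    have hc0 : ENNReal.ofReal (d n / 4) ≠ 0 := by
      simp only [ne_eq, ENNReal.ofReal_eq_zero, not_le]; linarith
    have hctop : ENNReal.ofReal (d n / 4) ≠ ⊤ := ENNReal.ofReal_ne_top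
    have ha : KeFun F (d n / 2) * ENNReal.ofReal (d n / 4) ≤
        ∫⁻ x in Ioo (d n / 4) (d n / 2), KeFun F x := by
      calc KeFun F (d n / 2) * ENNReal.ofReal (d n / 4)
          = ∫⁻ _ in Ioo (d n / 4) (d n / 2), KeFun F (d n / 2) := by
            rw [setLIntegral_const, Real.volume_Ioo]
            congr 1
            congr 1
            ring
        _ ≤ ∫⁻ x in Ioo (d n / 4) (d n / 2), KeFun F x := by
            refine setlint_mono_pt measurableSet_Ioo fun x hx => ?_
            exact Ke_anti F hFdec (by linarith [hx.1] : (0:ℝ) < x) hx.2.le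
    have hb : KeFun F (d n / 2) ≤
        (ENNReal.ofReal (d n / 4))⁻¹ * ∫⁻ x in Ioo (d n / 4) (d n / 2), KeFun F x := by
      rw [← ENNReal.div_eq_inv_mul]
      rw [ENNReal.le_div_iff_mul_le (Or.inl hc0) (Or.inl hctop)]
      exact ha
    refine hb.trans ?_
    rw [← lintegral_const_mul' _ _ (ENNReal.inv_ne_top.mpr hc0)]
    rw [← lintegral_indicator measurableSet_Ioo]
    refine lintegral_mono fun x => ?_
    by_cases hx : x ∈ Ioo (d n / 4) (d n / 2)
    · rw [Set.indicator_of_mem hx, Set.indicator_of_mem hx, one_mul]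
      have hx1 : 1 < x := by have := hx.1; linarith
      rw [hW, Set.indicator_of_mem (mem_Ioi.mpr hx1)]
      have hkey : (ENNReal.ofReal (d n / 4))⁻¹ ≤ 2 * (ENNReal.ofReal x)⁻¹ := by
        have h1 : ENNReal.ofReal x ≤ ENNReal.ofReal (d n / 2) := ENNReal.ofReal_le_ofReal hx.2.le
        have h2 : ENNReal.ofReal (d n / 2) = 2 * ENNReal.ofReal (d n / 4) := by
          rw [← ENNReal.ofReal_ofNat, ← ENNReal.ofReal_mul (by norm_num)]
          congr 1
          ring
        calc (ENNReal.ofReal (d n / 4))⁻¹ = 2 * (2 * ENNReal.ofReal (d n / 4))⁻¹ := by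
              rw [ENNReal.mul_inv (Or.inl (by norm_num)) (Or.inl (by norm_num))]
              rw [← mul_assoc, ENNReal.mul_inv_cancel (by norm_num) (by norm_num), one_mul]
          _ ≤ 2 * (ENNReal.ofReal x)⁻¹ := by
              rw [← h2]
              exact mul_le_mul_right (ENNReal.inv_le_inv.mpr h1) 2
      exact mul_le_mul_left hkey _
    · rw [Set.indicator_of_notMem hx, Set.indicator_of_notMem hx, zero_mul]
  have hstep2 : ∑ n ∈ t, KeFun F (d n / 2) ≤
      ∫⁻ x : ℝ, (∑ n ∈ t, (Ioo (d n / 4) (d n / 2)).indicator (fun _ => (1:ℝ≥0∞)) x) * W x := by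
    calc ∑ n ∈ t, KeFun F (d n / 2)
        ≤ ∑ n ∈ t, ∫⁻ x : ℝ, (Ioo (d n / 4) (d n / 2)).indicator (fun _ => (1:ℝ≥0∞)) x * W x :=
          Finset.sum_le_sum hstep1
      _ = ∫⁻ x : ℝ, ∑ n ∈ t, (Ioo (d n / 4) (d n / 2)).indicator (fun _ => (1:ℝ≥0∞)) x * W x :=
          (lintegral_finset_sum' t fun n _ =>
            ((measurable_const.indicator measurableSet_Ioo).aemeasurable.mul hWmeas)).symm
      _ = ∫⁻ x : ℝ, (∑ n ∈ t, (Ioo (d n / 4) (d n / 2)).indicator (fun _ => (1:ℝ≥0∞)) x) * W x := by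
          refine lintegral_congr fun x => ?_
          rw [Finset.sum_mul]
  have hstep3 : ∀ x : ℝ, 0 < x →
      (∑ n ∈ t, (Ioo (d n / 4) (d n / 2)).indicator (fun _ => (1:ℝ≥0∞)) x) ≤ 8 * DLam lam x := by
    intro x hx
    have hsum : (∑ n ∈ t, (Ioo (d n / 4) (d n / 2)).indicator (fun _ => (1:ℝ≥0∞)) x) =
        ((t.filter (fun n => x ∈ Ioo (d n / 4) (d n / 2))).card : ℝ≥0∞) := by
      rw [← Finset.sum_boole]
      refine Finset.sum_congr rfl fun n _ => ?_
      by_cases hx' : x ∈ Ioo (d n / 4) (d n / 2)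
      · rw [Set.indicator_of_mem hx', if_pos hx']
      · rw [Set.indicator_of_notMem hx', if_neg hx']
    rw [hsum]
    have hcard : ((t.filter (fun n => x ∈ Ioo (d n / 4) (d n / 2))).card : ℝ≥0∞) ≤
        DLam lam (8 * x) := by
      refine card_le_DLam lam hinj _ (lam m - 4 * x) (8 * x) fun n hn => ?_
      rw [Finset.mem_filter] at hn
      have hmem := hn.2
      have h1 : d n / 4 < x := hmem.1
      have h2 : d n < 4 * x := by linarith
      have h3 := abs_lt.mp (show |lam n - lam m| < 4 * x from h2)
      constructor
      · linarith [h3.1]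
      · linarith [h3.2]
    exact hcard.trans (DLam_smul8 lam x)
  have hstep4 : ∫⁻ x : ℝ, (∑ n ∈ t, (Ioo (d n / 4) (d n / 2)).indicator (fun _ => (1:ℝ≥0∞)) x) * W x
      ≤ 16 * ∫⁻ x in Set.Ioi (1:ℝ), ENNReal.ofReal (Gfun F x) * DLam lam x / ENNReal.ofReal x := by
    have hpt : ∀ x : ℝ,
        (∑ n ∈ t, (Ioo (d n / 4) (d n / 2)).indicator (fun _ => (1:ℝ≥0∞)) x) * W x ≤
        (Ioi (1:ℝ)).indicator
          (fun x => 16 * (ENNReal.ofReal (Gfun F x) * DLam lam x / ENNReal.ofReal x)) x := by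
      intro x
      by_cases hx : x ∈ Ioi (1:ℝ)
      · have hx1 : (1:ℝ) < x := hx
        rw [Set.indicator_of_mem hx, hW, Set.indicator_of_mem hx]
        calc (∑ n ∈ t, (Ioo (d n / 4) (d n / 2)).indicator (fun _ => (1:ℝ≥0∞)) x) *
              (2 * (ENNReal.ofReal x)⁻¹ * KeFun F x)
            ≤ (8 * DLam lam x) * (2 * (ENNReal.ofReal x)⁻¹ * ENNReal.ofReal (Gfun F x)) := by
              refine mul_le_mul' (hstep3 x (by linarith)) ?_
              exact mul_le_mul_right (Ke_le_G F hFpos hFL2 (by linarith)) _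
          _ = 16 * (ENNReal.ofReal (Gfun F x) * DLam lam x / ENNReal.ofReal x) := by
              rw [ENNReal.div_eq_inv_mul]
              ring
      · rw [Set.indicator_of_notMem hx, hW, Set.indicator_of_notMem hx, mul_zero]
    calc ∫⁻ x : ℝ, (∑ n ∈ t, (Ioo (d n / 4) (d n / 2)).indicator (fun _ => (1:ℝ≥0∞)) x) * W x
        ≤ ∫⁻ x : ℝ, (Ioi (1:ℝ)).indicator
            (fun x => 16 * (ENNReal.ofReal (Gfun F x) * DLam lam x / ENNReal.ofReal x)) x :=
          lintegral_mono hpt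
      _ = ∫⁻ x in Ioi (1:ℝ), 16 * (ENNReal.ofReal (Gfun F x) * DLam lam x / ENNReal.ofReal x) :=
          lintegral_indicator measurableSet_Ioi _
      _ = 16 * ∫⁻ x in Set.Ioi (1:ℝ), ENNReal.ofReal (Gfun F x) * DLam lam x / ENNReal.ofReal x :=
          lintegral_const_mul' _ _ (by norm_num)
  exact hstep2.trans hstep4

/-- Theorem 3.1(1): if `|φ(x)| ≤ F(|x|)` for `|x| ≥ X` and
`∫₁^∞ G(x) D_Λ(x) dx/x < ∞`, then `(τ_{λₙ}φ)` has an upper frame bound. -/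
theorem upper_frame_bound_of_density
    (F : ℝ → ℝ) (hFpos : ∀ x > (0:ℝ), 0 < F x)
    (hFdec : AntitoneOn F (Set.Ioi 0))
    (hFL2 : IntegrableOn (fun t => F t ^ 2) (Set.Ioi 0))
    (lam : ℕ → ℝ) (hinj : Function.Injective lam)
    (φ : ℝ → ℂ) (hφ : MeasureTheory.MemLp φ 2 (volume : Measure ℝ))
    (X : ℝ) (hdom : ∀ x : ℝ, X ≤ |x| → ‖φ x‖ ≤ F |x|)
    (hint : ∫⁻ x in Set.Ioi (1:ℝ),
        ENNReal.ofReal (Gfun F x) * DLam lam x / ENNReal.ofReal x < ⊤) :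
    ∃ B : ℝ, ∀ f : ℝ → ℂ, MeasureTheory.MemLp f 2 (volume : Measure ℝ) →
      ∑' n : ℕ, ‖∫ x : ℝ, f x * (starRingEnd ℂ) (φ (x - lam n))‖ ^ 2 ≤
        B * ∫ x : ℝ, ‖f x‖ ^ 2 := by
  classical
  have hφm : AEStronglyMeasurable φ volume := hφ.1
  set X' : ℝ := max X 1 with hX'
  have hX1 : (1:ℝ) ≤ X' := le_max_right X 1
  set s₀ : ℝ := 2 * X' + 2 with hs₀def
  have hs₀4 : (4:ℝ) ≤ s₀ := by rw [hs₀def]; linarith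
  set I : ℝ≥0∞ := ∫⁻ x in Set.Ioi (1:ℝ),
      ENNReal.ofReal (Gfun F x) * DLam lam x / ENNReal.ofReal x with hI
  have hItop : I ≠ ⊤ := hint.ne
  -- Me
  set Me : ℝ≥0∞ := ∫⁻ x : ℝ, (‖φ x‖₊ : ℝ≥0∞) ^ 2 with hMe
  have hpow2 : ∀ a : ℝ≥0∞, a ^ ((2:ℝ≥0∞).toReal) = a ^ (2:ℕ) := fun a => by
    rw [ENNReal.toReal_ofNat, show (2:ℝ) = ((2:ℕ):ℝ) by norm_num, ENNReal.rpow_natCast]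
  have hMetop : Me ≠ ⊤ := by
    have h := lintegral_rpow_enorm_lt_top_of_eLpNorm_lt_top (f := φ) (by norm_num) (by norm_num) hφ.2
    rw [hMe]
    have heq : ∫⁻ a : ℝ, (‖φ a‖₊ : ℝ≥0∞) ^ ((2:ℝ≥0∞).toReal) = ∫⁻ a : ℝ, (‖φ a‖₊ : ℝ≥0∞) ^ (2:ℕ) :=
      lintegral_congr fun a => hpow2 _
    rw [← heq]
    exact h.ne
  -- CC
  set c₁ : ℝ≥0∞ := ∫⁻ x in Icc (-X') X', (‖φ x‖₊ : ℝ≥0∞) with hc₁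
  have hc₁top : c₁ ≠ ⊤ := by
    have h1 : c₁ ≤ (∫⁻ x in Icc (-X') X', (‖φ x‖₊ : ℝ≥0∞) ^ 2) + volume (Icc (-X') X') := by
      calc c₁ ≤ ∫⁻ x in Icc (-X') X', ((‖φ x‖₊ : ℝ≥0∞) ^ 2 + 1) :=
            setlint_mono_pt measurableSet_Icc fun x _ => enn_le_sq_add_one _
        _ = (∫⁻ x in Icc (-X') X', (‖φ x‖₊ : ℝ≥0∞) ^ 2) + ∫⁻ _ in Icc (-X') X', (1:ℝ≥0∞) :=
            lintegral_add_left' ((hφm.enorm.pow_const 2).restrict) _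
        _ = (∫⁻ x in Icc (-X') X', (‖φ x‖₊ : ℝ≥0∞) ^ 2) + volume (Icc (-X') X') := by
            rw [setLIntegral_const, one_mul]
    refine ne_top_of_le_ne_top (ENNReal.add_ne_top.mpr ⟨?_, ?_⟩) h1
    · exact ne_top_of_le_ne_top hMetop (setLIntegral_le_lintegral _ _)
    · rw [Real.volume_Icc]; exact ENNReal.ofReal_ne_top
  set CC : ℝ≥0∞ := 4 + 2 * c₁ * (ENNReal.ofReal (F 1))⁻¹ with hCC
  have hCCtop : CC ≠ ⊤ := by
    refine ENNReal.add_ne_top.mpr ⟨by norm_num, ?_⟩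
    refine ENNReal.mul_ne_top (ENNReal.mul_ne_top (by norm_num) hc₁top) ?_
    rw [ENNReal.inv_ne_top]
    simp only [ne_eq, ENNReal.ofReal_eq_zero, not_le]
    exact hFpos 1 one_pos
  -- DLam finiteness
  have hDtop : DLam lam (2 * (s₀ + 1)) ≠ ⊤ := DLam_ne_top F hFpos hFL2 lam hint _
  -- the ENNReal row bound
  set Be : ℝ≥0∞ := DLam lam (2 * (s₀ + 1)) * (2 * Me) + CC * (16 * I) with hBe
  have hBetop : Be ≠ ⊤ := by
    refine ENNReal.add_ne_top.mpr ⟨ENNReal.mul_ne_top hDtop (ENNReal.mul_ne_top (by norm_num) hMetop),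
      ENNReal.mul_ne_top hCCtop (ENNReal.mul_ne_top (by norm_num) hItop)⟩
  have corr_abs : ∀ s : ℝ, CorrFun φ s = CorrFun φ |s| := by
    intro s
    rcases le_or_gt 0 s with h | h
    · rw [_root_.abs_of_nonneg h]
    · rw [_root_.abs_of_neg h, corr_symm]
  have hrowE : ∀ (t : Finset ℕ) (m : ℕ), ∑ n ∈ t, CorrFun φ (lam n - lam m) ≤ Be := by
    intro t m
    set p : ℕ → Prop := fun n => |lam n - lam m| ≤ s₀ + 1 with hp
    have hsplit := Finset.sum_filter_add_sum_filter_not t p (fun n => CorrFun φ (lam n - lam m))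
    rw [← hsplit]
    refine add_le_add ?_ ?_
    · -- near
      calc ∑ n ∈ t.filter p, CorrFun φ (lam n - lam m)
          ≤ (t.filter p).card • (2 * Me) :=
            Finset.sum_le_card_nsmul _ _ _ fun n _ => corr_le_two φ hφm _
        _ = ((t.filter p).card : ℝ≥0∞) * (2 * Me) := by rw [nsmul_eq_mul]
        _ ≤ DLam lam (2 * (s₀ + 1)) * (2 * Me) := by
            refine mul_le_mul_left ?_ _
            refine card_le_DLam lam hinj _ (lam m - (s₀ + 1)) (2 * (s₀ + 1)) fun n hn => ?_
            rw [Finset.mem_filter] at hn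
            have h := abs_le.mp hn.2
            constructor
            · linarith [h.1]
            · linarith [h.2]
    · -- far
      have hfar : ∀ n ∈ t.filter (fun n => ¬ p n), s₀ + 1 < |lam n - lam m| := by
        intro n hn
        rw [Finset.mem_filter] at hn
        exact lt_of_not_ge hn.2
      calc ∑ n ∈ t.filter (fun n => ¬ p n), CorrFun φ (lam n - lam m)
          ≤ ∑ n ∈ t.filter (fun n => ¬ p n), CC * KeFun F (|lam n - lam m| / 2) := by
            refine Finset.sum_le_sum fun n hn => ?_
            rw [corr_abs]
            exact corr_le_Ke F hFpos hFdec φ X hdom hφm _ (by linarith [hfar n hn])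
        _ = CC * ∑ n ∈ t.filter (fun n => ¬ p n), KeFun F (|lam n - lam m| / 2) := by
            rw [Finset.mul_sum]
        _ ≤ CC * (16 * I) := by
            refine mul_le_mul_right ?_ CC
            exact far_sum F hFpos hFdec hFL2 lam hinj m _ fun n hn => by linarith [hfar n hn]
  -- Lp setup
  have htrans : ∀ c : ℝ, MemLp (fun x => φ (x - c)) 2 (volume : Measure ℝ) := by
    intro c
    have hmp := measurePreserving_sub_right (volume : Measure ℝ) c
    have h1 : MemLp φ 2 (Measure.map (fun x : ℝ => x - c) volume) := by rwa [hmp.map_eq]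
    have h2 : AEStronglyMeasurable φ (Measure.map (fun x : ℝ => x - c) volume) := by
      rwa [hmp.map_eq]
    exact (memLp_map_measure_iff h2 hmp.measurable.aemeasurable).mp h1
  set g : ℕ → Lp ℂ 2 (volume : Measure ℝ) := fun n => (htrans (lam n)).toLp _ with hg
  have hinner : ∀ m n : ℕ, (inner ℂ (g m) (g n) : ℂ) =
      ∫ x : ℝ, (starRingEnd ℂ) (φ (x - lam m)) * φ (x - lam n) := by
    intro m n
    rw [L2.inner_def]
    refine integral_congr_ae ?_
    filter_upwards [(htrans (lam m)).coeFn_toLp, (htrans (lam n)).coeFn_toLp] with x h1 h2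
    rw [RCLike.inner_apply, h1, h2, mul_comm]
  set B : ℝ := Be.toReal with hB
  have hB0 : 0 ≤ B := ENNReal.toReal_nonneg
  have hrow : ∀ (t : Finset ℕ), ∀ m ∈ t, ∑ n ∈ t, ‖(inner ℂ (g m) (g n) : ℂ)‖ ≤ B := by
    intro t m _
    rw [← ENNReal.ofReal_le_iff_le_toReal hBetop,
      ENNReal.ofReal_sum_of_nonneg fun n _ => norm_nonneg _]
    refine le_trans (Finset.sum_le_sum fun n _ => ?_) (hrowE t m)
    rw [hinner]
    exact gram_le_corr φ (lam m) (lam n)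
  refine ⟨B, fun f hf => ?_⟩
  set u : Lp ℂ 2 (volume : Measure ℝ) := hf.toLp f with hu
  have hnormu : ‖u‖ ^ 2 = ∫ x : ℝ, ‖f x‖ ^ 2 := by
    have h1 : (‖u‖:ℝ) ^ 2 = RCLike.re (inner ℂ u u : ℂ) := (inner_self_eq_norm_sq u).symm
    have h2 : (inner ℂ u u : ℂ) = ∫ x : ℝ, (inner ℂ ((u : ℝ → ℂ) x) ((u : ℝ → ℂ) x) : ℂ) :=
      L2.inner_def u u
    have h3 := L2.integrable_inner (𝕜 := ℂ) u u
    have h4 : RCLike.re (inner ℂ u u : ℂ) =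
        ∫ x : ℝ, RCLike.re (inner ℂ ((u : ℝ → ℂ) x) ((u : ℝ → ℂ) x) : ℂ) := by
      rw [h2, integral_re h3]
    have h5 : ∀ x : ℝ, RCLike.re (inner ℂ ((u : ℝ → ℂ) x) ((u : ℝ → ℂ) x) : ℂ) =
        ‖(u : ℝ → ℂ) x‖ ^ 2 := fun x => inner_self_eq_norm_sq _
    rw [h1, h4]
    rw [integral_congr_ae (Filter.Eventually.of_forall h5)]
    refine integral_congr_ae ?_
    filter_upwards [hf.coeFn_toLp] with x hx
    rw [hx]
  have hterm : ∀ n : ℕ, ‖∫ x : ℝ, f x * (starRingEnd ℂ) (φ (x - lam n))‖ ^ 2 =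
      ‖(inner ℂ u (g n) : ℂ)‖ ^ 2 := by
    intro n
    have h1 : (inner ℂ u (g n) : ℂ) = ∫ x : ℝ, (starRingEnd ℂ) (f x) * φ (x - lam n) := by
      rw [L2.inner_def]
      refine integral_congr_ae ?_
      filter_upwards [hf.coeFn_toLp, (htrans (lam n)).coeFn_toLp] with x hx1 hx2
      rw [RCLike.inner_apply, hx1, hx2, mul_comm]
    have h2 : ∫ x : ℝ, f x * (starRingEnd ℂ) (φ (x - lam n)) =
        (starRingEnd ℂ) ((inner ℂ u (g n) : ℂ)) := by
      rw [h1, ← integral_conj]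
      refine integral_congr_ae (Filter.Eventually.of_forall fun x => ?_)
      simp only [map_mul, Complex.conj_conj]
    rw [h2, RCLike.norm_conj]
  have hbessel : ∀ k : ℕ, ∑ n ∈ Finset.range k, ‖∫ x : ℝ, f x * (starRingEnd ℂ) (φ (x - lam n))‖ ^ 2
      ≤ B * ∫ x : ℝ, ‖f x‖ ^ 2 := by
    intro k
    have := bessel_finset g B hB0 (Finset.range k) (hrow (Finset.range k)) u
    rw [hnormu] at this
    refine le_trans (le_of_eq ?_) this
    exact Finset.sum_congr rfl fun n _ => hterm n
  have hsummable : Summable (fun n : ℕ => ‖∫ x : ℝ, f x * (starRingEnd ℂ) (φ (x - lam n))‖ ^ 2) :=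
    summable_of_sum_range_le (fun n => sq_nonneg _) hbessel
  exact Summable.tsum_le_of_sum_range_le hsummable hbessel
end

section
/- Suppose F : (0,∞)→(0,∞) is monotone decreasing, ε > 0, x^{1-ε}F(x) is increasing for x ≥ 1, and x^{1+ε}F(x)² is decreasing for x ≥ 1. Then with G(x) = F(x)∫₀ˣF(t)dt + ∫ₓ^∞F(t)²dt, there is a constant C with C^{-1} x F(x)² ≤ G(x) ≤ C x F(x)² for all x ≥ 1. -/
open MeasureTheory Complex
open scoped ENNReal Real

/-- Lemma 3.3: under the regularity conditions on `F`, `G(x) ≍ x F(x)²` for `x ≥ 1`. -/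
theorem Gfun_comparable
    (F : ℝ → ℝ) (hFpos : ∀ x > (0:ℝ), 0 < F x)
    (hFdec : AntitoneOn F (Set.Ioi 0))
    (hFL2 : IntegrableOn (fun t => F t ^ 2) (Set.Ioi 0))
    (ε : ℝ) (hε : 0 < ε)
    (hinc : MonotoneOn (fun x : ℝ => x ^ (1 - ε) * F x) (Set.Ici 1))
    (hdec : AntitoneOn (fun x : ℝ => x ^ (1 + ε) * F x ^ 2) (Set.Ici 1)) :
    ∃ C : ℝ, 0 < C ∧ ∀ x ≥ (1:ℝ),
      C⁻¹ * (x * F x ^ 2) ≤ Gfun F x ∧ Gfun F x ≤ C * (x * F x ^ 2) := by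
  have hF1 : 0 < F 1 := hFpos 1 one_pos
  -- measurability of F on Ioi 0
  have hmeas : AEStronglyMeasurable F (volume.restrict (Set.Ioi (0:ℝ))) := by
    have h1 : AEStronglyMeasurable (fun t => Real.sqrt (F t ^ 2))
        (volume.restrict (Set.Ioi (0:ℝ))) :=
      Real.continuous_sqrt.comp_aestronglyMeasurable hFL2.aestronglyMeasurable
    refine h1.congr ?_
    filter_upwards [ae_restrict_mem measurableSet_Ioi] with t ht
    rw [Real.sqrt_sq (hFpos t ht).le]
  -- integrability of F on Ioo 0 x
  have hFint : ∀ x : ℝ, IntegrableOn F (Set.Ioo 0 x) := by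
    intro x
    have hb : IntegrableOn (fun t => 1 + F t ^ 2) (Set.Ioo 0 x) :=
      (integrableOn_const measure_Ioo_lt_top.ne).add
        (hFL2.mono_set Set.Ioo_subset_Ioi_self)
    refine hb.mono' (hmeas.mono_set Set.Ioo_subset_Ioi_self) ?_
    filter_upwards [ae_restrict_mem measurableSet_Ioo] with t ht
    have := hFpos t ht.1
    rw [Real.norm_eq_abs, abs_of_pos this]
    nlinarith [sq_nonneg (F t - 1)]
  set K : ℝ := ∫ t in Set.Ioo (0:ℝ) 1, F t with hK
  have hKnn : 0 ≤ K := by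
    refine setIntegral_nonneg measurableSet_Ioo fun t ht => (hFpos t ht.1).le
  refine ⟨1 + 2 / ε + K / F 1, by positivity, fun x hx => ?_⟩
  have hx0 : (0:ℝ) < x := lt_of_lt_of_le one_pos hx
  have hFx : 0 < F x := hFpos x hx0
  have hC1 : (1:ℝ) ≤ 1 + 2 / ε + K / F 1 := by
    have h1 : 0 ≤ 2 / ε := by positivity
    have h2 : 0 ≤ K / F 1 := by positivity
    linarith
  -- x * F x ≥ F 1 (used for the K-term)
  have hxF : F 1 ≤ x * F x := by
    have h1 : (1:ℝ) ^ (1 - ε) * F 1 ≤ x ^ (1 - ε) * F x :=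
      hinc (Set.mem_Ici.2 le_rfl) (Set.mem_Ici.2 hx) hx
    rw [Real.one_rpow, one_mul] at h1
    have h2 : x ^ (1 - ε) * F x ≤ x * F x := by
      have : x ^ (1 - ε) ≤ x ^ (1:ℝ) := by
        apply Real.rpow_le_rpow_of_exponent_le hx
        linarith
      rw [Real.rpow_one] at this
      nlinarith
    linarith
  -- Lower bound
  have hlow : x * F x ^ 2 ≤ Gfun F x := by
    have hconst : ∫ t in Set.Ioo (0:ℝ) x, F x = x * F x := by
      simp [Real.volume_Ioo, ENNReal.toReal_ofReal hx0.le, hx0.le]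
    have hmono : ∫ t in Set.Ioo (0:ℝ) x, F x ≤ ∫ t in Set.Ioo (0:ℝ) x, F t := by
      refine setIntegral_mono_on (integrableOn_const measure_Ioo_lt_top.ne)
        (hFint x) measurableSet_Ioo fun t ht => ?_
      exact hFdec ht.1 hx0 ht.2.le
    have htail : 0 ≤ ∫ t in Set.Ioi x, F t ^ 2 :=
      setIntegral_nonneg measurableSet_Ioi fun t _ => sq_nonneg _
    have : x * F x ^ 2 ≤ F x * ∫ t in Set.Ioo (0:ℝ) x, F t := by
      calc x * F x ^ 2 = F x * (x * F x) := by ring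
      _ ≤ F x * ∫ t in Set.Ioo (0:ℝ) x, F t := by
          rw [← hconst]; exact mul_le_mul_of_nonneg_left hmono hFx.le
    unfold Gfun; linarith
  constructor
  · have h1 : (1 + 2 / ε + K / F 1)⁻¹ ≤ 1 := inv_le_one_of_one_le₀ hC1
    have h2 : (1 + 2 / ε + K / F 1)⁻¹ * (x * F x ^ 2) ≤ 1 * (x * F x ^ 2) :=
      mul_le_mul_of_nonneg_right h1 (by positivity)
    rw [one_mul] at h2
    linarith
  -- Upper bound
  · -- split ∫₀ˣ F = ∫₀¹ F + ∫₁ˣ F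
    have hsplit : ∫ t in Set.Ioo (0:ℝ) x, F t
        = K + ∫ t in Set.Ico (1:ℝ) x, F t := by
      have hdisj : Disjoint (Set.Ioo (0:ℝ) 1) (Set.Ico (1:ℝ) x) := by
        rw [Set.disjoint_left]; rintro t ⟨_, h1⟩ ⟨h2, _⟩; linarith
      rw [hK, ← setIntegral_union hdisj measurableSet_Ico
        (hFint 1) ((hFint x).mono_set (fun t ht => ⟨lt_of_lt_of_le one_pos ht.1, ht.2⟩))]
      rw [Set.Ioo_union_Ico_eq_Ioo one_pos hx]
    -- bound the middle integral
    have hmid : ∫ t in Set.Ico (1:ℝ) x, F t ≤ x * F x / ε := by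
      have hb : ∀ t ∈ Set.Ico (1:ℝ) x, F t ≤ x ^ (1 - ε) * F x * t ^ (ε - 1) := by
        intro t ht
        have ht0 : (0:ℝ) < t := lt_of_lt_of_le one_pos ht.1
        have h1 : t ^ (1 - ε) * F t ≤ x ^ (1 - ε) * F x :=
          hinc (Set.mem_Ici.2 ht.1) (Set.mem_Ici.2 hx) ht.2.le
        have hpow : t ^ (1 - ε) * t ^ (ε - 1) = 1 := by
          rw [← Real.rpow_add ht0]; norm_num
        have htp : (0:ℝ) < t ^ (ε - 1) := Real.rpow_pos_of_pos ht0 _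
        calc F t = t ^ (1 - ε) * F t * t ^ (ε - 1) := by
              rw [mul_right_comm, hpow, one_mul]
          _ ≤ x ^ (1 - ε) * F x * t ^ (ε - 1) :=
              mul_le_mul_of_nonneg_right h1 htp.le
      have hintpow : IntegrableOn (fun t : ℝ => x ^ (1 - ε) * F x * t ^ (ε - 1))
          (Set.Ico (1:ℝ) x) := by
        apply Integrable.const_mul
        exact (intervalIntegrable_iff_integrableOn_Ico_of_le hx).mp
          (intervalIntegral.intervalIntegrable_rpow' (by linarith))
      have h2 : ∫ t in Set.Ico (1:ℝ) x, F t
          ≤ ∫ t in Set.Ico (1:ℝ) x, x ^ (1 - ε) * F x * t ^ (ε - 1) := by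
        refine setIntegral_mono_on ((hFint x).mono_set
          (fun t ht => ⟨lt_of_lt_of_le one_pos ht.1, ht.2⟩)) hintpow measurableSet_Ico hb
      have h3 : ∫ t in Set.Ico (1:ℝ) x, x ^ (1 - ε) * F x * t ^ (ε - 1)
          = x ^ (1 - ε) * F x * ((x ^ ε - 1) / ε) := by
        rw [integral_const_mul, MeasureTheory.integral_Ico_eq_integral_Ioo,
          ← MeasureTheory.integral_Ioc_eq_integral_Ioo,
          ← intervalIntegral.integral_of_le hx, integral_rpow (Or.inl (by linarith))]
        norm_num
      have h4 : x ^ (1 - ε) * F x * ((x ^ ε - 1) / ε) ≤ x * F x / ε := by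
        have hxe : x ^ (1 - ε) * x ^ ε = x := by
          rw [← Real.rpow_add hx0]; norm_num
        have hp1 : (0:ℝ) < x ^ (1 - ε) := Real.rpow_pos_of_pos hx0 _
        have h5 : x ^ (1 - ε) * F x * (x ^ ε - 1) ≤ x * F x := by nlinarith
        rw [show x ^ (1 - ε) * F x * ((x ^ ε - 1) / ε)
            = x ^ (1 - ε) * F x * (x ^ ε - 1) / ε from by ring,
          div_le_div_iff₀ hε hε]
        nlinarith
      linarith [h2, h3 ▸ h2]
    -- bound the tail integral
    have htail : ∫ t in Set.Ioi x, F t ^ 2 ≤ x * F x ^ 2 / ε := by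
      have hb : ∀ t ∈ Set.Ioi x, F t ^ 2 ≤ x ^ (1 + ε) * F x ^ 2 * t ^ (-(1 + ε)) := by
        intro t ht
        have ht1 : (1:ℝ) ≤ t := le_trans hx (le_of_lt ht)
        have ht0 : (0:ℝ) < t := lt_of_lt_of_le one_pos ht1
        have h1 : t ^ (1 + ε) * F t ^ 2 ≤ x ^ (1 + ε) * F x ^ 2 :=
          hdec (Set.mem_Ici.2 hx) (Set.mem_Ici.2 ht1) (le_of_lt ht)
        have hpow : t ^ (1 + ε) * t ^ (-(1 + ε)) = 1 := by
          rw [← Real.rpow_add ht0, show 1 + ε + -(1 + ε) = (0:ℝ) from by ring,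
            Real.rpow_zero]
        have htp : (0:ℝ) < t ^ (-(1 + ε)) := Real.rpow_pos_of_pos ht0 _
        calc F t ^ 2 = t ^ (1 + ε) * F t ^ 2 * t ^ (-(1 + ε)) := by
              rw [mul_right_comm, hpow, one_mul]
          _ ≤ x ^ (1 + ε) * F x ^ 2 * t ^ (-(1 + ε)) :=
              mul_le_mul_of_nonneg_right h1 htp.le
      have hintpow : IntegrableOn (fun t : ℝ => x ^ (1 + ε) * F x ^ 2 * t ^ (-(1 + ε)))
          (Set.Ioi x) :=
        (integrableOn_Ioi_rpow_of_lt (by linarith) hx0).const_mul _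
      have h2 : ∫ t in Set.Ioi x, F t ^ 2
          ≤ ∫ t in Set.Ioi x, x ^ (1 + ε) * F x ^ 2 * t ^ (-(1 + ε)) :=
        setIntegral_mono_on (hFL2.mono_set (Set.Ioi_subset_Ioi hx0.le))
          hintpow measurableSet_Ioi hb
      have h3 : ∫ t in Set.Ioi x, x ^ (1 + ε) * F x ^ 2 * t ^ (-(1 + ε))
          = x ^ (1 + ε) * F x ^ 2 * (x ^ (-ε) / ε) := by
        rw [integral_const_mul, integral_Ioi_rpow_of_lt (by linarith) hx0]
        congr 1
        rw [show -(1 + ε) + 1 = -ε by ring]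
        field_simp
      have h4 : x ^ (1 + ε) * x ^ (-ε) = x := by
        rw [← Real.rpow_add hx0]; norm_num
      have h5 : x ^ (1 + ε) * F x ^ 2 * (x ^ (-ε) / ε)
          = (x ^ (1 + ε) * x ^ (-ε)) * F x ^ 2 / ε := by ring
      calc ∫ t in Set.Ioi x, F t ^ 2
          ≤ x ^ (1 + ε) * F x ^ 2 * (x ^ (-ε) / ε) := h3 ▸ h2
        _ = x * F x ^ 2 / ε := by rw [h5, h4]
    -- the K term
    have hKterm : F x * K ≤ K / F 1 * (x * F x ^ 2) := by
      have : F x * K * F 1 ≤ K * (x * F x ^ 2) := by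
        nlinarith [mul_le_mul_of_nonneg_left hxF (mul_nonneg hFx.le hKnn)]
      rw [div_mul_eq_mul_div, le_div_iff₀ hF1]
      linarith
    have hmid' : F x * (x * F x / ε) = x * F x ^ 2 / ε := by ring
    unfold Gfun
    rw [hsplit]
    have : F x * (K + ∫ t in Set.Ico (1:ℝ) x, F t) ≤ F x * K + x * F x ^ 2 / ε := by
      rw [mul_add]
      have := mul_le_mul_of_nonneg_left hmid hFx.le
      rw [hmid'] at this
      linarith
    have hfin : F x * K + x * F x ^ 2 / ε + x * F x ^ 2 / ε
        ≤ (1 + 2 / ε + K / F 1) * (x * F x ^ 2) := by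
      have hxFx : 0 < x * F x ^ 2 := by positivity
      have e1 : x * F x ^ 2 / ε = (1 / ε) * (x * F x ^ 2) := by ring
      have expand : (1 + 2 / ε + K / F 1) * (x * F x ^ 2)
          = x * F x ^ 2 + 2 * ((1 / ε) * (x * F x ^ 2)) + K / F 1 * (x * F x ^ 2) := by
        ring
      rw [expand]
      linarith [hKterm, hxFx, e1]
    linarith
end
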